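/- arXiv:2107.09340 — 8 statements merged into one kernel-verified Lean document; each statement's English description precedes it below -/
import Mathlib

section
/- Let Ω ⊂ ℝ^d be measurable of finite positive measure, s ∈ (1,∞), and let r be the conjugate exponent (1/s + 1/r = 1). If ū ∈ L^s(Ω) satisfies |ū|^{-1}·χ_{{ū ≠ 0}} ∈ L^r(Ω), then ū is an s-SD function. -/
open MeasureTheory Real Filter Topology Set
open scoped ENNReal

/-- The `L^s`-norm `(∫ |u|^s dμ)^(1/s)` as a real number. -/
noncomputable def Lnorm {X : Type*} [MeasurableSpace X] (μ : Measure X) (s : ℝ)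
    (u : X → ℝ) : ℝ :=
  (∫ x, |u x| ^ s ∂μ) ^ (1 / s)

/-- `ubar` is an order-`s` slowly decreasing (s-SD) function: for every sequence of
measurable subsets `Ωk k ⊆ {ubar ≠ 0}` with positive measures tending to `0`,
the quotients `μ(Ωk k) / ‖ubar‖_{s,Ωk k}` tend to `0`. -/
def IsSD {X : Type*} [MeasurableSpace X] (μ : Measure X) (s : ℝ) (ubar : X → ℝ) : Prop :=
  ∀ Ωk : ℕ → Set X, (∀ k, MeasurableSet (Ωk k)) →
    (∀ k, Ωk k ⊆ {x | ubar x ≠ 0}) → (∀ k, 0 < (μ (Ωk k)).toReal) →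
    Tendsto (fun k => (μ (Ωk k)).toReal) atTop (𝓝 0) →
    Tendsto (fun k => (μ (Ωk k)).toReal / Lnorm (μ.restrict (Ωk k)) s ubar) atTop (𝓝 0)

/-- `η` belongs to the Fréchet subdifferential of `q` at `ubar` (with respect to the
`L^s(μ)`-norm): the liminf of the difference quotients is nonnegative, stated in
ε-δ form. -/
def InFSub {X : Type*} [MeasurableSpace X] (μ : Measure X) (s : ℝ)
    (q : (X → ℝ) → ℝ) (ubar η : X → ℝ) : Prop :=
  ∀ ε > 0, ∃ δ > 0, ∀ h : X → ℝ, MemLp h (ENNReal.ofReal s) μ →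
    0 < Lnorm μ s h → Lnorm μ s h ≤ δ →
    q (fun x => ubar x + h x) - q ubar - ∫ x, η x * h x ∂μ ≥ -ε * Lnorm μ s h

/-- If `|ubar|⁻¹ · χ_{ubar ≠ 0} ∈ L^r(Ω)` for the conjugate exponent `r`, then `ubar` is s-SD. -/
theorem isSD_of_inv_memLr (d : ℕ) (Ω : Set (Fin d → ℝ)) (hΩ : MeasurableSet Ω)
    (h0 : 0 < volume Ω) (hfin : volume Ω < ⊤) (s r : ℝ) (hs : 1 < s)
    (hr : 1 / s + 1 / r = 1)
    (ubar : (Fin d → ℝ) → ℝ) (hubar : MemLp ubar (ENNReal.ofReal s) (volume.restrict Ω))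
    (hinv : MemLp (fun x => if ubar x ≠ 0 then |ubar x|⁻¹ else 0) (ENNReal.ofReal r)
      (volume.restrict Ω)) :
    IsSD (volume.restrict Ω) s ubar := by

  intro Ωk hΩk hsub hpos htend
  set μ := volume.restrict Ω with hμ
  set inv : (Fin d → ℝ) → ℝ := fun x => if ubar x ≠ 0 then |ubar x|⁻¹ else 0 with hinvdef
  have hconj : s.HolderConjugate r := Real.holderConjugate_iff.mpr ⟨hs, by simpa [one_div] using hr⟩
  have hrpos : 0 < r := hconj.symm.pos
  have hinv_nonneg : ∀ x, 0 ≤ inv x := by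
    intro x; simp only [hinvdef]; split <;> positivity
  -- finiteness of the measure of each set
  have hne_top : ∀ k, μ (Ωk k) ≠ ⊤ := by
    intro k
    refine ne_of_lt (lt_of_le_of_lt (measure_mono (subset_univ _)) ?_)
    rw [hμ, Measure.restrict_apply_univ]; exact hfin
  -- Hölder's inequality on each set
  have key : ∀ k, (μ (Ωk k)).toReal ≤
      Lnorm (μ.restrict (Ωk k)) s ubar * (∫ x in Ωk k, inv x ^ r ∂μ) ^ (1 / r) := by
    intro k
    have habs : MemLp (fun x => |ubar x|) (ENNReal.ofReal s) (μ.restrict (Ωk k)) := by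
      have := (hubar.restrict (Ωk k)).norm
      simpa [Real.norm_eq_abs] using this
    have hinvR : MemLp inv (ENNReal.ofReal r) (μ.restrict (Ωk k)) := hinv.restrict _
    have hH := integral_mul_le_Lp_mul_Lq_of_nonneg hconj
      (Eventually.of_forall fun x => abs_nonneg (ubar x))
      (Eventually.of_forall hinv_nonneg) habs hinvR
    have heq : ∫ x, |ubar x| * inv x ∂(μ.restrict (Ωk k)) = (μ (Ωk k)).toReal := by
      have : ∀ x ∈ Ωk k, |ubar x| * inv x = 1 := by
        intro x hx
        have hx0 : ubar x ≠ 0 := hsub k hx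
        simp [hinvdef, hx0, mul_inv_cancel₀ (abs_ne_zero.mpr hx0)]
      calc ∫ x, |ubar x| * inv x ∂(μ.restrict (Ωk k))
          = ∫ x in Ωk k, (1 : ℝ) ∂μ := setIntegral_congr_fun (hΩk k) this
        _ = (μ (Ωk k)).toReal := by simp [Measure.real]
    rw [heq] at hH
    have := (μ.restrict (Ωk k))
    calc (μ (Ωk k)).toReal
        ≤ (∫ x, |ubar x| ^ s ∂(μ.restrict (Ωk k))) ^ (1 / s)
            * (∫ x, inv x ^ r ∂(μ.restrict (Ωk k))) ^ (1 / r) := hH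
      _ = Lnorm (μ.restrict (Ωk k)) s ubar * (∫ x in Ωk k, inv x ^ r ∂μ) ^ (1 / r) := by
          rw [Lnorm]
  -- the bounding sequence tends to zero
  have hint : Integrable (fun x => inv x ^ r) μ := by
    have := hinv.integrable_norm_rpow (by simp [hconj.symm.pos, ENNReal.ofReal_eq_zero, not_le])
      ENNReal.ofReal_ne_top
    rw [ENNReal.toReal_ofReal hrpos.le] at this
    refine this.congr (Eventually.of_forall fun x => ?_)
    simp only [Real.norm_eq_abs, abs_of_nonneg (hinv_nonneg x)]
  have hμtend : Tendsto (μ ∘ Ωk) atTop (𝓝 0) := by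
    have := (ENNReal.tendsto_toReal_iff hne_top ENNReal.zero_ne_top).mp (by simpa using htend)
    simpa [Function.comp_def] using this
  have hB0 : Tendsto (fun k => ∫ x in Ωk k, inv x ^ r ∂μ) atTop (𝓝 0) :=
    hint.tendsto_setIntegral_nhds_zero hμtend
  have hBtend : Tendsto (fun k => (∫ x in Ωk k, inv x ^ r ∂μ) ^ (1 / r)) atTop (𝓝 0) := by
    have hc : ContinuousAt (fun y : ℝ => y ^ (1 / r)) 0 :=
      Real.continuousAt_rpow_const 0 (1 / r) (Or.inr (by positivity))
    have := hc.tendsto.comp hB0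
    simpa [Function.comp_def, Real.zero_rpow (by positivity : r⁻¹ ≠ 0),
      Real.zero_rpow (by positivity : (1:ℝ)/r ≠ 0)] using this
  -- squeeze
  refine squeeze_zero (fun k => ?_) (fun k => ?_) hBtend
  · exact div_nonneg ENNReal.toReal_nonneg (by
      rw [Lnorm]; positivity)
  · have hLpos : 0 < Lnorm (μ.restrict (Ωk k)) s ubar := by
      by_contra hle
      push_neg at hle
      have hL0 : Lnorm (μ.restrict (Ωk k)) s ubar = 0 :=
        le_antisymm hle (by rw [Lnorm]; positivity)
      have := key k
      rw [hL0, zero_mul] at this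
      exact absurd this (not_le.mpr (hpos k))
    rw [div_le_iff₀ hLpos]
    calc (μ (Ωk k)).toReal
        ≤ Lnorm (μ.restrict (Ωk k)) s ubar * (∫ x in Ωk k, inv x ^ r ∂μ) ^ (1 / r) := key k
      _ = (∫ x in Ωk k, inv x ^ r ∂μ) ^ (1 / r) * Lnorm (μ.restrict (Ωk k)) s ubar := mul_comm _ _
end

section
/- On Ω = (0,1) with s ∈ (1,∞) and α > 0, the function ū(x) = x^α belongs to L^s(Ω), and ū is an s-SD function if and only if α + 1/s < 1 (equivalently, |ū|^{-1} ∈ L^r(Ω) where r is the conjugate exponent of s). -/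
open MeasureTheory Real Filter Topology Set
open scoped ENNReal

lemma myInteg (p t : ℝ) (hp : 0 < p) (ht : 0 < t) :
    ∫ x in Ioo (0:ℝ) t, x ^ p = t ^ (p + 1) / (p + 1) := by
  rw [← integral_Ioc_eq_integral_Ioo, ← intervalIntegral.integral_of_le ht.le,
    integral_rpow (Or.inl (by linarith))]
  rw [Real.zero_rpow (by positivity)]
  ring

lemma myIntegrable (p : ℝ) (hp : 0 < p) : IntegrableOn (fun x : ℝ => x ^ p) (Ioo 0 1) volume := by
  have h := (intervalIntegral.intervalIntegrable_rpow (μ := volume) (a := 0) (b := 1) (r := p) (Or.inl hp.le))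
  rw [intervalIntegrable_iff_integrableOn_Ioc_of_le zero_le_one] at h
  exact h.mono_set Ioo_subset_Ioc_self

lemma bathtub (p m : ℝ) (hp : 0 < p) (hm : 0 < m) (hm1 : m ≤ 1)
    (A : Set ℝ) (hA : MeasurableSet A) (hAsub : A ⊆ Ioo 0 1)
    (hAm : volume A = ENNReal.ofReal m) :
    m ^ (p + 1) / (p + 1) ≤ ∫ x in A, x ^ p := by
  set B : Set ℝ := Ioo 0 m with hB
  have hBmeas : MeasurableSet B := measurableSet_Ioo
  have hBsub : B ⊆ Ioo 0 1 := Ioo_subset_Ioo le_rfl hm1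
  have hBm : volume B = ENNReal.ofReal m := by simp [hB, Real.volume_Ioo]
  have hint : IntegrableOn (fun x : ℝ => x ^ p) (Ioo 0 1) volume := myIntegrable p hp
  have hintA : IntegrableOn (fun x : ℝ => x ^ p) A volume := hint.mono_set hAsub
  have hintB : IntegrableOn (fun x : ℝ => x ^ p) B volume := hint.mono_set hBsub
  -- measures of the symmetric differences agree
  have hfin : volume (A ∩ B) ≠ ⊤ := by
    refine ne_top_of_le_ne_top ?_ (measure_mono inter_subset_left)
    rw [hAm]; exact ENNReal.ofReal_ne_top
  have hdiff : volume (A \ B) = volume (B \ A) := by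
    have h1 := measure_inter_add_diff (μ := volume) A hBmeas
    have h2 := measure_inter_add_diff (μ := volume) B hA
    rw [inter_comm] at h2
    rw [hAm] at h1; rw [hBm] at h2
    have := h1.trans h2.symm
    exact (ENNReal.add_right_inj hfin).mp this
  have hdifffin : volume (A \ B) ≠ ⊤ := by
    refine ne_top_of_le_ne_top ?_ (measure_mono diff_subset)
    rw [hAm]; exact ENNReal.ofReal_ne_top
  -- compare integrals over the differences
  have hAB : m ^ p * (volume (A \ B)).toReal ≤ ∫ x in A \ B, x ^ p := by
    refine setIntegral_ge_of_const_le_real (hA.diff hBmeas) hdifffin ?_ (hintA.mono_set diff_subset)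
    intro x hx
    have hx1 : x ∈ Ioo (0:ℝ) 1 := hAsub hx.1
    have hxm : m ≤ x := by
      by_contra hlt
      exact hx.2 ⟨hx1.1, lt_of_not_ge hlt⟩
    exact Real.rpow_le_rpow hm.le hxm hp.le
  have hBA : ∫ x in B \ A, x ^ p ≤ m ^ p * (volume (B \ A)).toReal := by
    have := setIntegral_mono_on (μ := volume) (s := B \ A)
      (f := fun x : ℝ => x ^ p) (g := fun _ => m ^ p)
      (hintB.mono_set diff_subset)
      (integrableOn_const (by rw [← hdiff]; exact hdifffin) enorm_ne_top)
      (hBmeas.diff hA) ?_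
    · simpa [mul_comm, Measure.real] using this
    · intro x hx
      exact Real.rpow_le_rpow (le_of_lt hx.1.1) hx.1.2.le hp.le
  -- put it together
  have hsplitA : ∫ x in A, x ^ p = (∫ x in A ∩ B, x ^ p) + ∫ x in A \ B, x ^ p := by
    rw [← setIntegral_union (s := A ∩ B) (t := A \ B)
      (disjoint_sdiff_self_right.mono_left inter_subset_right) (hA.diff hBmeas)
      (hintA.mono_set inter_subset_left) (hintA.mono_set diff_subset),
      inter_union_diff]
  have hsplitB : ∫ x in B, x ^ p = (∫ x in B ∩ A, x ^ p) + ∫ x in B \ A, x ^ p := by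
    rw [← setIntegral_union (s := B ∩ A) (t := B \ A)
      (disjoint_sdiff_self_right.mono_left inter_subset_right) (hBmeas.diff hA)
      (hintB.mono_set inter_subset_left) (hintB.mono_set diff_subset),
      inter_union_diff]
  have hBval : ∫ x in B, x ^ p = m ^ (p + 1) / (p + 1) := myInteg p m hp hm
  rw [← hBval, hsplitA, hsplitB, inter_comm B A]
  have : m ^ p * (volume (B \ A)).toReal ≤ m ^ p * (volume (A \ B)).toReal := by
    rw [hdiff]
  linarith [hAB, hBA]

lemma Lnorm_nonneg {X : Type*} [MeasurableSpace X] (μ : Measure X) (s : ℝ) (u : X → ℝ) :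
    0 ≤ (∫ x, |u x| ^ s ∂μ) ^ (1 / s) :=
  Real.rpow_nonneg (integral_nonneg fun x => Real.rpow_nonneg (abs_nonneg _) s) _

lemma myLnormEq (s α : ℝ) (hα : 0 < α) (Ω : Set ℝ) (hΩ : MeasurableSet Ω) :
    (∫ x, |x ^ α| ^ s ∂((volume.restrict (Ioo (0:ℝ) 1)).restrict Ω))
      = ∫ x in Ω ∩ Ioo (0:ℝ) 1, x ^ (α * s) := by
  rw [Measure.restrict_restrict hΩ]
  refine setIntegral_congr_fun (hΩ.inter measurableSet_Ioo) ?_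
  intro x hx
  have hx0 : 0 < x := hx.2.1
  simp only
  rw [abs_of_nonneg (Real.rpow_nonneg hx0.le α), ← Real.rpow_mul hx0.le]

lemma quotAlg (t P s : ℝ) (ht : 0 < t) (hP : 0 < P) (hs : 0 < s) :
    t / ((t ^ P / P) ^ (1/s)) = P ^ (1/s) * t ^ (1 - P/s) := by
  rw [Real.div_rpow (Real.rpow_nonneg ht.le P) hP.le, ← Real.rpow_mul ht.le, mul_one_div,
    Real.rpow_sub ht, Real.rpow_one, div_div_eq_mul_div, mul_comm, mul_div_assoc]

theorem fwd (s α : ℝ) (hs : 1 < s) (hα : 0 < α)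
    (hSD : ∀ Ωk : ℕ → Set ℝ, (∀ k, MeasurableSet (Ωk k)) →
      (∀ k, Ωk k ⊆ {x : ℝ | x ^ α ≠ 0}) →
      (∀ k, 0 < ((volume.restrict (Ioo (0:ℝ) 1)) (Ωk k)).toReal) →
      Tendsto (fun k => ((volume.restrict (Ioo (0:ℝ) 1)) (Ωk k)).toReal) atTop (𝓝 0) →
      Tendsto (fun k => ((volume.restrict (Ioo (0:ℝ) 1)) (Ωk k)).toReal /
        Lnorm ((volume.restrict (Ioo (0:ℝ) 1)).restrict (Ωk k)) s (fun x : ℝ => x ^ α))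
        atTop (𝓝 0)) :
    α + 1 / s < 1 := by
  have hs0 : (0:ℝ) < s := lt_trans one_pos hs
  by_contra hge
  push_neg at hge  -- hge : 1 ≤ α + 1/s
  set t : ℕ → ℝ := fun k => 1 / (k + 1) with htdef
  have ht0 : ∀ k, 0 < t k := fun k => by positivity
  have ht1 : ∀ k, t k ≤ 1 := fun k => by
    rw [htdef]
    rw [div_le_one (by positivity)]
    simp
  set Ωk : ℕ → Set ℝ := fun k => Ioo 0 (t k) with hΩdef
  have hmeas : ∀ k, MeasurableSet (Ωk k) := fun k => measurableSet_Ioo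
  have hsub1 : ∀ k, Ωk k ⊆ Ioo (0:ℝ) 1 := fun k => Ioo_subset_Ioo le_rfl (ht1 k)
  have hμ : ∀ k, (volume.restrict (Ioo (0:ℝ) 1)) (Ωk k) = ENNReal.ofReal (t k) := by
    intro k
    rw [Measure.restrict_apply (hmeas k), inter_eq_left.mpr (hsub1 k), Real.volume_Ioo, sub_zero]
  have hμr : ∀ k, ((volume.restrict (Ioo (0:ℝ) 1)) (Ωk k)).toReal = t k := by
    intro k; rw [hμ k, ENNReal.toReal_ofReal (ht0 k).le]
  set P : ℝ := α * s + 1 with hPdef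
  have hP : 0 < P := by positivity
  have htend := hSD Ωk hmeas
    (fun k x hx => ne_of_gt (Real.rpow_pos_of_pos hx.1 α))
    (fun k => by rw [hμr k]; exact ht0 k)
    (by simp only [hμr, htdef]
        exact tendsto_one_div_add_atTop_nhds_zero_nat)
  -- compute the quotient
  have hkey : ∀ k, P ^ (1/s) ≤ ((volume.restrict (Ioo (0:ℝ) 1)) (Ωk k)).toReal /
      Lnorm ((volume.restrict (Ioo (0:ℝ) 1)).restrict (Ωk k)) s (fun x : ℝ => x ^ α) := by
    intro k
    have hLn : Lnorm ((volume.restrict (Ioo (0:ℝ) 1)).restrict (Ωk k)) s (fun x : ℝ => x ^ α)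
        = ((t k) ^ P / P) ^ (1/s) := by
      unfold Lnorm
      rw [myLnormEq s α hα (Ωk k) (hmeas k), inter_eq_left.mpr (hsub1 k),
        myInteg (α * s) (t k) (by positivity) (ht0 k)]
    rw [hLn, hμr k, quotAlg (t k) P s (ht0 k) hP hs0]
    have h1 : 1 ≤ (t k) ^ (1 - P/s) := by
      refine Real.one_le_rpow_of_pos_of_le_one_of_nonpos (ht0 k) (ht1 k) ?_
      have : P / s = α + 1/s := by field_simp [hPdef]; linarith
      rw [this]; linarith
    nlinarith [Real.rpow_pos_of_pos hP (1/s)]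
  have hc : (0:ℝ) < P ^ (1/s) := Real.rpow_pos_of_pos hP (1/s)
  obtain ⟨k, hk⟩ := (htend.eventually (gt_mem_nhds hc)).exists
  exact absurd (hkey k) (not_le.mpr hk)

theorem bwd (s α : ℝ) (hs : 1 < s) (hα : 0 < α) (hlt : α + 1 / s < 1)
    (Ωk : ℕ → Set ℝ) (hmeas : ∀ k, MeasurableSet (Ωk k))
    (hsub : ∀ k, Ωk k ⊆ {x : ℝ | x ^ α ≠ 0})
    (hpos : ∀ k, 0 < ((volume.restrict (Ioo (0:ℝ) 1)) (Ωk k)).toReal)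
    (htend : Tendsto (fun k => ((volume.restrict (Ioo (0:ℝ) 1)) (Ωk k)).toReal) atTop (𝓝 0)) :
    Tendsto (fun k => ((volume.restrict (Ioo (0:ℝ) 1)) (Ωk k)).toReal /
      Lnorm ((volume.restrict (Ioo (0:ℝ) 1)).restrict (Ωk k)) s (fun x : ℝ => x ^ α))
      atTop (𝓝 0) := by
  have hs0 : (0:ℝ) < s := lt_trans one_pos hs
  set P : ℝ := α * s + 1 with hPdef
  have hP : 0 < P := by positivity
  set e : ℝ := 1 - P / s with hedef
  have hPs : P / s = α + 1 / s := by field_simp [hPdef]; linarith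
  have he : 0 < e := by rw [hedef, hPs]; linarith
  set m : ℕ → ℝ := fun k => ((volume.restrict (Ioo (0:ℝ) 1)) (Ωk k)).toReal with hmdef
  have hm0 : ∀ k, 0 < m k := hpos
  -- basic facts about each set
  have hμA : ∀ k, volume (Ωk k ∩ Ioo (0:ℝ) 1) = ENNReal.ofReal (m k) := by
    intro k
    rw [hmdef]
    rw [← Measure.restrict_apply (hmeas k), ENNReal.ofReal_toReal]
    rw [Measure.restrict_apply (hmeas k)]
    refine ne_top_of_le_ne_top ?_ (measure_mono inter_subset_right)
    simp [Real.volume_Ioo]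
  have hm1 : ∀ k, m k ≤ 1 := by
    intro k
    have h1 : volume (Ωk k ∩ Ioo (0:ℝ) 1) ≤ volume (Ioo (0:ℝ) 1) :=
      measure_mono inter_subset_right
    rw [hμA k, Real.volume_Ioo, sub_zero] at h1
    have := (ENNReal.ofReal_le_ofReal_iff zero_le_one).mp (by simpa using h1)
    simpa using this
  have hkey : ∀ k, m k / Lnorm ((volume.restrict (Ioo (0:ℝ) 1)).restrict (Ωk k)) s
      (fun x : ℝ => x ^ α) ≤ P ^ (1/s) * (m k) ^ e := by
    intro k
    have hbath : (m k) ^ P / P ≤ ∫ x in Ωk k ∩ Ioo (0:ℝ) 1, x ^ (α * s) := by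
      have := bathtub (α * s) (m k) (by positivity) (hm0 k) (hm1 k)
        (Ωk k ∩ Ioo 0 1) ((hmeas k).inter measurableSet_Ioo) inter_subset_right (hμA k)
      simpa [hPdef] using this
    have hLn : Lnorm ((volume.restrict (Ioo (0:ℝ) 1)).restrict (Ωk k)) s (fun x : ℝ => x ^ α)
        = (∫ x in Ωk k ∩ Ioo (0:ℝ) 1, x ^ (α * s)) ^ (1/s) := by
      unfold Lnorm
      rw [myLnormEq s α hα (Ωk k) (hmeas k)]
    have hD : (0:ℝ) < ((m k) ^ P / P) ^ (1/s) := by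
      apply Real.rpow_pos_of_pos
      exact div_pos (Real.rpow_pos_of_pos (hm0 k) P) hP
    have hDle : ((m k) ^ P / P) ^ (1/s) ≤
        Lnorm ((volume.restrict (Ioo (0:ℝ) 1)).restrict (Ωk k)) s (fun x : ℝ => x ^ α) := by
      rw [hLn]
      exact Real.rpow_le_rpow (by positivity) hbath (by positivity)
    calc m k / Lnorm ((volume.restrict (Ioo (0:ℝ) 1)).restrict (Ωk k)) s (fun x : ℝ => x ^ α)
        ≤ m k / (((m k) ^ P / P) ^ (1/s)) := by
          exact (div_le_div_iff_of_pos_left (hm0 k) (lt_of_lt_of_le hD hDle) hD).mpr hDle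
      _ = P ^ (1/s) * (m k) ^ e := by
          rw [quotAlg (m k) P s (hm0 k) hP hs0]
  have hnonneg : ∀ k, 0 ≤ m k / Lnorm ((volume.restrict (Ioo (0:ℝ) 1)).restrict (Ωk k)) s
      (fun x : ℝ => x ^ α) := by
    intro k
    exact div_nonneg (hm0 k).le (Lnorm_nonneg _ _ _)
  have hbound : Tendsto (fun k => P ^ (1/s) * (m k) ^ e) atTop (𝓝 0) := by
    have h1 : Tendsto (fun k => (m k) ^ e) atTop (𝓝 ((0:ℝ) ^ e)) :=
      htend.rpow_const (Or.inr he.le)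
    rw [Real.zero_rpow he.ne'] at h1
    simpa using h1.const_mul (P ^ (1/s))
  exact squeeze_zero hnonneg hkey hbound

/-- On `Ω = (0,1)`, the function `x ↦ x^α` is in `L^s(Ω)` and is s-SD iff `α + 1/s < 1`. -/
theorem powFun_isSD_iff (s α : ℝ) (hs : 1 < s) (hα : 0 < α) :
    MemLp (fun x : ℝ => x ^ α) (ENNReal.ofReal s) (volume.restrict (Set.Ioo (0:ℝ) 1)) ∧
    (IsSD (volume.restrict (Set.Ioo (0:ℝ) 1)) s (fun x : ℝ => x ^ α) ↔ α + 1 / s < 1) := by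
  constructor
  · haveI : IsFiniteMeasure (volume.restrict (Ioo (0:ℝ) 1)) :=
      ⟨by simp [Measure.restrict_apply_univ, Real.volume_Ioo]⟩
    refine MemLp.of_bound ((Real.continuous_rpow_const hα.le).aestronglyMeasurable) 1 ?_
    filter_upwards [ae_restrict_mem measurableSet_Ioo] with x hx
    rw [Real.norm_eq_abs, abs_of_nonneg (Real.rpow_nonneg hx.1.le α)]
    exact Real.rpow_le_one hx.1.le hx.2.le hα.le
  · constructor
    · intro hSD
      exact fwd s α hs hα hSD
    · intro hlt Ωk hm hsub hpos htend
      exact bwd s α hs hα hlt Ωk hm hsub hpos htend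
end

section
/- Let Ω ⊂ ℝ^d be measurable of finite positive measure, s ∈ (1,∞), with conjugate exponent r. A function ū ∈ L^s(Ω) is s-SD if and only if λ({x : 0 < |ū(x)| ≤ γ})·γ^{-r} → 0 as γ → 0⁺. -/
open MeasureTheory Real Filter Topology Set
open scoped ENNReal

/-- `ubar ∈ L^s(Ω)` is s-SD iff `λ({0 < |ubar| ≤ γ}) · γ^{-r} → 0` as `γ → 0⁺`. -/
theorem isSD_iff_measure_small (d : ℕ) (Ω : Set (Fin d → ℝ)) (hΩ : MeasurableSet Ω)
    (h0 : 0 < volume Ω) (hfin : volume Ω < ⊤) (s r : ℝ) (hs : 1 < s)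
    (hr : 1 / s + 1 / r = 1)
    (ubar : (Fin d → ℝ) → ℝ) (hubar : MemLp ubar (ENNReal.ofReal s) (volume.restrict Ω)) :
    IsSD (volume.restrict Ω) s ubar ↔
      Tendsto (fun γ : ℝ =>
          ((volume.restrict Ω) {x | 0 < |ubar x| ∧ |ubar x| ≤ γ}).toReal * γ ^ (-r))
        (𝓝[>] (0:ℝ)) (𝓝 0) := by
  classical
  set μ := volume.restrict Ω with hμdef
  haveI : IsFiniteMeasure μ := ⟨by simpa [μ, Measure.restrict_apply_univ] using hfin⟩
  -- exponent facts
  have hs0 : (0:ℝ) < s := by linarith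
  have h1s : 0 < 1/s := by positivity
  have h1s1 : 1/s < 1 := by rw [div_lt_one hs0]; linarith
  have h1r : 0 < 1/r := by linarith
  have hr0 : 0 < r := one_div_pos.mp h1r
  -- a measurable representative of `ubar` supported inside `{ubar ≠ 0}`
  obtain ⟨g, hgm, hgae, hgsub⟩ :
      ∃ g : (Fin d → ℝ) → ℝ, Measurable g ∧ ubar =ᵐ[μ] g ∧ ∀ x, g x ≠ 0 → ubar x ≠ 0 := by
    set f := hubar.1.mk ubar with hf
    have hfm : Measurable f := hubar.1.stronglyMeasurable_mk.measurable
    have hfe : ubar =ᵐ[μ] f := hubar.1.ae_eq_mk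
    set N := toMeasurable μ {x | ubar x ≠ f x} with hN
    have hNmeas : MeasurableSet N := measurableSet_toMeasurable _ _
    have hNnull : μ N = 0 := by
      rw [hN, measure_toMeasurable]
      exact ae_iff.mp hfe
    refine ⟨fun x => if x ∈ N then 0 else f x, Measurable.ite hNmeas measurable_const hfm, ?_, ?_⟩
    · have : ∀ᵐ x ∂μ, x ∉ N := by
        rw [ae_iff]; simpa using hNnull
      filter_upwards [this] with x hx
      have hx' : ubar x = f x := by
        by_contra hne
        exact hx (subset_toMeasurable μ _ hne)
      simp [hx, hx']
    · intro x hx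
      by_cases hxN : x ∈ N
      · simp [hxN] at hx
      · have hx' : ubar x = f x := by
          by_contra hne
          exact hxN (subset_toMeasurable μ _ hne)
        simpa [hxN, hx'] using hx
  have hDnull : μ {x | ubar x ≠ g x} = 0 := ae_iff.mp hgae
  -- integrability of |g|^s
  have hint : Integrable (fun x => |ubar x| ^ s) μ := by
    have h1 : ENNReal.ofReal s ≠ 0 := by
      simp [ENNReal.ofReal_eq_zero]; linarith
    have h2 : ENNReal.ofReal s ≠ ⊤ := by simp
    have := hubar.integrable_norm_rpow h1 h2
    simpa [ENNReal.toReal_ofReal hs0.le, Real.norm_eq_abs] using this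
  have hintg : Integrable (fun x => |g x| ^ s) μ :=
    hint.congr (by filter_upwards [hgae] with x hx; rw [hx])
  -- Lnorm in terms of g
  have hLnorm : ∀ T : Set (Fin d → ℝ),
      Lnorm (μ.restrict T) s ubar = (∫ x in T, |g x| ^ s ∂μ) ^ (1/s) := by
    intro T
    unfold Lnorm
    congr 1
    exact integral_congr_ae (ae_restrict_of_ae (hgae.mono fun x hx => by dsimp only; rw [hx]))
  -- measure congruence between ubar-level sets and g-level sets
  have hmeq : ∀ γ : ℝ,
      μ {x | 0 < |ubar x| ∧ |ubar x| ≤ γ} = μ {x | 0 < |g x| ∧ |g x| ≤ γ} := by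
    intro γ
    apply measure_congr
    rw [Filter.eventuallyEq_set]
    filter_upwards [hgae] with x hx
    simp only [Set.mem_setOf_eq, hx]
  -- the measure of small level sets of g tends to 0
  have hm0 : Tendsto (fun γ : ℝ => (μ {x | 0 < |g x| ∧ |g x| ≤ γ}).toReal)
      (𝓝[>] (0:ℝ)) (𝓝 0) := by
    rw [NormedAddCommGroup.tendsto_nhds_zero]
    intro ε hε
    set A : ℕ → Set (Fin d → ℝ) := fun n => {x | 0 < |g x| ∧ |g x| ≤ 1/(n+1)} with hA
    have hAm : ∀ n, MeasurableSet (A n) := fun n =>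
      (measurableSet_lt measurable_const hgm.abs).inter
        (measurableSet_le hgm.abs measurable_const)
    have hAanti : Antitone A := by
      intro m n hmn x hx
      refine ⟨hx.1, hx.2.trans ?_⟩
      have : (m:ℝ) + 1 ≤ (n:ℝ) + 1 := by exact_mod_cast Nat.succ_le_succ hmn
      gcongr
    have hAempty : ⋂ n, A n = ∅ := by
      ext x
      simp only [Set.mem_iInter, Set.mem_empty_iff_false, iff_false, not_forall]
      by_cases hgx : 0 < |g x|
      · obtain ⟨n, hn⟩ := exists_nat_one_div_lt hgx
        exact ⟨n, fun h => absurd h.2 (not_le.mpr hn)⟩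
      · exact ⟨0, fun h => hgx h.1⟩
    have h1 := tendsto_measure_iInter_atTop (fun n => (hAm n).nullMeasurableSet) hAanti
      ⟨0, measure_ne_top μ _⟩
    rw [hAempty, measure_empty] at h1
    have h2 : Tendsto (fun n => (μ (A n)).toReal) atTop (𝓝 0) := by
      have h3 := (ENNReal.tendsto_toReal (by simp)).comp h1
      rw [ENNReal.toReal_zero] at h3
      exact h3
    obtain ⟨n, hn⟩ := (h2.eventually (eventually_lt_nhds hε)).exists
    filter_upwards [Ioc_mem_nhdsGT (show (0:ℝ) < 1/(n+1) by positivity)] with γ hγ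
    have hmono : μ {x | 0 < |g x| ∧ |g x| ≤ γ} ≤ μ (A n) :=
      measure_mono fun x hx => ⟨hx.1, hx.2.trans hγ.2⟩
    have hle : (μ {x | 0 < |g x| ∧ |g x| ≤ γ}).toReal ≤ (μ (A n)).toReal :=
      ENNReal.toReal_mono (measure_ne_top μ _) hmono
    rw [Real.norm_eq_abs, abs_of_nonneg ENNReal.toReal_nonneg]
    exact lt_of_le_of_lt hle hn
  -- upper bound for the integral of |g|^s over a set where |g| ≤ γ
  have hub : ∀ (T : Set (Fin d → ℝ)) (γ : ℝ), MeasurableSet T → 0 ≤ γ →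
      (∀ x ∈ T, |g x| ≤ γ) → (∫ x in T, |g x| ^ s ∂μ) ≤ γ ^ s * (μ T).toReal := by
    intro T γ hT hγ hbd
    calc ∫ x in T, |g x| ^ s ∂μ ≤ ∫ _x in T, γ ^ s ∂μ := by
          refine setIntegral_mono_on hintg.integrableOn
            ((integrableOn_const_iff).mpr (Or.inr (measure_lt_top μ T))) hT ?_
          exact fun x hx => Real.rpow_le_rpow (abs_nonneg _) (hbd x hx) hs0.le
      _ = γ ^ s * (μ T).toReal := by
          rw [setIntegral_const, smul_eq_mul, mul_comm, measureReal_def]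
  -- positivity of the integral of |g|^s over positive-measure subsets of {g ≠ 0}
  have hLpos : ∀ T : Set (Fin d → ℝ), MeasurableSet T → T ⊆ {x | g x ≠ 0} →
      0 < (μ T).toReal → 0 < ∫ x in T, |g x| ^ s ∂μ := by
    intro T hT hsub hpos
    rw [setIntegral_pos_iff_support_of_nonneg_ae
      (Eventually.of_forall fun x => Real.rpow_nonneg (abs_nonneg _) s)
      hintg.integrableOn]
    have hsupp : T ⊆ Function.support fun x => |g x| ^ s := by
      intro x hx
      have : g x ≠ 0 := hsub hx
      simp only [Function.mem_support]
      positivity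
    have : μ (Function.support (fun x => |g x| ^ s) ∩ T) = μ T := by
      rw [Set.inter_eq_self_of_subset_right hsupp]
    rw [this]
    exact ENNReal.toReal_pos_iff.mp hpos |>.1
  constructor
  · -- sSD → measure condition
    intro hSD
    by_contra hc
    rw [Metric.tendsto_nhds] at hc
    push_neg at hc
    obtain ⟨ε, hε, hfreq⟩ := hc
    have hfreq' := hfreq.mono fun γ h => h
    have hfreq2 : ∃ᶠ γ in 𝓝[>] (0:ℝ),
        (ε ≤ dist ((μ {x | 0 < |ubar x| ∧ |ubar x| ≤ γ}).toReal * γ ^ (-r)) 0) ∧ 0 < γ :=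
      hfreq'.and_eventually self_mem_nhdsWithin
    obtain ⟨γ, hγtend, hγprop⟩ := Filter.exists_seq_forall_of_frequently hfreq2
    have hγpos : ∀ k, 0 < γ k := fun k => (hγprop k).2
    have hfε : ∀ k, ε ≤ (μ {x | 0 < |ubar x| ∧ |ubar x| ≤ γ k}).toReal * (γ k) ^ (-r) := by
      intro k
      have h1 := (hγprop k).1
      rwa [Real.dist_eq, sub_zero, abs_of_nonneg
        (mul_nonneg ENNReal.toReal_nonneg (Real.rpow_nonneg (hγpos k).le _))] at h1
    set T : ℕ → Set (Fin d → ℝ) := fun k => {x | 0 < |g x| ∧ |g x| ≤ γ k} with hT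
    have hTm : ∀ k, MeasurableSet (T k) := fun k =>
      (measurableSet_lt measurable_const hgm.abs).inter
        (measurableSet_le hgm.abs measurable_const)
    have hTsub : ∀ k, T k ⊆ {x | ubar x ≠ 0} := fun k x hx =>
      hgsub x (abs_pos.mp hx.1)
    have hTμ : ∀ k, (μ (T k)).toReal = (μ {x | 0 < |ubar x| ∧ |ubar x| ≤ γ k}).toReal :=
      fun k => by rw [hmeq]
    have hTpos : ∀ k, 0 < (μ (T k)).toReal := by
      intro k
      rw [hTμ k]
      by_contra hle
      push_neg at hle
      have h2 : (μ {x | 0 < |ubar x| ∧ |ubar x| ≤ γ k}).toReal = 0 :=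
        le_antisymm hle ENNReal.toReal_nonneg
      have h3 := hfε k
      rw [h2, zero_mul] at h3
      linarith
    have hT0 : Tendsto (fun k => (μ (T k)).toReal) atTop (𝓝 0) := hm0.comp hγtend
    have hratio := hSD T hTm hTsub hTpos hT0
    have hεr : (0:ℝ) < ε ^ (1/r) := Real.rpow_pos_of_pos hε _
    obtain ⟨k, hk⟩ := (hratio.eventually (eventually_lt_nhds hεr)).exists
    -- now derive the contradiction : ε^(1/r) ≤ ratio k
    set tμ := (μ (T k)).toReal with htμdef
    have htμpos : 0 < tμ := hTpos k
    set I := ∫ x in T k, |g x| ^ s ∂μ with hI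
    have hIpos : 0 < I := hLpos (T k) (hTm k) (fun x hx => abs_pos.mp hx.1) htμpos
    have hIub : I ≤ (γ k) ^ s * tμ := hub (T k) (γ k) (hTm k) (hγpos k).le fun x hx => hx.2
    have hLk : Lnorm (μ.restrict (T k)) s ubar = I ^ (1/s) := hLnorm (T k)
    have hLkpos : 0 < I ^ (1/s) := Real.rpow_pos_of_pos hIpos _
    have hDval : ((γ k) ^ s * tμ) ^ (1/s) = γ k * tμ ^ (1/s) := by
      rw [Real.mul_rpow (Real.rpow_nonneg (hγpos k).le s) htμpos.le,
        ← Real.rpow_mul (hγpos k).le, mul_one_div_cancel hs0.ne', Real.rpow_one]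
    have hLub : I ^ (1/s) ≤ γ k * tμ ^ (1/s) := by
      rw [← hDval]
      exact Real.rpow_le_rpow hIpos.le hIub h1s.le
    have h5 : tμ ^ (1/r) * tμ ^ (1/s) = tμ := by
      rw [← Real.rpow_add htμpos, show 1/r + 1/s = (1:ℝ) by linarith, Real.rpow_one]
    have hkey : ε ^ (1/r) ≤ tμ / (γ k * tμ ^ (1/s)) := by
      have h4 : ε ^ (1/r) ≤ (tμ * (γ k) ^ (-r)) ^ (1/r) := by
        refine Real.rpow_le_rpow hε.le ?_ h1r.le
        rw [htμdef, hTμ k]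
        exact hfε k
      refine h4.trans_eq ?_
      rw [Real.mul_rpow htμpos.le (Real.rpow_nonneg (hγpos k).le _),
        ← Real.rpow_mul (hγpos k).le, show -r * (1/r) = (-1:ℝ) by field_simp,
        Real.rpow_neg_one,
        eq_div_iff (ne_of_gt (mul_pos (hγpos k) (Real.rpow_pos_of_pos htμpos _)))]
      calc tμ ^ (1/r) * (γ k)⁻¹ * (γ k * tμ ^ (1/s))
          = (tμ ^ (1/r) * tμ ^ (1/s)) * ((γ k)⁻¹ * γ k) := by ring
        _ = tμ := by rw [h5, inv_mul_cancel₀ (hγpos k).ne', mul_one]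
    have hfinal : ε ^ (1/r) ≤ tμ / Lnorm (μ.restrict (T k)) s ubar := by
      rw [hLk]
      exact hkey.trans (div_le_div_of_nonneg_left htμpos.le hLkpos hLub)
    exact absurd hk (not_lt.mpr hfinal)
  · -- measure condition → sSD
    intro h Ωk hmeas hsub hpos htend
    rw [NormedAddCommGroup.tendsto_nhds_zero]
    intro ε hε
    set c : ℝ := ((2:ℝ) ^ (1/s) + 1) / ε with hcdef
    have h2pos : (0:ℝ) < 2 ^ (1/s) := Real.rpow_pos_of_pos two_pos _
    have hcpos : 0 < c := by positivity
    have hcr : (0:ℝ) < c ^ r := Real.rpow_pos_of_pos hcpos _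
    set δ : ℝ := 1 / (2 * c ^ r) with hδdef
    have hδpos : 0 < δ := by positivity
    set tμ : ℕ → ℝ := fun k => (μ (Ωk k)).toReal with htμ
    set γk : ℕ → ℝ := fun k => c * tμ k ^ (1/r) with hγkdef
    have hγpos : ∀ k, 0 < γk k := fun k => mul_pos hcpos (Real.rpow_pos_of_pos (hpos k) _)
    have hγ0 : Tendsto γk atTop (𝓝[>] 0) := by
      refine tendsto_nhdsWithin_of_tendsto_nhds_of_eventually_within _ ?_
        (Eventually.of_forall fun k => hγpos k)
      have hcont := (Real.continuousAt_rpow_const 0 (1/r) (Or.inr h1r.le)).tendsto.comp htend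
      have h1 : Tendsto (fun k => tμ k ^ (1/r)) atTop (𝓝 ((0:ℝ) ^ (1/r))) := hcont
      rw [Real.zero_rpow (by positivity : (1:ℝ)/r ≠ 0)] at h1
      rw [hγkdef]
      simpa using h1.const_mul c
    have hev : ∀ᶠ γ in 𝓝[>] (0:ℝ),
        (μ {x | 0 < |ubar x| ∧ |ubar x| ≤ γ}).toReal * γ ^ (-r) < δ :=
      h.eventually (eventually_lt_nhds hδpos)
    filter_upwards [hγ0.eventually hev] with k hk
    set γ := γk k with hγdef
    have hγp : 0 < γ := hγpos k
    have htμp : 0 < tμ k := hpos k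
    have hγr : γ ^ r = c ^ r * tμ k := by
      rw [hγdef, hγkdef]
      show (c * tμ k ^ (1/r)) ^ r = c ^ r * tμ k
      rw [Real.mul_rpow hcpos.le (Real.rpow_nonneg ENNReal.toReal_nonneg _),
        ← Real.rpow_mul ENNReal.toReal_nonneg, one_div_mul_cancel hr0.ne', Real.rpow_one]
    have hmhalf : (μ {x | 0 < |ubar x| ∧ |ubar x| ≤ γ}).toReal ≤ tμ k / 2 := by
      have h7 := hk
      rw [Real.rpow_neg hγp.le, ← div_eq_mul_inv] at h7
      have h6 := (div_lt_iff₀ (Real.rpow_pos_of_pos hγp r)).mp h7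
      have h8 : δ * γ ^ r = tμ k / 2 := by
        rw [hδdef, hγr]
        have hne := hcr.ne'
        field_simp
      linarith
    set B := Ωk k ∩ {x | |g x| ≤ γ} with hBdef
    set A := Ωk k ∩ {x | γ < |g x|} with hAdef
    have hAm : MeasurableSet A := (hmeas k).inter (measurableSet_lt measurable_const hgm.abs)
    have hBμ : (μ B).toReal ≤ (μ {x | 0 < |ubar x| ∧ |ubar x| ≤ γ}).toReal := by
      refine ENNReal.toReal_mono (measure_ne_top μ _) ?_
      have hBsub : B ⊆ {x | 0 < |ubar x| ∧ |ubar x| ≤ γ} ∪ {x | ubar x ≠ g x} := by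
        intro x hx
        by_cases hxe : ubar x = g x
        · exact Or.inl ⟨abs_pos.mpr (hsub k hx.1), by rw [hxe]; exact hx.2⟩
        · exact Or.inr hxe
      calc μ B ≤ μ ({x | 0 < |ubar x| ∧ |ubar x| ≤ γ} ∪ {x | ubar x ≠ g x}) :=
            measure_mono hBsub
        _ ≤ μ {x | 0 < |ubar x| ∧ |ubar x| ≤ γ} + μ {x | ubar x ≠ g x} := measure_union_le _ _
        _ = μ {x | 0 < |ubar x| ∧ |ubar x| ≤ γ} := by rw [hDnull, add_zero]
    have hsplit : tμ k ≤ (μ A).toReal + (μ B).toReal := by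
      have hsub2 : Ωk k ⊆ A ∪ B := by
        intro x hx
        rcases le_or_gt (|g x|) γ with h' | h'
        · exact Or.inr ⟨hx, h'⟩
        · exact Or.inl ⟨hx, h'⟩
      calc tμ k ≤ (μ (A ∪ B)).toReal :=
            ENNReal.toReal_mono (measure_ne_top μ _) (measure_mono hsub2)
        _ ≤ (μ A + μ B).toReal := ENNReal.toReal_mono
            (ENNReal.add_ne_top.mpr ⟨measure_ne_top μ _, measure_ne_top μ _⟩)
            (measure_union_le _ _)
        _ = (μ A).toReal + (μ B).toReal :=
            ENNReal.toReal_add (measure_ne_top μ _) (measure_ne_top μ _)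
    have hAμ : tμ k / 2 ≤ (μ A).toReal := by linarith
    have hIlow : γ ^ s * (tμ k / 2) ≤ ∫ x in Ωk k, |g x| ^ s ∂μ := by
      have e1 : ∫ x in A, |g x| ^ s ∂μ ≤ ∫ x in Ωk k, |g x| ^ s ∂μ :=
        setIntegral_mono_set hintg.integrableOn
          (Eventually.of_forall fun x => Real.rpow_nonneg (abs_nonneg _) s)
          (HasSubset.Subset.eventuallyLE Set.inter_subset_left)
      have e2 : γ ^ s * (μ A).toReal ≤ ∫ x in A, |g x| ^ s ∂μ := by
        have e4 := setIntegral_mono_on ((integrableOn_const_iff).mpr (Or.inr (measure_lt_top μ A)))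
          hintg.integrableOn hAm (fun x hx => Real.rpow_le_rpow hγp.le (le_of_lt hx.2) hs0.le)
        rwa [setIntegral_const, smul_eq_mul, mul_comm, measureReal_def] at e4
      have e3 : γ ^ s * (tμ k / 2) ≤ γ ^ s * (μ A).toReal :=
        mul_le_mul_of_nonneg_left hAμ (Real.rpow_nonneg hγp.le s)
      linarith
    have hIposk : (0:ℝ) < γ ^ s * (tμ k / 2) :=
      mul_pos (Real.rpow_pos_of_pos hγp s) (by linarith)
    have hLlow : γ * (tμ k / 2) ^ (1/s) ≤ Lnorm (μ.restrict (Ωk k)) s ubar := by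
      rw [hLnorm (Ωk k)]
      refine le_trans (le_of_eq ?_) (Real.rpow_le_rpow hIposk.le hIlow h1s.le)
      rw [Real.mul_rpow (Real.rpow_nonneg hγp.le s) (by linarith : (0:ℝ) ≤ tμ k / 2),
        ← Real.rpow_mul hγp.le, mul_one_div_cancel hs0.ne', Real.rpow_one]
    have hdenpos : (0:ℝ) < γ * (tμ k / 2) ^ (1/s) :=
      mul_pos hγp (Real.rpow_pos_of_pos (by linarith) _)
    have hLposk : 0 < Lnorm (μ.restrict (Ωk k)) s ubar := lt_of_lt_of_le hdenpos hLlow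
    have hratioub : tμ k / Lnorm (μ.restrict (Ωk k)) s ubar ≤ 2 ^ (1/s) / c := by
      have h5 : tμ k ^ (1/r) * tμ k ^ (1/s) = tμ k := by
        rw [← Real.rpow_add htμp, show 1/r + 1/s = (1:ℝ) by linarith, Real.rpow_one]
      have hden : γ * (tμ k / 2) ^ (1/s) = c * tμ k / 2 ^ (1/s) := by
        rw [hγdef, hγkdef, Real.div_rpow htμp.le (by norm_num : (0:ℝ) ≤ 2)]
        calc c * tμ k ^ (1/r) * (tμ k ^ (1/s) / 2 ^ (1/s))
            = c * (tμ k ^ (1/r) * tμ k ^ (1/s)) / 2 ^ (1/s) := by ring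
          _ = c * tμ k / 2 ^ (1/s) := by rw [h5]
      have hd : tμ k / (γ * (tμ k / 2) ^ (1/s)) = 2 ^ (1/s) / c := by
        rw [hden, div_div_eq_mul_div, mul_comm c (tμ k),
          mul_div_mul_left _ _ htμp.ne']
      calc tμ k / Lnorm (μ.restrict (Ωk k)) s ubar
          ≤ tμ k / (γ * (tμ k / 2) ^ (1/s)) :=
            div_le_div_of_nonneg_left htμp.le hdenpos hLlow
        _ = 2 ^ (1/s) / c := hd
    have hclt : (2:ℝ) ^ (1/s) / c < ε := by
      have hεc : ε * c = 2 ^ (1/s) + 1 := by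
        rw [hcdef, mul_comm, div_mul_cancel₀ _ hε.ne']
      rw [div_lt_iff₀ hcpos]
      rw [mul_comm] at hεc ⊢
      linarith
    rw [Real.norm_eq_abs, abs_of_nonneg (div_nonneg htμp.le hLposk.le)]
    exact lt_of_le_of_lt hratioub hclt
end

section
/- Let Ω ⊂ ℝ^d be measurable with finite positive measure, s ∈ (1,∞) with conjugate exponent r, and ū ∈ L^s(Ω). If |ū|^{-1}·χ_{{ū≠0}} ∈ L^r(Ω), then λ({x : 0 < |ū(x)| ≤ γ})·γ^{-r} → 0 as γ → 0⁺. -/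
open MeasureTheory Real Filter Topology Set
open scoped ENNReal

/-- If `|ubar|⁻¹ · χ_{ubar ≠ 0} ∈ L^r(Ω)`, then `λ({0 < |ubar| ≤ γ}) · γ^{-r} → 0` as `γ → 0⁺`. -/
theorem measure_small_of_inv_memLr (d : ℕ) (Ω : Set (Fin d → ℝ)) (hΩ : MeasurableSet Ω)
    (h0 : 0 < volume Ω) (hfin : volume Ω < ⊤) (s r : ℝ) (hs : 1 < s)
    (hr : 1 / s + 1 / r = 1)
    (ubar : (Fin d → ℝ) → ℝ) (hubar : MemLp ubar (ENNReal.ofReal s) (volume.restrict Ω))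
    (hinv : MemLp (fun x => if ubar x ≠ 0 then |ubar x|⁻¹ else 0) (ENNReal.ofReal r)
      (volume.restrict Ω)) :
    Tendsto (fun γ : ℝ =>
        ((volume.restrict Ω) {x | 0 < |ubar x| ∧ |ubar x| ≤ γ}).toReal * γ ^ (-r))
      (𝓝[>] (0:ℝ)) (𝓝 0) := by
  set μ := volume.restrict Ω with hμ
  have hr0 : 0 < r := by
    have h1 : 0 < 1 / r := by
      have : 1 / s < 1 := by
        rw [div_lt_one (by linarith)]; linarith
      linarith
    exact (one_div_pos).mp h1
  -- measurable representative
  set u' := hubar.1.mk ubar with hu'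
  have hu'm : StronglyMeasurable u' := hubar.1.stronglyMeasurable_mk
  have hum : Measurable u' := hu'm.measurable
  have huu' : ubar =ᵐ[μ] u' := hubar.1.ae_eq_mk
  set g : (Fin d → ℝ) → ℝ := fun x => if u' x ≠ 0 then |u' x|⁻¹ else 0 with hg
  have hgm : Measurable g := by
    apply Measurable.ite _ ((hum.abs).inv) measurable_const
    exact (hum (measurableSet_singleton 0).compl)
  have hgg' : (fun x => if ubar x ≠ 0 then |ubar x|⁻¹ else 0) =ᵐ[μ] g := by
    filter_upwards [huu'] with x hx
    simp [hg, hx]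
  have hginv : MemLp g (ENNReal.ofReal r) μ := hinv.ae_eq hgg'
  set G : (Fin d → ℝ) → ℝ := fun x => ‖g x‖ ^ r with hG
  have hGint : Integrable G μ := by
    have := hginv.integrable_norm_rpow (by simp [ENNReal.ofReal_eq_zero]; linarith)
      ENNReal.ofReal_ne_top
    simpa [hG, ENNReal.toReal_ofReal hr0.le] using this
  have hGnn : ∀ x, 0 ≤ G x := fun x => Real.rpow_nonneg (norm_nonneg _) r
  have hGm : Measurable G := (hgm.norm).pow_const r |>.comp measurable_id |>.mono le_rfl le_rfl
  set A : ℝ → Set (Fin d → ℝ) := fun γ => {x | 0 < |u' x| ∧ |u' x| ≤ γ} with hA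
  have hAm : ∀ γ, MeasurableSet (A γ) := by
    intro γ
    exact ((measurableSet_lt measurable_const hum.abs).inter
      (measurableSet_le hum.abs measurable_const))
  have hAfin : ∀ γ, μ (A γ) ≠ ⊤ := by
    intro γ
    exact ((measure_mono (subset_univ _)).trans_lt
      (by simpa [hμ, Measure.restrict_apply_univ] using hfin)).ne
  have hmeq : ∀ γ, μ {x | 0 < |ubar x| ∧ |ubar x| ≤ γ} = μ (A γ) := by
    intro γ
    apply measure_congr
    filter_upwards [huu'] with x hx
    show (0 < |ubar x| ∧ |ubar x| ≤ γ) = (0 < |u' x| ∧ |u' x| ≤ γ)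
    rw [hx]
  set H : ℝ → ℝ := fun γ => ∫ x in A γ, G x ∂μ with hH
  -- Chebyshev-type bound
  have key : ∀ γ : ℝ, 0 < γ → (μ (A γ)).toReal * γ ^ (-r) ≤ H γ := by
    intro γ hγ
    change μ.real (A γ) • γ ^ (-r) ≤ H γ
    apply setIntegral_ge_of_const_le (hAm γ) (hAfin γ) _ (hGint.integrableOn)
    intro x hx
    obtain ⟨hx1, hx2⟩ := hx
    have hne : u' x ≠ 0 := fun h => by simp [h] at hx1
    have hgx : ‖g x‖ = |u' x|⁻¹ := by
      simp [hg, hne, Real.norm_eq_abs,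
        abs_of_nonneg (inv_nonneg.mpr (abs_nonneg (u' x)))]
    show γ ^ (-r) ≤ ‖g x‖ ^ r
    rw [hgx, Real.rpow_neg hγ.le, ← Real.inv_rpow hγ.le]
    exact Real.rpow_le_rpow (inv_nonneg.mpr hγ.le)
      (inv_anti₀ hx1 hx2) hr0.le
  -- monotonicity of H
  have hmono : ∀ γ γ' : ℝ, γ ≤ γ' → H γ ≤ H γ' := by
    intro γ γ' hγγ
    apply setIntegral_mono_set hGint.integrableOn
      (Eventually.of_forall fun x => hGnn x)
    apply Eventually.of_forall
    intro x hx
    exact ⟨hx.1, hx.2.trans hγγ⟩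
  have hHnn : ∀ γ, 0 ≤ H γ := fun γ =>
    setIntegral_nonneg (hAm γ) (fun x _ => hGnn x)
  -- H (1/(n+1)) → 0
  have hseq : Tendsto (fun n : ℕ => H (1 / (n + 1))) atTop (𝓝 0) := by
    have h0' : (0:ℝ) = ∫ x, (0:ℝ) ∂μ := by simp
    rw [h0']
    have heq : ∀ n : ℕ, H (1 / (n + 1)) = ∫ x, (A (1 / (n+1) : ℝ)).indicator G x ∂μ := by
      intro n; rw [integral_indicator (hAm _)]
    simp_rw [heq]
    apply tendsto_integral_of_dominated_convergence G
      (fun n => ((hGm.indicator (hAm _)).aestronglyMeasurable)) hGint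
    · intro n
      filter_upwards with x
      rw [Real.norm_eq_abs, abs_of_nonneg (Set.indicator_nonneg (fun y _ => hGnn y) x)]
      exact Set.indicator_le_self' (fun y _ => hGnn y) x
    · filter_upwards with x
      by_cases hx : u' x = 0
      · have : ∀ n : ℕ, (A (1 / (n+1) : ℝ)).indicator G x = 0 := by
          intro n
          apply indicator_of_notMem
          simp [hA, hx]
        simp_rw [this]; exact tendsto_const_nhds
      · have hpos : 0 < |u' x| := abs_pos.mpr hx
        obtain ⟨N, hN⟩ := exists_nat_gt (1 / |u' x|)
        apply tendsto_atTop_of_eventually_const (i₀ := N)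
        intro n hn
        apply indicator_of_notMem
        intro hmem
        have hcast : (N:ℝ) ≤ n := Nat.cast_le.mpr hn
        have h1 : (1 : ℝ) / (n + 1) < |u' x| := by
          rw [div_lt_iff₀ (by positivity)]
          rw [div_lt_iff₀ hpos] at hN
          nlinarith [abs_nonneg (u' x)]
        exact absurd hmem.2 (not_le.mpr h1)
  -- conclude
  rw [NormedAddCommGroup.tendsto_nhds_zero]
  intro ε hε
  obtain ⟨N, hN⟩ := (Metric.tendsto_atTop.mp hseq) ε hε
  have hδ : 0 < (1:ℝ) / (N + 1) := by positivity
  have hmem : Ioo (0:ℝ) (1 / (N + 1)) ∈ 𝓝[>] (0:ℝ) :=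
    Ioo_mem_nhdsGT_of_mem ⟨le_refl _, hδ⟩
  filter_upwards [hmem] with γ hγ
  obtain ⟨hγ0, hγδ⟩ := hγ
  have hb : (μ {x | 0 < |ubar x| ∧ |ubar x| ≤ γ}).toReal * γ ^ (-r) ≤ H γ := by
    rw [hmeq γ]; exact key γ hγ0
  have hnn : 0 ≤ (μ {x | 0 < |ubar x| ∧ |ubar x| ≤ γ}).toReal * γ ^ (-r) := by
    apply mul_nonneg ENNReal.toReal_nonneg (Real.rpow_nonneg hγ0.le _)
  have hHγ : H γ < ε := by
    have := hN N (le_refl N)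
    rw [Real.dist_eq, sub_zero, abs_of_nonneg (hHnn _)] at this
    exact lt_of_le_of_lt (hmono γ _ hγδ.le) this
  rw [Real.norm_eq_abs, abs_of_nonneg hnn]
  exact lt_of_le_of_lt hb hHγ
end

section
/- Let Ω ⊂ ℝ^d be measurable with finite positive measure, s ∈ [1,∞) with conjugate exponent r, and q_{s,0}(u) = λ({u ≠ 0}) on L^s(Ω). For any ū ∈ L^s(Ω), every element η of the Fréchet subdifferential of q_{s,0} at ū vanishes almost everywhere on {ū ≠ 0}. -/
open MeasureTheory Real Filter Topology Set
open scoped ENNReal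

/-- Every element of the Fréchet subdifferential of `q_{s,0}(u) = λ({u ≠ 0})` at `ubar`
vanishes almost everywhere on `{ubar ≠ 0}`. Here `r` is the conjugate exponent of `s`
(possibly `∞` when `s = 1`). -/
theorem fsub_qs0_vanishes (d : ℕ) (Ω : Set (Fin d → ℝ)) (hΩ : MeasurableSet Ω)
    (h0 : 0 < volume Ω) (hfin : volume Ω < ⊤) (s : ℝ) (hs : 1 ≤ s) (r : ℝ≥0∞)
    (hr : (ENNReal.ofReal s)⁻¹ + r⁻¹ = 1)
    (ubar η : (Fin d → ℝ) → ℝ)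
    (hubar : MemLp ubar (ENNReal.ofReal s) (volume.restrict Ω))
    (hη : MemLp η r (volume.restrict Ω))
    (hsub : InFSub (volume.restrict Ω) s
      (fun u => ((volume.restrict Ω) {x | u x ≠ 0}).toReal) ubar η) :
    ∀ᵐ x ∂(volume.restrict Ω), ubar x ≠ 0 → η x = 0 := by
  set μ := volume.restrict Ω with hμdef
  haveI hμfin : IsFiniteMeasure μ := ⟨by rw [Measure.restrict_apply_univ]; exact hfin⟩
  have hs0 : (0:ℝ) < s := lt_of_lt_of_le one_pos hs
  -- measurable representatives
  set u := hubar.1.mk ubar with hu_def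
  set e := hη.1.mk η with he_def
  have hum : Measurable u := hubar.1.stronglyMeasurable_mk.measurable
  have hem : Measurable e := hη.1.stronglyMeasurable_mk.measurable
  have huu : ubar =ᵐ[μ] u := hubar.1.ae_eq_mk
  have hee : η =ᵐ[μ] e := hη.1.ae_eq_mk
  suffices H : ∀ᵐ x ∂μ, u x ≠ 0 → e x = 0 by
    filter_upwards [H, huu, hee] with x hx h1 h2 h
    rw [h2]; exact hx (h1 ▸ h)
  by_contra hcon
  rw [ae_iff] at hcon
  have hAset : {x | ¬(u x ≠ 0 → e x = 0)} = {x | u x ≠ 0 ∧ e x ≠ 0} := by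
    ext x; simp [Classical.not_imp]
  rw [hAset] at hcon
  -- find ρ > 0 with positive measure of {u ≠ 0 ∧ ρ ≤ |e|}
  obtain ⟨n, hn⟩ : ∃ n : ℕ, μ {x | u x ≠ 0 ∧ ((n:ℝ)+1)⁻¹ ≤ |e x|} ≠ 0 := by
    by_contra hforall
    push_neg at hforall
    apply hcon
    refine measure_mono_null ?_ (measure_iUnion_null hforall)
    intro x hx
    obtain ⟨m, hm⟩ := exists_nat_gt (|e x|)⁻¹
    have hex : 0 < |e x| := abs_pos.2 hx.2
    refine mem_iUnion.2 ⟨m, hx.1, ?_⟩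
    have h1 : (|e x|)⁻¹ < (m:ℝ) + 1 := hm.trans (lt_add_one _)
    have := inv_strictAnti₀ (inv_pos.2 hex) h1
    rw [inv_inv] at this
    exact this.le
  set ρ : ℝ := ((n:ℝ)+1)⁻¹ with hρdef
  have hρ : 0 < ρ := by positivity
  set Ω' : Set (Fin d → ℝ) := {x | u x ≠ 0 ∧ ρ ≤ |e x|} with hΩ'def
  have hΩ'm : MeasurableSet Ω' := by
    have : Ω' = (u ⁻¹' {0})ᶜ ∩ {x | ρ ≤ |e x|} := by
      ext x; simp [hΩ'def]
    rw [this]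
    exact ((hum (measurableSet_singleton 0)).compl).inter
      (measurableSet_le measurable_const hem.abs)
  have hΩ'pos : 0 < μ Ω' := pos_iff_ne_zero.2 hn
  -- the test profile
  set v : (Fin d → ℝ) → ℝ := fun x => min |u x| 1 with hvdef
  have hv0 : ∀ x, 0 ≤ v x := fun x => le_min (abs_nonneg _) one_pos.le
  have hv1 : ∀ x, v x ≤ 1 := fun x => min_le_right _ _
  have hvu : ∀ x, v x ≤ |u x| := fun x => min_le_left _ _
  have hvpos : ∀ x ∈ Ω', 0 < v x := fun x hx => lt_min (abs_pos.2 hx.1) one_pos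
  have hvm : Measurable v := hum.abs.min measurable_const
  set g : (Fin d → ℝ) → ℝ :=
    Ω'.indicator (fun x => (if 0 ≤ e x then (1:ℝ) else -1) * v x) with hgdef
  have hgm : Measurable g := by
    refine Measurable.indicator ?_ hΩ'm
    exact (Measurable.ite (measurableSet_le measurable_const hem)
      measurable_const measurable_const).mul hvm
  have hg_abs : ∀ x ∈ Ω', |g x| = v x := by
    intro x hx
    rw [hgdef]; simp only [indicator_of_mem hx]
    rw [abs_mul]
    by_cases h0 : 0 ≤ e x <;> simp [h0, abs_of_nonneg (hv0 x)]
  have hg_nmem : ∀ x, x ∉ Ω' → g x = 0 := fun x hx => indicator_of_notMem hx _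
  have heg : ∀ x, e x * g x = Ω'.indicator (fun x => |e x| * v x) x := by
    intro x
    by_cases hx : x ∈ Ω'
    · rw [hgdef]; simp only [indicator_of_mem hx]
      by_cases h0 : 0 ≤ e x
      · rw [if_pos h0, one_mul, abs_of_nonneg h0]
      · rw [if_neg h0, abs_of_neg (not_le.1 h0)]; ring
    · simp [hg_nmem x hx, indicator_of_notMem hx]
  -- the constants I, J, S
  set I : ℝ := ∫ x, Ω'.indicator v x ∂μ with hIdef
  set J : ℝ := ∫ x, Ω'.indicator (fun x => v x ^ s) x ∂μ with hJdef
  have hIV : Integrable (Ω'.indicator v) μ := by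
    refine (integrable_const (1:ℝ)).mono' (hvm.indicator hΩ'm).aestronglyMeasurable ?_
    filter_upwards with x
    by_cases hx : x ∈ Ω'
    · simp [indicator_of_mem hx, abs_of_nonneg (hv0 x), hv1 x]
    · simp [indicator_of_notMem hx]
  have hJV : Integrable (Ω'.indicator (fun x => v x ^ s)) μ := by
    refine (integrable_const (1:ℝ)).mono'
      (((hvm.pow_const s).indicator hΩ'm).aestronglyMeasurable) ?_
    filter_upwards with x
    by_cases hx : x ∈ Ω'
    · simp only [indicator_of_mem hx]
      rw [Real.norm_eq_abs, abs_of_nonneg (Real.rpow_nonneg (hv0 x) s)]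
      exact Real.rpow_le_one (hv0 x) (hv1 x) hs0.le
    · simp [indicator_of_notMem hx]
  have hI : 0 < I := by
    rw [hIdef, integral_pos_iff_support_of_nonneg_ae ?_ hIV]
    · refine lt_of_lt_of_le hΩ'pos (measure_mono ?_)
      intro x hx
      simp only [Function.mem_support, indicator_of_mem hx]
      exact (hvpos x hx).ne'
    · filter_upwards with x
      exact indicator_nonneg (fun y _ => hv0 y) x
  have hJ : 0 < J := by
    rw [hJdef, integral_pos_iff_support_of_nonneg_ae ?_ hJV]
    · refine lt_of_lt_of_le hΩ'pos (measure_mono ?_)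
      intro x hx
      simp only [Function.mem_support, indicator_of_mem hx]
      exact (Real.rpow_pos_of_pos (hvpos x hx) s).ne'
    · filter_upwards with x
      exact indicator_nonneg (fun y _ => Real.rpow_nonneg (hv0 y) s) x
  set S : ℝ := J ^ (1/s) with hSdef
  have hS : 0 < S := Real.rpow_pos_of_pos hJ _
  -- integrability of e * g and lower bound
  have hr1 : (1:ℝ≥0∞) ≤ r := by
    rw [← ENNReal.inv_le_one]
    calc r⁻¹ ≤ (ENNReal.ofReal s)⁻¹ + r⁻¹ := le_add_self
    _ = 1 := hr
  have hηint : Integrable η μ := hη.integrable hr1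
  have heint : Integrable e μ := hηint.congr hee
  have hInd2 : Integrable (Ω'.indicator (fun x => |e x| * v x)) μ := by
    refine heint.abs.mono' ((hem.abs.mul hvm).indicator hΩ'm).aestronglyMeasurable ?_
    filter_upwards with x
    by_cases hx : x ∈ Ω'
    · simp only [indicator_of_mem hx]
      rw [Real.norm_eq_abs, abs_of_nonneg (mul_nonneg (abs_nonneg _) (hv0 x))]
      calc |e x| * v x ≤ |e x| * 1 := mul_le_mul_of_nonneg_left (hv1 x) (abs_nonneg _)
      _ = |e x| := mul_one _
    · simp [indicator_of_notMem hx, abs_nonneg]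
  have hegint : Integrable (fun x => e x * g x) μ := by
    refine hInd2.congr ?_
    filter_upwards with x
    exact (heg x).symm
  have hlow : ρ * I ≤ ∫ x, e x * g x ∂μ := by
    have h1 : ∫ x, e x * g x ∂μ = ∫ x, Ω'.indicator (fun x => |e x| * v x) x ∂μ :=
      integral_congr_ae (Filter.Eventually.of_forall heg)
    have h2 : ρ * I = ∫ x, ρ * Ω'.indicator v x ∂μ := by
      rw [integral_const_mul]
    rw [h1, h2]
    refine integral_mono (hIV.const_mul ρ) hInd2 ?_
    intro x
    by_cases hx : x ∈ Ω'
    · simp only [indicator_of_mem hx]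
      exact mul_le_mul_of_nonneg_right hx.2 (hv0 x)
    · simp [indicator_of_notMem hx]
  -- set up ε, δ, t and the test function
  set ε : ℝ := ρ * I / (2 * S) with hεdef
  have hε : 0 < ε := by positivity
  obtain ⟨δ, hδ, hkey⟩ := hsub ε hε
  set t : ℝ := min (1/2 : ℝ) (δ / S) with htdef
  have ht : 0 < t := lt_min (by norm_num) (div_pos hδ hS)
  have ht2 : t ≤ 1/2 := min_le_left _ _
  have htS : t * S ≤ δ := by
    rw [← le_div_iff₀ hS]
    exact min_le_right _ _
  set h : (Fin d → ℝ) → ℝ := fun x => t * g x with hhdef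
  -- Lnorm of h
  have habs : ∀ x, |h x| ^ s = t ^ s * Ω'.indicator (fun x => v x ^ s) x := by
    intro x
    by_cases hx : x ∈ Ω'
    · rw [hhdef]
      simp only [indicator_of_mem hx]
      rw [abs_mul, abs_of_pos ht, hg_abs x hx,
        Real.mul_rpow ht.le (hv0 x)]
    · simp [hhdef, hg_nmem x hx, indicator_of_notMem hx,
        Real.zero_rpow hs0.ne']
  have hLnorm : Lnorm μ s h = t * S := by
    rw [Lnorm]
    have : ∫ x, |h x| ^ s ∂μ = t ^ s * J := by
      rw [show (fun x => |h x| ^ s) = fun x => t ^ s * Ω'.indicator (fun x => v x ^ s) x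
        from funext habs, integral_const_mul]
    rw [this, Real.mul_rpow (Real.rpow_nonneg ht.le s) hJ.le,
      ← Real.rpow_mul ht.le, mul_one_div_cancel hs0.ne', Real.rpow_one]
  -- MemLp of h
  have hmem : MemLp h (ENNReal.ofReal s) μ := by
    refine MemLp.mono_exponent (q := ∞) ?_ le_top
    refine memLp_top_of_bound ((hgm.const_mul t).aestronglyMeasurable) t ?_
    filter_upwards with x
    rw [hhdef]
    simp only [Real.norm_eq_abs, abs_mul, abs_of_pos ht]
    by_cases hx : x ∈ Ω'
    · rw [hg_abs x hx]
      calc t * v x ≤ t * 1 := mul_le_mul_of_nonneg_left (hv1 x) ht.le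
      _ = t := mul_one _
    · simp [hg_nmem x hx, ht.le]
  -- apply the subdifferential inequality
  have hineq := hkey h hmem (by rw [hLnorm]; positivity) (by rw [hLnorm]; exact htS)
  -- the measure of the support does not change
  have hsupp : μ {x | ubar x + h x ≠ 0} = μ {x | ubar x ≠ 0} := by
    have e2 : {x | u x + h x ≠ 0} = {x | u x ≠ 0} := by
      ext x
      by_cases hx : x ∈ Ω'
      · have hxu : u x ≠ 0 := hx.1
        have hlt : |h x| < |u x| := by
          rw [hhdef]
          simp only
          rw [abs_mul, abs_of_pos ht, hg_abs x hx]
          calc t * v x ≤ (1/2) * |u x| :=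
            mul_le_mul ht2 (hvu x) (hv0 x) (by norm_num)
          _ < |u x| := by
            have := abs_pos.2 hxu
            linarith
        simp only [mem_setOf_eq]
        constructor
        · intro _; exact hxu
        · intro _ hzero
          have hhx : h x = -u x := by linarith
          rw [hhx, abs_neg] at hlt
          exact lt_irrefl _ hlt
      · simp [hhdef, hg_nmem x hx]
    have e1 : {x | ubar x + h x ≠ 0} =ᵐ[μ] {x | u x + h x ≠ 0} := by
      rw [Filter.eventuallyEq_set]
      filter_upwards [huu] with x hx
      simp [hx]
    have e3 : ({x | u x ≠ 0} : Set (Fin d → ℝ)) =ᵐ[μ] {x | ubar x ≠ 0} := by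
      rw [Filter.eventuallyEq_set]
      filter_upwards [huu] with x hx
      simp [hx]
    rw [measure_congr e1, e2, measure_congr e3]
  -- compute the integral term
  have hint : ∫ x, η x * h x ∂μ = t * ∫ x, e x * g x ∂μ := by
    have h1 : ∫ x, η x * h x ∂μ = ∫ x, t * (e x * g x) ∂μ := by
      refine integral_congr_ae ?_
      filter_upwards [hee] with x hx
      rw [hhdef, hx]; ring
    rw [h1, integral_const_mul]
  -- conclude
  rw [hLnorm] at hineq
  simp only [hsupp, hint] at hineq
  have hfinal : t * (ρ * I) ≤ ε * (t * S) := by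
    have : -(t * ∫ x, e x * g x ∂μ) ≥ -ε * (t * S) := by linarith [hineq]
    have h2 : t * ∫ x, e x * g x ∂μ ≤ ε * (t * S) := by linarith [this]
    calc t * (ρ * I) ≤ t * ∫ x, e x * g x ∂μ :=
      mul_le_mul_of_nonneg_left hlow ht.le
    _ ≤ ε * (t * S) := h2
  have hεS : ε * S = ρ * I / 2 := by
    rw [hεdef]
    field_simp
  have : ρ * I ≤ ρ * I / 2 := by
    have h3 : t * (ρ * I) ≤ t * (ρ * I / 2) := by
      calc t * (ρ * I) ≤ ε * (t * S) := hfinal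
      _ = t * (ε * S) := by ring
      _ = t * (ρ * I / 2) := by rw [hεS]
    exact le_of_mul_le_mul_left h3 ht
  nlinarith [mul_pos hρ hI]
end

section
/- Let Ω ⊂ ℝ^d be measurable with finite positive measure, s ∈ (1,∞) with conjugate exponent r, and q_{s,0}(u) = λ({u ≠ 0}) on L^s(Ω). For ū ∈ L^s(Ω), the Fréchet subdifferential of q_{s,0} at ū equals {η ∈ L^r(Ω) : η = 0 a.e. on {ū ≠ 0}} if ū is an s-SD function, and is empty otherwise. -/
open MeasureTheory Real Filter Topology Set
open scoped ENNReal

section helpers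
variable {X : Type*} [MeasurableSpace X] {μ : Measure X} {s r : ℝ} {u : X → ℝ}

lemma Lnorm_nonneg_s13 : 0 ≤ Lnorm μ s u :=
  Real.rpow_nonneg (integral_nonneg fun _ => Real.rpow_nonneg (abs_nonneg _) _) _

lemma Lnorm_rpow (hs : s ≠ 0) : (Lnorm μ s u) ^ s = ∫ x, |u x| ^ s ∂μ := by
  rw [Lnorm, ← Real.rpow_mul (integral_nonneg fun _ => Real.rpow_nonneg (abs_nonneg _) _),
    one_div_mul_cancel hs, Real.rpow_one]

lemma integrable_abs_rpow (hs : 0 < s) (hu : MemLp u (ENNReal.ofReal s) μ) :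
    Integrable (fun x => |u x| ^ s) μ := by
  have := hu.integrable_norm_rpow (by simpa [ENNReal.ofReal_eq_zero] using hs)
    ENNReal.ofReal_ne_top
  simpa [ENNReal.toReal_ofReal hs.le, Real.norm_eq_abs] using this

lemma aux_vanish [IsFiniteMeasure μ] (hsr : s.HolderConjugate r) {ubar η : X → ℝ}
    (hubar : AEStronglyMeasurable ubar μ) (hη : MemLp η (ENNReal.ofReal r) μ)
    (hsub : InFSub μ s (fun u => (μ {x | u x ≠ 0}).toReal) ubar η) :
    ∀ᵐ x ∂μ, ubar x ≠ 0 → η x = 0 := by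
  have hs0 : s ≠ 0 := hsr.ne_zero
  have hspos : (0:ℝ) < s := hsr.pos
  have hr0 : (0:ℝ) < r := hsr.symm.pos
  have hrs : (r - 1) * s = r := hsr.symm.sub_one_mul_conj
  have hr1 : r - 1 = r / s := by rw [eq_div_iff hs0]; exact hrs
  -- measurable representatives
  set u' := hubar.mk ubar with hu'def
  have hu'meas : Measurable u' := hubar.stronglyMeasurable_mk.measurable
  have hu' : ubar =ᵐ[μ] u' := hubar.ae_eq_mk
  set η' := hη.1.mk η with hη'def
  have hη'meas : Measurable η' := hη.1.stronglyMeasurable_mk.measurable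
  have hηη' : η =ᵐ[μ] η' := hη.1.ae_eq_mk
  have hη'mem : MemLp η' (ENNReal.ofReal r) μ := hη.ae_eq hηη'
  set g : X → ℝ := fun x => if u' x ≠ 0 then |η' x| ^ (r - 2) * η' x else 0 with hgdef
  have hS : MeasurableSet {x | u' x ≠ 0} :=
    (hu'meas (measurableSet_singleton 0)).compl
  have hgmeas : Measurable g := by
    apply Measurable.ite hS _ measurable_const
    exact ((hη'meas.abs.pow_const _).mul hη'meas)
  have hgabs : ∀ x, |g x| = if u' x ≠ 0 then |η' x| ^ (r - 1) else 0 := by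
    intro x
    by_cases hx : u' x ≠ 0
    · rw [hgdef]; simp only [if_pos hx]
      rw [abs_mul, abs_of_nonneg (Real.rpow_nonneg (abs_nonneg _) _)]
      by_cases hz : η' x = 0
      · simp [hz, Real.zero_rpow (by linarith [hsr.symm.lt] : r - 1 ≠ 0)]
      · have : |η' x| ≠ 0 := by simpa using hz
        rw [← Real.rpow_add_one this (r - 2)]
        congr 1; ring
    · rw [hgdef]; simp [hx]
  have hgmul : ∀ x, η' x * g x = if u' x ≠ 0 then |η' x| ^ r else 0 := by
    intro x
    by_cases hx : u' x ≠ 0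
    · rw [hgdef]; simp only [if_pos hx]
      by_cases hz : η' x = 0
      · simp [hz, Real.zero_rpow hr0.ne']
      · have habs : |η' x| ≠ 0 := by simpa using hz
        have : η' x * (|η' x| ^ (r - 2) * η' x) = |η' x| ^ (r - 2) * |η' x| * |η' x| := by
          rw [mul_assoc, abs_mul_abs_self]; ring
        rw [this, ← Real.rpow_add_one habs (r - 2)]
        rw [← Real.rpow_add_one habs (r - 2 + 1)]
        congr 1; ring
    · rw [hgdef]; simp [hx]
  set f : X → ℝ := fun x => if u' x ≠ 0 then |η' x| ^ r else 0 with hfdef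
  have hf_nonneg : ∀ x, 0 ≤ f x := by
    intro x; rw [hfdef]
    by_cases hx : u' x ≠ 0 <;> simp [hx, Real.rpow_nonneg (abs_nonneg _)]
  have hηr_int : Integrable (fun x => |η' x| ^ r) μ := integrable_abs_rpow hr0 hη'mem
  have hf_int : Integrable f μ := by
    apply hηr_int.mono' ((hη'meas.abs.pow_const r).ite hS measurable_const).aestronglyMeasurable
    filter_upwards with x
    rw [Real.norm_eq_abs, abs_of_nonneg (hf_nonneg x), hfdef]
    by_cases hx : u' x ≠ 0 <;> simp [hx, Real.rpow_nonneg (abs_nonneg _)]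
  set I := ∫ x, f x ∂μ with hIdef
  have hI0 : 0 ≤ I := integral_nonneg hf_nonneg
  -- suffices I = 0
  suffices hIz : I = 0 by
    have hfz : f =ᵐ[μ] 0 :=
      (integral_eq_zero_iff_of_nonneg hf_nonneg hf_int).mp hIz
    filter_upwards [hfz, hu', hηη'] with x hfx hux hηx hub
    have hux' : u' x ≠ 0 := by rw [← hux]; exact hub
    have : |η' x| ^ r = 0 := by
      have := hfx; rw [hfdef] at this; simpa [hux'] using this
    have : |η' x| = 0 := by
      rcases (Real.rpow_eq_zero (abs_nonneg _) (ne_of_gt hr0)).mp this with h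
      exact h
    rw [hηx]
    simpa using this
  by_contra hIne
  have hIpos : 0 < I := lt_of_le_of_ne hI0 (Ne.symm hIne)
  -- MemLp g
  have hgmem : MemLp g (ENNReal.ofReal s) μ := by
    have hq : (0:ℝ) < r / s := div_pos hr0 hspos
    have hF : MemLp (fun x => ‖η' x‖ ^ (ENNReal.ofReal (r / s)).toReal)
        (ENNReal.ofReal r / ENNReal.ofReal (r / s)) μ := hη'mem.norm_rpow_div _
    rw [ENNReal.toReal_ofReal hq.le, ← ENNReal.ofReal_div_of_pos hq] at hF
    have hds : r / (r / s) = s := by field_simp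
    rw [hds] at hF
    apply hF.of_le hgmeas.aestronglyMeasurable
    filter_upwards with x
    rw [Real.norm_eq_abs, Real.norm_eq_abs, hgabs x, ← hr1]
    by_cases hx : u' x ≠ 0
    · simp only [if_pos hx]; exact le_abs_self _
    · simp only [if_neg hx]; positivity
  -- Lnorm of g
  have hgs : ∀ x, |g x| ^ s = f x := by
    intro x
    rw [hgabs x, hfdef]
    by_cases hx : u' x ≠ 0
    · simp only [if_pos hx]
      rw [← Real.rpow_mul (abs_nonneg _), hrs]
    · simp only [if_neg hx]
      exact Real.zero_rpow hs0
  have hgsint : ∫ x, |g x| ^ s ∂μ = I := integral_congr_ae (Eventually.of_forall hgs)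
  have hLg : Lnorm μ s g = I ^ (1 / s) := by rw [Lnorm, hgsint]
  have hLgpos : 0 < Lnorm μ s g := by rw [hLg]; exact Real.rpow_pos_of_pos hIpos _
  set Lg := Lnorm μ s g with hLgdef
  obtain ⟨δ, hδpos, hδ⟩ := hsub (I / (2 * Lg)) (by positivity)
  set t := δ / Lg with htdef
  have htpos : 0 < t := div_pos hδpos hLgpos
  have hmemh : MemLp (fun x => t * g x) (ENNReal.ofReal s) μ := hgmem.const_mul t
  have hLh : Lnorm μ s (fun x => t * g x) = t * Lg := by
    have e1 : ∀ x, |t * g x| ^ s = t ^ s * |g x| ^ s := fun x => by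
      rw [abs_mul, abs_of_pos htpos, Real.mul_rpow htpos.le (abs_nonneg _)]
    rw [hLgdef, Lnorm, Lnorm]
    simp only [e1]
    rw [integral_const_mul, Real.mul_rpow (Real.rpow_nonneg htpos.le _)
      (integral_nonneg fun _ => Real.rpow_nonneg (abs_nonneg _) _), one_div,
      Real.rpow_rpow_inv htpos.le hs0]
  have h1 : 0 < Lnorm μ s (fun x => t * g x) := by
    rw [hLh]; exact mul_pos htpos hLgpos
  have h2 : Lnorm μ s (fun x => t * g x) ≤ δ := by
    rw [hLh, htdef, div_mul_cancel₀ _ (ne_of_gt hLgpos)]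
  have key := hδ _ hmemh h1 h2
  rw [hLh] at key
  have hq : (μ {x | ubar x + t * g x ≠ 0}).toReal ≤ (μ {x | ubar x ≠ 0}).toReal := by
    apply ENNReal.toReal_mono (measure_ne_top μ _)
    apply measure_mono_ae
    filter_upwards [hu'] with x hx hmem
    intro h0
    apply hmem
    have hux : u' x = 0 := by rw [← hx]; exact h0
    rw [h0, hgdef]; simp [hux]
  have hint : ∫ x, η x * (t * g x) ∂μ = t * I := by
    have e1 : ∀ x, η x * (t * g x) = t * (η x * g x) := fun x => by ring
    simp only [e1]
    rw [integral_const_mul]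
    congr 1
    apply integral_congr_ae
    filter_upwards [hηη'] with x hx
    rw [hx]; exact hgmul x
  rw [hint] at key
  have hc : -(I / (2 * Lg)) * (t * Lg) = -(t * I / 2) := by
    field_simp
  rw [hc] at key
  have := mul_pos htpos hIpos
  linarith [key, hq]
lemma aux_isSD [IsFiniteMeasure μ] (hsr : s.HolderConjugate r) {ubar η : X → ℝ}
    (hubar : MemLp ubar (ENNReal.ofReal s) μ) (hη : MemLp η (ENNReal.ofReal r) μ)
    (hsub : InFSub μ s (fun u => (μ {x | u x ≠ 0}).toReal) ubar η) :
    IsSD μ s ubar := by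
  have hs0 : s ≠ 0 := hsr.ne_zero
  have hvan : ∀ᵐ x ∂μ, ubar x ≠ 0 → η x = 0 := aux_vanish hsr hubar.1 hη hsub
  have habs_int : Integrable (fun x => |ubar x| ^ s) μ := integrable_abs_rpow hsr.pos hubar
  intro Ωk hmeas hsubk hpos htend
  set T : ℕ → ℝ := fun k => ∫ x in Ωk k, |ubar x| ^ s ∂μ with hTdef
  have hLN : ∀ k, Lnorm (μ.restrict (Ωk k)) s ubar = T k ^ (1 / s) := fun k => rfl
  have hT_pos : ∀ k, 0 < T k := by
    intro k
    have hμk : 0 < μ (Ωk k) :=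
      (ENNReal.toReal_pos_iff.mp (hpos k)).1
    rw [hTdef]
    rw [setIntegral_pos_iff_support_of_nonneg_ae
      (Eventually.of_forall fun x => Real.rpow_nonneg (abs_nonneg _) _)
      habs_int.integrableOn]
    have hsup : Ωk k ⊆ Function.support fun x => |ubar x| ^ s := by
      intro x hx
      have : ubar x ≠ 0 := hsubk k hx
      have : 0 < |ubar x| := abs_pos.mpr this
      exact (Real.rpow_pos_of_pos this s).ne'
    rwa [Set.inter_eq_self_of_subset_right hsup]
  have hN_pos : ∀ k, 0 < T k ^ (1 / s) := fun k => Real.rpow_pos_of_pos (hT_pos k) _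
  have hT_tend : Tendsto T atTop (𝓝 0) := by
    apply habs_int.tendsto_setIntegral_nhds_zero
    have h1 : Tendsto (fun k => ENNReal.ofReal ((μ (Ωk k)).toReal)) atTop
        (𝓝 (ENNReal.ofReal 0)) := ENNReal.tendsto_ofReal htend
    simpa [Function.comp_def, ENNReal.ofReal_toReal (measure_ne_top μ _)] using h1
  have hN_tend : Tendsto (fun k => T k ^ (1 / s)) atTop (𝓝 0) := by
    have := hT_tend.rpow_const (p := 1 / s) (Or.inr (one_div_nonneg.mpr hsr.nonneg))
    rwa [Real.zero_rpow (one_div_ne_zero hs0)] at this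
  have hC : ∀ ε > (0:ℝ), ∀ᶠ k in atTop, (μ (Ωk k)).toReal ≤ ε * T k ^ (1 / s) := by
    intro ε hε
    obtain ⟨δ, hδpos, hδ⟩ := hsub ε hε
    have hev : ∀ᶠ k in atTop, T k ^ (1 / s) < δ :=
      hN_tend.eventually_lt_const hδpos
    filter_upwards [hev] with k hk
    set h : X → ℝ := (Ωk k).indicator (fun x => -ubar x) with hhdef
    have hmemh : MemLp h (ENNReal.ofReal s) μ := hubar.neg.indicator (hmeas k)
    have habs : ∀ x, |h x| ^ s = (Ωk k).indicator (fun x => |ubar x| ^ s) x := by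
      intro x
      by_cases hx : x ∈ Ωk k
      · rw [hhdef]; simp [Set.indicator_of_mem hx]
      · rw [hhdef]
        simp [Set.indicator_of_notMem hx, Real.zero_rpow hs0]
    have hLh : Lnorm μ s h = T k ^ (1 / s) := by
      rw [Lnorm]
      congr 1
      rw [hTdef]
      simp only [habs]
      exact integral_indicator (hmeas k)
    have key : (μ {x | ubar x + h x ≠ 0}).toReal - (μ {x | ubar x ≠ 0}).toReal -
        ∫ x, η x * h x ∂μ ≥ -ε * Lnorm μ s h :=
      hδ h hmemh (by rw [hLh]; exact hN_pos k) (by rw [hLh]; exact hk.le)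
    have hseteq : {x | ubar x + h x ≠ 0} = {x | ubar x ≠ 0} \ Ωk k := by
      ext x
      by_cases hx : x ∈ Ωk k
      · simp [mem_setOf_eq, hhdef, Set.indicator_of_mem hx, hx]
      · simp [mem_setOf_eq, hhdef, Set.indicator_of_notMem hx, hx]
    have hintzero : ∫ x, η x * h x ∂μ = 0 := by
      apply integral_eq_zero_of_ae
      filter_upwards [hvan] with x hx
      by_cases hxm : x ∈ Ωk k
      · have : η x = 0 := hx (hsubk k hxm)
        simp [this]
      · rw [hhdef]; simp [Set.indicator_of_notMem hxm]
    rw [hLh, hintzero, hseteq] at key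
    rw [measure_diff (hsubk k) (hmeas k).nullMeasurableSet (measure_ne_top μ _)] at key
    rw [ENNReal.toReal_sub_of_le (measure_mono (hsubk k)) (measure_ne_top μ _)] at key
    linarith [key]
  rw [Metric.tendsto_atTop]
  intro ε hε
  obtain ⟨K, hK⟩ := eventually_atTop.mp (hC (ε / 2) (by linarith))
  refine ⟨K, fun k hk => ?_⟩
  have h1 := hK k hk
  have h2 : (μ (Ωk k)).toReal / Lnorm (μ.restrict (Ωk k)) s ubar ≤ ε / 2 := by
    rw [hLN k, div_le_iff₀ (hN_pos k)]
    linarith [h1]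
  have h3 : 0 ≤ (μ (Ωk k)).toReal / Lnorm (μ.restrict (Ωk k)) s ubar := by
    rw [hLN k]
    exact div_nonneg ENNReal.toReal_nonneg (hN_pos k).le
  rw [Real.dist_eq]
  rw [abs_of_nonneg (by simpa using h3)]
  simp only [sub_zero]
  linarith [h2]
lemma aux_insub [IsFiniteMeasure μ] (hsr : s.HolderConjugate r) {ubar η : X → ℝ}
    (hubar : MemLp ubar (ENNReal.ofReal s) μ) (hη : MemLp η (ENNReal.ofReal r) μ)
    (hSD : IsSD μ s ubar) (hvan : ∀ᵐ x ∂μ, ubar x ≠ 0 → η x = 0) :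
    InFSub μ s (fun u => (μ {x | u x ≠ 0}).toReal) ubar η := by
  have hs0 : s ≠ 0 := hsr.ne_zero
  have hspos : (0:ℝ) < s := hsr.pos
  have hr0 : (0:ℝ) < r := hsr.symm.pos
  set u' := hubar.1.mk ubar with hu'def
  have hu'meas : Measurable u' := hubar.1.stronglyMeasurable_mk.measurable
  have hu' : ubar =ᵐ[μ] u' := hubar.1.ae_eq_mk
  have hu'mem : MemLp u' (ENNReal.ofReal s) μ := hubar.ae_eq hu'
  set η' := hη.1.mk η with hη'def
  have hη'meas : Measurable η' := hη.1.stronglyMeasurable_mk.measurable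
  have hηη' : η =ᵐ[μ] η' := hη.1.ae_eq_mk
  have hη'mem : MemLp η' (ENNReal.ofReal r) μ := hη.ae_eq hηη'
  have hu'int : Integrable (fun x => |u' x| ^ s) μ := integrable_abs_rpow hspos hu'mem
  have hηint : Integrable (fun x => |η x| ^ r) μ := integrable_abs_rpow hr0 hη
  set S := {x | u' x ≠ 0} with hSdef
  have hSmeas : MeasurableSet S := (hu'meas (measurableSet_singleton 0)).compl
  -- step 1: ε-δ form of the s-SD property, for the measurable representative
  have claim1 : ∀ ε' > (0:ℝ), ∃ δ₁ > (0:ℝ), ∀ A : Set X, MeasurableSet A → A ⊆ S →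
      (∫ x in A, |u' x| ^ s ∂μ) ≤ δ₁ →
      (μ A).toReal ≤ ε' * (∫ x in A, |u' x| ^ s ∂μ) ^ (1 / s) := by
    obtain ⟨G₀, hG₀meas, hG₀null, hG₀⟩ : ∃ G₀ : Set X, MeasurableSet G₀ ∧ μ G₀ᶜ = 0 ∧
        ∀ x ∈ G₀, ubar x = u' x := by
      have hnull : μ {x | ¬(ubar x = u' x)} = 0 := by rw [← ae_iff]; exact hu'
      obtain ⟨N, hsubN, hNmeas, hNnull⟩ := exists_measurable_superset_of_null hnull
      refine ⟨Nᶜ, hNmeas.compl, by rwa [compl_compl], fun x hx => ?_⟩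
      by_contra hcc
      exact hx (hsubN hcc)
    intro ε' hε'
    by_contra hcon
    push_neg at hcon
    have hex : ∀ k : ℕ, ∃ A : Set X, MeasurableSet A ∧ A ⊆ S ∧
        (∫ x in A, |u' x| ^ s ∂μ) ≤ 1 / (k + 1) ∧
        ε' * (∫ x in A, |u' x| ^ s ∂μ) ^ (1 / s) < (μ A).toReal := by
      intro k
      obtain ⟨A, h1, h2, h3, h4⟩ := hcon (1 / (k + 1)) (by positivity)
      exact ⟨A, h1, h2, h3, h4⟩
    choose A hAm hAsub hAint hAgt using hex
    have hTA0 : ∀ k, 0 ≤ ∫ x in A k, |u' x| ^ s ∂μ :=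
      fun k => integral_nonneg fun _ => Real.rpow_nonneg (abs_nonneg _) _
    have hμApos : ∀ k, 0 < (μ (A k)).toReal := fun k =>
      lt_of_le_of_lt (mul_nonneg hε'.le (Real.rpow_nonneg (hTA0 k) _)) (hAgt k)
    have hTA_pos : ∀ k, 0 < ∫ x in A k, |u' x| ^ s ∂μ := by
      intro k
      have hμk : 0 < μ (A k) := (ENNReal.toReal_pos_iff.mp (hμApos k)).1
      rw [setIntegral_pos_iff_support_of_nonneg_ae
        (Eventually.of_forall fun x => Real.rpow_nonneg (abs_nonneg _) _)
        hu'int.integrableOn]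
      have hsup : A k ⊆ Function.support fun x => |u' x| ^ s := by
        intro x hx
        have h1 : u' x ≠ 0 := hAsub k hx
        exact (Real.rpow_pos_of_pos (abs_pos.mpr h1) s).ne'
      rwa [Set.inter_eq_self_of_subset_right hsup]
    -- μ (A k) → 0
    have hμA0 : Tendsto (fun k => (μ (A k)).toReal) atTop (𝓝 0) := by
      rw [Metric.tendsto_atTop]
      intro ρ hρ
      set Tn : ℕ → Set X := fun n => {x | u' x ≠ 0 ∧ |u' x| < 1 / (n + 1)} with hTndef
      have hTnmeas : ∀ n, MeasurableSet (Tn n) := fun n =>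
        ((hu'meas (measurableSet_singleton 0)).compl).inter
          (hu'meas.abs measurableSet_Iio)
      have hTanti : Antitone Tn := by
        intro n m hnm x hx
        refine ⟨hx.1, lt_of_lt_of_le hx.2 ?_⟩
        gcongr
      have hTempty : ⋂ n, Tn n = ∅ := by
        rw [Set.eq_empty_iff_forall_notMem]
        intro x hx
        rw [Set.mem_iInter] at hx
        have h0 : 0 < |u' x| := abs_pos.mpr (hx 0).1
        obtain ⟨n, hn⟩ := exists_nat_one_div_lt h0
        exact absurd (hx n).2 (not_lt.mpr hn.le)
      have htendT := tendsto_measure_iInter_atTop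
        (fun n => (hTnmeas n).nullMeasurableSet) hTanti ⟨0, measure_ne_top μ _⟩
      rw [hTempty, measure_empty] at htendT
      obtain ⟨n0, hn0⟩ := (htendT.eventually_lt_const
        (ENNReal.ofReal_pos.mpr (show (0:ℝ) < ρ / 2 by linarith))).exists
      set t : ℝ := 1 / ((n0 : ℝ) + 1) with htdef
      have ht : 0 < t := by positivity
      have hts : 0 < t ^ s := Real.rpow_pos_of_pos ht s
      obtain ⟨K, hK⟩ := eventually_atTop.mp
        (tendsto_one_div_add_atTop_nhds_zero_nat.eventually_lt_const
          (mul_pos (show (0:ℝ) < ρ / 2 by linarith) hts))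
      refine ⟨K, fun k hk => ?_⟩
      rw [Real.dist_eq, sub_zero, abs_of_nonneg ENNReal.toReal_nonneg]
      set C : Set X := {x | t ≤ |u' x|} with hCdef
      have hCmeas : MeasurableSet C := hu'meas.abs measurableSet_Ici
      have hsplit : A k ⊆ Tn n0 ∪ (A k ∩ C) := by
        intro x hx
        by_cases hlt : |u' x| < t
        · exact Or.inl ⟨hAsub k hx, hlt⟩
        · exact Or.inr ⟨hx, not_lt.mp hlt⟩
      have h1 : (μ (A k)).toReal ≤ (μ (Tn n0)).toReal + (μ (A k ∩ C)).toReal := by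
        rw [← ENNReal.toReal_add (measure_ne_top μ _) (measure_ne_top μ _)]
        exact ENNReal.toReal_mono
          (ENNReal.add_ne_top.mpr ⟨measure_ne_top μ _, measure_ne_top μ _⟩)
          (le_trans (measure_mono hsplit) (measure_union_le _ _))
      have h2 : (μ (Tn n0)).toReal < ρ / 2 := ENNReal.toReal_lt_of_lt_ofReal hn0
      have h3 : (μ (A k ∩ C)).toReal ≤ (1 / (k + 1)) / t ^ s := by
        have hcheb : t ^ s * (μ (A k ∩ C)).toReal ≤ ∫ x in A k ∩ C, |u' x| ^ s ∂μ := by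
          rw [mul_comm, ← smul_eq_mul, ← measureReal_def]
          apply setIntegral_ge_of_const_le ((hAm k).inter hCmeas) (measure_ne_top μ _)
          · intro x hx
            exact Real.rpow_le_rpow ht.le hx.2 hspos.le
          · exact hu'int.integrableOn
        have hmono : ∫ x in A k ∩ C, |u' x| ^ s ∂μ ≤ ∫ x in A k, |u' x| ^ s ∂μ :=
          setIntegral_mono_set hu'int.integrableOn
            (Eventually.of_forall fun x => Real.rpow_nonneg (abs_nonneg _) _)
            (HasSubset.Subset.eventuallyLE Set.inter_subset_left)
        rw [le_div_iff₀ hts]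
        calc (μ (A k ∩ C)).toReal * t ^ s = t ^ s * (μ (A k ∩ C)).toReal := by ring
          _ ≤ ∫ x in A k ∩ C, |u' x| ^ s ∂μ := hcheb
          _ ≤ ∫ x in A k, |u' x| ^ s ∂μ := hmono
          _ ≤ 1 / (k + 1) := hAint k
      have h4 : (1 / ((k:ℝ) + 1)) / t ^ s < ρ / 2 := by
        rw [div_lt_iff₀ hts]
        exact hK k hk
      linarith
    -- apply the s-SD property to A k ∩ G₀
    have hμA' : ∀ k, μ (A k ∩ G₀) = μ (A k) := fun k => measure_inter_conull hG₀null
    have hLnormA' : ∀ k, Lnorm (μ.restrict (A k ∩ G₀)) s ubar =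
        (∫ x in A k, |u' x| ^ s ∂μ) ^ (1 / s) := by
      intro k
      rw [Lnorm]
      congr 1
      have e1 : ∫ x in A k ∩ G₀, |ubar x| ^ s ∂μ = ∫ x in A k ∩ G₀, |u' x| ^ s ∂μ := by
        apply integral_congr_ae
        filter_upwards [ae_restrict_of_ae hu'] with x hx
        rw [hx]
      have e2 : (A k ∩ G₀ : Set X) =ᵐ[μ] (A k : Set X) := by
        rw [ae_eq_set]
        constructor
        · rw [Set.diff_eq_empty.mpr Set.inter_subset_left, measure_empty]
        · have hsub2 : A k \ (A k ∩ G₀) ⊆ G₀ᶜ := fun x hx hGx => hx.2 ⟨hx.1, hGx⟩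
          exact measure_mono_null hsub2 hG₀null
      rw [e1, setIntegral_congr_set e2]
    have happ := hSD (fun k => A k ∩ G₀) (fun k => (hAm k).inter hG₀meas)
      (fun k x hx => by
        have h1 : u' x ≠ 0 := hAsub k hx.1
        have h2 : ubar x = u' x := hG₀ x hx.2
        show ubar x ≠ 0
        rw [h2]; exact h1)
      (fun k => by rw [hμA']; exact hμApos k)
      (by
        have : (fun k => (μ (A k ∩ G₀)).toReal) = fun k => (μ (A k)).toReal := by
          funext k; rw [hμA']
        rw [this]; exact hμA0)
    obtain ⟨k, hklt⟩ := (happ.eventually_lt_const hε').exists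
    have hratio : ε' < (μ (A k ∩ G₀)).toReal / Lnorm (μ.restrict (A k ∩ G₀)) s ubar := by
      rw [hμA', hLnormA']
      rw [lt_div_iff₀ (Real.rpow_pos_of_pos (hTA_pos k) _)]
      exact hAgt k
    exact absurd hklt (not_lt.mpr hratio.le)
  -- step 2: absolute continuity of the integral of |η|^r
  have claim2 : ∀ c > (0:ℝ), ∃ δ₂ > (0:ℝ), ∀ E : Set X, MeasurableSet E →
      (μ E).toReal ≤ δ₂ → (∫ x in E, |η x| ^ r ∂μ) ≤ c := by
    intro c hc
    by_contra hcon
    push_neg at hcon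
    have hex : ∀ k : ℕ, ∃ E : Set X, MeasurableSet E ∧ (μ E).toReal ≤ 1 / (k + 1) ∧
        c < ∫ x in E, |η x| ^ r ∂μ := by
      intro k
      obtain ⟨E, h1, h2, h3⟩ := hcon (1 / (k + 1)) (by positivity)
      exact ⟨E, h1, h2, h3⟩
    choose E hEmeas hEsmall hEgt using hex
    have hμE : Tendsto (fun k => μ (E k)) atTop (𝓝 0) := by
      have hb : ∀ k : ℕ, μ (E k) ≤ ENNReal.ofReal (1 / (k + 1)) := by
        intro k
        rw [← ENNReal.ofReal_toReal (measure_ne_top μ (E k))]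
        exact ENNReal.ofReal_le_ofReal (hEsmall k)
      have h2 : Tendsto (fun k : ℕ => ENNReal.ofReal (1 / (k + 1 : ℝ))) atTop
          (𝓝 (ENNReal.ofReal 0)) :=
        ENNReal.tendsto_ofReal tendsto_one_div_add_atTop_nhds_zero_nat
      rw [ENNReal.ofReal_zero] at h2
      exact tendsto_of_tendsto_of_tendsto_of_le_of_le tendsto_const_nhds h2
        (fun k => zero_le) hb
    have := hηint.tendsto_setIntegral_nhds_zero hμE
    have hev := this.eventually_lt_const hc
    rcases hev.exists with ⟨k, hk⟩
    exact absurd (hEgt k) (not_lt.mpr hk.le)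
  -- main argument
  intro ε hε
  obtain ⟨δ₁, hδ₁pos, hδ₁⟩ := claim1 (ε / 2) (by linarith)
  obtain ⟨δ₂, hδ₂pos, hδ₂⟩ := claim2 ((ε / 2) ^ r) (Real.rpow_pos_of_pos (by linarith) r)
  set K : ℝ := (∫ x, |η x| ^ r ∂μ) ^ (1 / r) + 1 with hKdef
  have hK1 : 1 ≤ K := le_add_of_nonneg_left (Real.rpow_nonneg
    (integral_nonneg fun _ => Real.rpow_nonneg (abs_nonneg _) _) _)
  have hKpos : 0 < K := lt_of_lt_of_le one_pos hK1
  refine ⟨min (δ₁ ^ (1 / s)) (δ₂ / K), lt_min (Real.rpow_pos_of_pos hδ₁pos _)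
    (div_pos hδ₂pos hKpos), fun h hmemh hLpos hLle => ?_⟩
  set L := Lnorm μ s h with hLdef
  set h' := hmemh.1.mk h with hh'def
  have hh'meas : Measurable h' := hmemh.1.stronglyMeasurable_mk.measurable
  have hh' : h =ᵐ[μ] h' := hmemh.1.ae_eq_mk
  have hh'mem : MemLp h' (ENNReal.ofReal s) μ := hmemh.ae_eq hh'
  have hh'int : Integrable (fun x => |h' x| ^ s) μ := integrable_abs_rpow hspos hh'mem
  -- a good measurable set where everything behaves
  have hae : ∀ᵐ x ∂μ, ubar x = u' x ∧ η x = η' x ∧ h x = h' x ∧ (ubar x ≠ 0 → η x = 0) := by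
    filter_upwards [hu', hηη', hh', hvan] with x h1 h2 h3 h4
    exact ⟨h1, h2, h3, h4⟩
  obtain ⟨G, hGmeas, hGnull, hG⟩ : ∃ G : Set X, MeasurableSet G ∧ μ Gᶜ = 0 ∧
      ∀ x ∈ G, ubar x = u' x ∧ η x = η' x ∧ h x = h' x ∧ (ubar x ≠ 0 → η x = 0) := by
    have hnull : μ {x | ¬(ubar x = u' x ∧ η x = η' x ∧ h x = h' x ∧
        (ubar x ≠ 0 → η x = 0))} = 0 := by
      rw [← ae_iff]; exact hae
    obtain ⟨N, hsubN, hNmeas, hNnull⟩ := exists_measurable_superset_of_null hnull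
    refine ⟨Nᶜ, hNmeas.compl, by rwa [compl_compl], fun x hx => ?_⟩
    by_contra hcon
    exact hx (hsubN hcon)
  have hGae : ∀ᵐ x ∂μ, x ∈ G := by
    rw [ae_iff]
    exact hGnull
  set A := {x | u' x ≠ 0 ∧ u' x + h' x = 0} with hAdef
  set B := {x | u' x = 0 ∧ h' x ≠ 0} with hBdef
  have hAmeas : MeasurableSet A := by
    apply MeasurableSet.inter
    · exact (hu'meas (measurableSet_singleton 0)).compl
    · exact (hu'meas.add hh'meas) (measurableSet_singleton 0)
  have hBmeas : MeasurableSet B := by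
    apply MeasurableSet.inter
    · exact hu'meas (measurableSet_singleton 0)
    · exact (hh'meas (measurableSet_singleton 0)).compl
  have hAS : A ⊆ S := fun x hx => hx.1
  -- the measure of the set where ubar + h is nonzero
  have hsub1 : ((S \ A) ∪ B) ∩ G ⊆ {x | ubar x + h x ≠ 0} := by
    rintro x ⟨hx, hxG⟩
    obtain ⟨e1, -, e3, -⟩ := hG x hxG
    rcases hx with hx | hx
    · have h1 : u' x ≠ 0 := hx.1
      have h2 : ¬(u' x ≠ 0 ∧ u' x + h' x = 0) := hx.2
      have h3 : u' x + h' x ≠ 0 := by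
        by_contra hcc
        exact h2 ⟨h1, hcc⟩
      show ubar x + h x ≠ 0
      rw [e1, e3]; exact h3
    · show ubar x + h x ≠ 0
      rw [e1, e3, hx.1, zero_add]
      exact hx.2
  have hμW : μ (S \ A) + μ B ≤ μ {x | ubar x + h x ≠ 0} := by
    calc μ (S \ A) + μ B = μ ((S \ A) ∪ B) := by
          rw [measure_union _ hBmeas]
          exact disjoint_left.mpr fun x hx hxB => hx.1 hxB.1
      _ = μ (((S \ A) ∪ B) ∩ G) := (measure_inter_conull hGnull).symm
      _ ≤ μ {x | ubar x + h x ≠ 0} := measure_mono hsub1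
  have hμS : μ {x | ubar x ≠ 0} = μ S := by
    apply measure_congr
    rw [eventuallyEq_set]
    filter_upwards [hu'] with x hx
    simp only [mem_setOf_eq, hx, hSdef]
  have hqdiff : (μ {x | ubar x + h x ≠ 0}).toReal - (μ {x | ubar x ≠ 0}).toReal ≥
      (μ B).toReal - (μ A).toReal := by
    have h1 : (μ (S \ A)).toReal = (μ S).toReal - (μ A).toReal := by
      rw [measure_diff hAS hAmeas.nullMeasurableSet (measure_ne_top μ _),
        ENNReal.toReal_sub_of_le (measure_mono hAS) (measure_ne_top μ _)]
    have h2 : (μ (S \ A)).toReal + (μ B).toReal ≤ (μ {x | ubar x + h x ≠ 0}).toReal := by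
      rw [← ENNReal.toReal_add (measure_ne_top μ _) (measure_ne_top μ _)]
      exact ENNReal.toReal_mono (measure_ne_top μ _) hμW
    rw [hμS]
    linarith [h1, h2]
  -- the integral term
  have hint : ∫ x, η x * h x ∂μ = ∫ x in B, η' x * h' x ∂μ := by
    rw [← integral_indicator hBmeas]
    apply integral_congr_ae
    filter_upwards [hGae] with x hxG
    obtain ⟨e1, e2, e3, e4⟩ := hG x hxG
    by_cases hxB : x ∈ B
    · rw [Set.indicator_of_mem hxB, e2, e3]
    · rw [Set.indicator_of_notMem hxB]
      rw [hBdef] at hxB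
      simp only [mem_setOf_eq, not_and, not_not] at hxB
      by_cases hu0 : u' x = 0
      · have : h' x = 0 := hxB hu0
        rw [e3, this, mul_zero]
      · have : ubar x ≠ 0 := by rw [e1]; exact hu0
        rw [e4 this, zero_mul]
  set J : ℝ := (∫ x in B, |η x| ^ r ∂μ) ^ (1 / r) with hJdef
  have hJnonneg : 0 ≤ J := Real.rpow_nonneg
    (integral_nonneg fun _ => Real.rpow_nonneg (abs_nonneg _) _) _
  have hLs : ∫ x, |h' x| ^ s ∂μ = L ^ s := by
    rw [hLdef, Lnorm_rpow hs0]
    exact integral_congr_ae (by filter_upwards [hh'] with x hx; rw [hx])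
  have hB_bound : |∫ x in B, η' x * h' x ∂μ| ≤ J * L := by
    have hstep1 : |∫ x in B, η' x * h' x ∂μ| ≤ ∫ x in B, ‖η' x‖ * ‖h' x‖ ∂μ := by
      calc |∫ x in B, η' x * h' x ∂μ| = ‖∫ x in B, η' x * h' x ∂μ‖ := (Real.norm_eq_abs _).symm
        _ ≤ ∫ x in B, ‖η' x * h' x‖ ∂μ := norm_integral_le_integral_norm _
        _ = ∫ x in B, ‖η' x‖ * ‖h' x‖ ∂μ := by simp_rw [norm_mul]
    have hholder := integral_mul_norm_le_Lp_mul_Lq (μ := μ.restrict B) hsr.symm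
      (hη'mem.restrict B) (hh'mem.restrict B)
    have hfac1 : (∫ x in B, ‖η' x‖ ^ r ∂μ) ^ (1 / r) = J := by
      rw [hJdef]
      congr 1
      apply integral_congr_ae
      filter_upwards [ae_restrict_of_ae hηη'] with x hx
      rw [Real.norm_eq_abs, ← hx]
    have hfac2 : (∫ x in B, ‖h' x‖ ^ s ∂μ) ^ (1 / s) ≤ L := by
      have e1 : ∫ x in B, ‖h' x‖ ^ s ∂μ ≤ ∫ x, |h' x| ^ s ∂μ := by
        simp_rw [Real.norm_eq_abs]
        exact setIntegral_le_integral hh'int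
          (Eventually.of_forall fun x => Real.rpow_nonneg (abs_nonneg _) _)
      calc (∫ x in B, ‖h' x‖ ^ s ∂μ) ^ (1 / s) ≤ (L ^ s) ^ (1 / s) := by
            apply Real.rpow_le_rpow
              (integral_nonneg fun _ => Real.rpow_nonneg (norm_nonneg _) _)
              (by rw [← hLs]; exact e1) (by positivity)
        _ = L := by
            rw [← Real.rpow_mul Lnorm_nonneg_s13, mul_one_div_cancel hs0, Real.rpow_one]
    calc |∫ x in B, η' x * h' x ∂μ| ≤ ∫ x in B, ‖η' x‖ * ‖h' x‖ ∂μ := hstep1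
      _ ≤ (∫ x in B, ‖η' x‖ ^ r ∂μ) ^ (1 / r) * (∫ x in B, ‖h' x‖ ^ s ∂μ) ^ (1 / s) := hholder
      _ ≤ J * L := by
          rw [hfac1]
          exact mul_le_mul_of_nonneg_left hfac2 hJnonneg
  -- bound on μ A
  have hAbound : (μ A).toReal ≤ (ε / 2) * L := by
    have hAint : ∫ x in A, |u' x| ^ s ∂μ ≤ L ^ s := by
      have e1 : ∫ x in A, |u' x| ^ s ∂μ = ∫ x in A, |h' x| ^ s ∂μ := by
        apply setIntegral_congr_fun hAmeas
        intro x hx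
        have hval : u' x = -h' x := by
          have := hx.2; linarith
        show |u' x| ^ s = |h' x| ^ s
        rw [hval, abs_neg]
      rw [e1, ← hLs]
      exact setIntegral_le_integral hh'int
        (Eventually.of_forall fun x => Real.rpow_nonneg (abs_nonneg _) _)
    have hLsδ : L ^ s ≤ δ₁ := by
      have h1 : L ≤ δ₁ ^ (1 / s) := hLle.trans (min_le_left _ _)
      calc L ^ s ≤ (δ₁ ^ (1 / s)) ^ s := Real.rpow_le_rpow Lnorm_nonneg_s13 h1 hspos.le
        _ = δ₁ := by
            rw [← Real.rpow_mul hδ₁pos.le, one_div_mul_cancel hs0, Real.rpow_one]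
    have := hδ₁ A hAmeas hAS (hAint.trans hLsδ)
    calc (μ A).toReal ≤ (ε / 2) * (∫ x in A, |u' x| ^ s ∂μ) ^ (1 / s) := this
      _ ≤ (ε / 2) * (L ^ s) ^ (1 / s) := by
          apply mul_le_mul_of_nonneg_left _ (by linarith)
          exact Real.rpow_le_rpow
            (integral_nonneg fun _ => Real.rpow_nonneg (abs_nonneg _) _) hAint (by positivity)
      _ = (ε / 2) * L := by
          rw [← Real.rpow_mul Lnorm_nonneg_s13, mul_one_div_cancel hs0, Real.rpow_one]
  -- bound on μ B versus J * L
  have hBbound : (μ B).toReal - J * L ≥ -(ε / 2) * L := by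
    have hL0 : 0 ≤ L := hLpos.le
    by_cases hcase : K * L ≤ (μ B).toReal
    · have hJK : J ≤ K - 1 := by
        rw [hJdef, hKdef, add_sub_cancel_right]
        apply Real.rpow_le_rpow
          (integral_nonneg fun _ => Real.rpow_nonneg (abs_nonneg _) _)
          (setIntegral_le_integral hηint
            (Eventually.of_forall fun x => Real.rpow_nonneg (abs_nonneg _) _)) (by positivity)
      have h2 : J * L ≤ (K - 1) * L := mul_le_mul_of_nonneg_right hJK hL0
      have h3 : 0 ≤ (ε / 2) * L := by positivity
      nlinarith [hcase, h2, h3]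
    · push_neg at hcase
      have hμBδ : (μ B).toReal ≤ δ₂ := by
        have h1 : L ≤ δ₂ / K := hLle.trans (min_le_right _ _)
        have h2 : K * L ≤ δ₂ := by
          rw [← mul_div_cancel₀ δ₂ (ne_of_gt hKpos)]
          exact mul_le_mul_of_nonneg_left h1 hKpos.le
        linarith
      have hJb : J ≤ ε / 2 := by
        rw [hJdef]
        calc (∫ x in B, |η x| ^ r ∂μ) ^ (1 / r) ≤ ((ε / 2) ^ r) ^ (1 / r) :=
              Real.rpow_le_rpow
                (integral_nonneg fun _ => Real.rpow_nonneg (abs_nonneg _) _)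
                (hδ₂ B hBmeas hμBδ) (by positivity)
          _ = ε / 2 := by
              rw [← Real.rpow_mul (by linarith), mul_one_div_cancel hr0.ne', Real.rpow_one]
      have h2 : J * L ≤ (ε / 2) * L := mul_le_mul_of_nonneg_right hJb hL0
      have h3 : 0 ≤ (μ B).toReal := ENNReal.toReal_nonneg
      linarith
  -- conclusion
  have hfin : ∫ x, η x * h x ∂μ ≤ J * L := by
    rw [hint]
    exact le_trans (le_abs_self _) hB_bound
  simp only [ge_iff_le, neg_mul]
  have := hqdiff
  linarith [hAbound, hBbound, hfin, hqdiff]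

end helpers

/-- For `s ∈ (1,∞)`, the Fréchet subdifferential of `q_{s,0}(u) = λ({u ≠ 0})` at `ubar`
equals `{η ∈ L^r : η = 0 a.e. on {ubar ≠ 0}}` if `ubar` is s-SD, and is empty otherwise. -/
theorem fsub_qs0_characterization (d : ℕ) (Ω : Set (Fin d → ℝ)) (hΩ : MeasurableSet Ω)
    (h0 : 0 < volume Ω) (hfin : volume Ω < ⊤) (s r : ℝ) (hs : 1 < s)
    (hr : 1 / s + 1 / r = 1)
    (ubar : (Fin d → ℝ) → ℝ) (hubar : MemLp ubar (ENNReal.ofReal s) (volume.restrict Ω)) :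
    (IsSD (volume.restrict Ω) s ubar →
      ∀ η : (Fin d → ℝ) → ℝ,
        (MemLp η (ENNReal.ofReal r) (volume.restrict Ω) ∧
          InFSub (volume.restrict Ω) s
            (fun u => ((volume.restrict Ω) {x | u x ≠ 0}).toReal) ubar η) ↔
        (MemLp η (ENNReal.ofReal r) (volume.restrict Ω) ∧
          ∀ᵐ x ∂(volume.restrict Ω), ubar x ≠ 0 → η x = 0)) ∧
    (¬ IsSD (volume.restrict Ω) s ubar →
      ¬ ∃ η : (Fin d → ℝ) → ℝ, MemLp η (ENNReal.ofReal r) (volume.restrict Ω) ∧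
        InFSub (volume.restrict Ω) s
          (fun u => ((volume.restrict Ω) {x | u x ≠ 0}).toReal) ubar η) := by
  haveI : IsFiniteMeasure (volume.restrict Ω) :=
    ⟨by rwa [Measure.restrict_apply_univ]⟩
  have hsr : s.HolderConjugate r := Real.holderConjugate_iff.mpr ⟨hs, by rw [← one_div, ← one_div]; exact hr⟩
  constructor
  · intro hSD η
    constructor
    · rintro ⟨hmem, hsub⟩
      exact ⟨hmem, aux_vanish hsr hubar.1 hmem hsub⟩
    · rintro ⟨hmem, hvan⟩
      exact ⟨hmem, aux_insub hsr hubar hmem hSD hvan⟩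
  · rintro hnSD ⟨η, hmem, hsub⟩
    exact hnSD (aux_isSD hsr hubar hmem hsub)
end

section
/- Let Ω ⊂ ℝ^d be measurable with finite positive measure, s ∈ (1,∞) with conjugate exponent r, and q_{s,0}(u) = λ({u ≠ 0}). For every ū ∈ L^s(Ω), the limiting (Mordukhovich) subdifferential of q_{s,0} at ū equals {η ∈ L^r(Ω) : η = 0 a.e. on {ū ≠ 0}}. -/
open MeasureTheory Real Filter Topology Set
open scoped ENNReal

section Basics
variable {X : Type*} [MeasurableSpace X] {μ : Measure X} {s r : ℝ}

lemma lnorm_nonneg (u : X → ℝ) : 0 ≤ Lnorm μ s u :=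
  Real.rpow_nonneg (integral_nonneg fun x => Real.rpow_nonneg (abs_nonneg _) _) _

lemma lnorm_rpow (hs : 0 < s) (u : X → ℝ) : Lnorm μ s u ^ s = ∫ x, |u x| ^ s ∂μ := by
  rw [Lnorm, ← Real.rpow_mul (integral_nonneg fun x => Real.rpow_nonneg (abs_nonneg _) _),
    one_div, inv_mul_cancel₀ hs.ne', Real.rpow_one]

lemma lnorm_eq_eLpNorm_toReal (hs : 0 < s) {u : X → ℝ} (hu : MemLp u (ENNReal.ofReal s) μ) :
    Lnorm μ s u = (eLpNorm u (ENNReal.ofReal s) μ).toReal := by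
  rw [hu.eLpNorm_eq_integral_rpow_norm (by simpa using hs) ENNReal.ofReal_ne_top,
    ENNReal.toReal_ofReal (Real.rpow_nonneg
      (integral_nonneg fun x => Real.rpow_nonneg (norm_nonneg _) _) _)]
  simp [Lnorm, ENNReal.toReal_ofReal hs.le, Real.norm_eq_abs, one_div]

lemma lnorm_congr {u v : X → ℝ} (h : u =ᵐ[μ] v) : Lnorm μ s u = Lnorm μ s v := by
  unfold Lnorm
  congr 1
  exact integral_congr_ae (h.mono fun x hx => by simp only [hx])

lemma lnorm_indicator_const (hs : 0 < s) {S : Set X} (hS : MeasurableSet S)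
    (t : ℝ) : Lnorm μ s (S.indicator fun _ => t) = |t| * (μ S).toReal ^ (1 / s) := by
  have h1 : (fun x => |S.indicator (fun _ => t) x| ^ s) = S.indicator fun _ => |t| ^ s := by
    ext x
    by_cases hx : x ∈ S <;> simp [hx, Set.indicator_of_mem, Set.indicator_of_notMem,
      Real.zero_rpow hs.ne', abs_zero]
  rw [Lnorm, h1, integral_indicator_const _ hS, smul_eq_mul, mul_comm, measureReal_def,
    Real.mul_rpow (Real.rpow_nonneg (abs_nonneg _) _) ENNReal.toReal_nonneg,
    ← Real.rpow_mul (abs_nonneg _), mul_one_div_cancel hs.ne', Real.rpow_one]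

lemma conj_inv_add (hsr : s.HolderConjugate r) :
    1 / ENNReal.ofReal 1 = 1 / ENNReal.ofReal r + 1 / ENNReal.ofReal s := by
  rw [one_div, one_div, one_div, ← ENNReal.ofReal_inv_of_pos hsr.symm.pos,
    ← ENNReal.ofReal_inv_of_pos hsr.pos,
    ← ENNReal.ofReal_add (inv_nonneg.2 hsr.symm.nonneg) (inv_nonneg.2 hsr.nonneg)]
  have : r⁻¹ + s⁻¹ = 1 := by rw [add_comm]; exact hsr.inv_add_inv_eq_one
  rw [this, ENNReal.ofReal_one, inv_one]

lemma pairing_integrable (hsr : s.HolderConjugate r) {η h : X → ℝ}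
    (hη : MemLp η (ENNReal.ofReal r) μ) (hh : MemLp h (ENNReal.ofReal s) μ) :
    Integrable (fun x => η x * h x) μ := by
  haveI : ENNReal.HolderTriple (ENNReal.ofReal r) (ENNReal.ofReal s) (ENNReal.ofReal 1) :=
    ⟨by simpa [one_div] using (conj_inv_add hsr).symm⟩
  have := (hh.smul hη (r := ENNReal.ofReal 1))
  rw [ENNReal.ofReal_one] at this
  exact memLp_one_iff_integrable.1 this

lemma abs_pairing_le (hsr : s.HolderConjugate r) {η h : X → ℝ}
    (hη : MemLp η (ENNReal.ofReal r) μ) (hh : MemLp h (ENNReal.ofReal s) μ) :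
    |∫ x, η x * h x ∂μ| ≤ Lnorm μ r η * Lnorm μ s h := by
  have h1 : |∫ x, η x * h x ∂μ| ≤ ∫ x, ‖η x‖ * ‖h x‖ ∂μ := by
    calc |∫ x, η x * h x ∂μ| ≤ ∫ x, ‖η x * h x‖ ∂μ := by
          simpa [Real.norm_eq_abs] using norm_integral_le_integral_norm (μ := μ)
            (fun x => η x * h x)
      _ = ∫ x, ‖η x‖ * ‖h x‖ ∂μ := by simp [abs_mul, Real.norm_eq_abs]
  refine h1.trans ?_
  have h2 := integral_mul_norm_le_Lp_mul_Lq hsr.symm hη hh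
  simpa [Lnorm, Real.norm_eq_abs] using h2

end Basics
section FSub
variable {X : Type*} [MeasurableSpace X] {μ : Measure X} [IsFiniteMeasure μ] {s r : ℝ}

lemma inFSub_of_lower_bound (hsr : s.HolderConjugate r) {c : ℝ} (hc : 0 < c)
    {u η : X → ℝ} (hu : Measurable u) (hlb : ∀ x, u x ≠ 0 → c ≤ |u x|)
    (hη : MemLp η (ENNReal.ofReal r) μ)
    (hη0 : ∀ᵐ x ∂μ, u x ≠ 0 → η x = 0) :
    InFSub μ s (fun v => (μ {x | v x ≠ 0}).toReal) u η := by
  have hs0 : 0 < s := hsr.pos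
  have hs1 : 1 < s := hsr.lt
  have hr0 : 0 < r := hsr.symm.pos
  intro ε hε
  set M := Lnorm μ r η with hMdef
  have hM : 0 ≤ M := lnorm_nonneg η
  -- absolute continuity of ∫ |η|^r
  have hlt : ∫⁻ x, (‖η x‖₊ : ℝ≥0∞) ^ r ∂μ ≠ ∞ := by
    have h := lintegral_rpow_enorm_lt_top_of_eLpNorm_lt_top
      (p := ENNReal.ofReal r) (by simpa using hr0) ENNReal.ofReal_ne_top hη.2
    rw [ENNReal.toReal_ofReal hr0.le] at h
    exact h.ne
  obtain ⟨δ', hδ'pos, hδ'⟩ := exists_pos_setLIntegral_lt_of_measure_lt hlt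
    (ε := ENNReal.ofReal ((ε / 2) ^ r)) (ne_of_gt (ENNReal.ofReal_pos.2 (by positivity)))
  obtain ⟨d0, -, hd0pos', hd0lt⟩ := ENNReal.lt_iff_exists_real_btwn.1 hδ'pos
  have hd0 : 0 < d0 := ENNReal.ofReal_pos.1 hd0pos'
  set δa := (ε / 2 * c ^ s) ^ (1 / (s - 1)) with hδa
  set δb := (d0 * c ^ s / 2) ^ (1 / s) with hδb
  set δc := d0 / (2 * (M + 1)) with hδc
  refine ⟨min δa (min δb δc), by positivity, ?_⟩
  intro h hh hpos hle
  set Lh := Lnorm μ s h with hLh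
  set h' := hh.1.mk h with hh'def
  have hh' : h =ᵐ[μ] h' := hh.1.ae_eq_mk
  have hmeas' : Measurable h' := hh.1.stronglyMeasurable_mk.measurable
  set N := {x | u x ≠ 0} with hN
  set A := {x | u x ≠ 0 ∧ u x + h' x = 0} with hA
  set B := {x | u x = 0 ∧ h' x ≠ 0} with hB
  have hNmeas : MeasurableSet N := (hu (measurableSet_singleton 0)).compl
  have hAmeas : MeasurableSet A := by
    have : A = N ∩ {x | u x + h' x = 0} := rfl
    rw [this]
    exact hNmeas.inter ((hu.add hmeas') (measurableSet_singleton 0))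
  have hBmeas : MeasurableSet B := by
    have : B = {x | u x = 0} ∩ {x | h' x ≠ 0} := rfl
    rw [this]
    exact (hu (measurableSet_singleton 0)).inter
      ((hmeas' (measurableSet_singleton 0)).compl)
  set a := (μ A).toReal with ha_def
  set b := (μ B).toReal with hb_def
  have hb0 : 0 ≤ b := ENNReal.toReal_nonneg
  -- the measure identity
  have hqd : (μ {x | u x + h x ≠ 0}).toReal - (μ N).toReal = b - a := by
    have hAe : {x | u x + h x ≠ 0} =ᵐ[μ] (((N \ A) ∪ B : Set X)) := by
      have h1 : {x | u x + h x ≠ 0} =ᵐ[μ] ({x | u x + h' x ≠ 0} : Set X) := by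
        refine Filter.eventuallyEq_set.2 ?_
        filter_upwards [hh'] with x hx
        simp [hx]
      refine h1.trans (Filter.eventuallyEq_set.2 (Eventually.of_forall fun x => ?_))
      simp only [Set.mem_union, Set.mem_diff, Set.mem_setOf_eq, hN, hA, hB]
      by_cases hu0 : u x = 0 <;> simp [hu0] <;> tauto
    have hdisj : Disjoint (N \ A) B := by
      refine Set.disjoint_left.2 fun x hx hxB => ?_
      exact hx.1 hxB.1
    have hAN : A ⊆ N := fun x hx => hx.1
    have h2 : μ {x | u x + h x ≠ 0} = μ N - μ A + μ B := by
      rw [measure_congr hAe, measure_union hdisj hBmeas,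
        measure_diff hAN hAmeas.nullMeasurableSet (measure_ne_top μ A)]
    rw [h2, ENNReal.toReal_add (by
        exact ne_of_lt (lt_of_le_of_lt (tsub_le_self.trans (le_refl _)) (measure_lt_top μ N)))
      (measure_ne_top μ B),
      ENNReal.toReal_sub_of_le (measure_mono hAN) (measure_ne_top μ N)]
    ring
  -- bound on a
  have hint_hs : Integrable (fun x => |h' x| ^ s) μ := by
    have := (hh.ae_eq hh').integrable_norm_rpow (by simpa using hs0) ENNReal.ofReal_ne_top
    simpa [Real.norm_eq_abs, ENNReal.toReal_ofReal hs0.le] using this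
  have hnorm_s : ∫ x, |h' x| ^ s ∂μ = Lh ^ s := by
    rw [hLh, lnorm_rpow hs0]
    refine integral_congr_ae ?_
    filter_upwards [hh'] with x hx
    rw [hx]
  have ha : c ^ s * a ≤ Lh ^ s := by
    have h1 : c ^ s * a ≤ ∫ x in A, |h' x| ^ s ∂μ := by
      rw [show c ^ s * a = μ.real A • c ^ s by rw [smul_eq_mul, mul_comm, measureReal_def]]
      refine setIntegral_ge_of_const_le hAmeas (measure_ne_top μ A) (fun x hx => ?_)
        hint_hs.integrableOn
      have h2 : |h' x| = |u x| := by
        have : h' x = -u x := by linarith [hx.2]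
        rw [this, abs_neg]
      rw [h2]
      exact Real.rpow_le_rpow hc.le (hlb x hx.1) hs0.le
    have h2 : ∫ x in A, |h' x| ^ s ∂μ ≤ ∫ x, |h' x| ^ s ∂μ :=
      setIntegral_le_integral hint_hs
        (Eventually.of_forall fun x => Real.rpow_nonneg (abs_nonneg _) _)
    rw [← hnorm_s]
    exact h1.trans h2
  have hcs : (0:ℝ) < c ^ s := Real.rpow_pos_of_pos hc s
  -- pairing decomposition
  have hpair : ∫ x, η x * h x ∂μ = ∫ x in B, η x * h' x ∂μ := by
    rw [← integral_indicator hBmeas]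
    refine integral_congr_ae ?_
    filter_upwards [hη0, hh'] with x hx1 hx2
    by_cases hu0 : u x = 0
    · by_cases hh0 : h' x = 0
      · have hxB : x ∉ B := fun hx => hx.2 hh0
        simp [Set.indicator_of_notMem hxB, hx2, hh0]
      · have hxB : x ∈ B := ⟨hu0, hh0⟩
        simp [Set.indicator_of_mem hxB, hx2]
    · have hxB : x ∉ B := fun hx => hu0 hx.1
      simp [Set.indicator_of_notMem hxB, hx1 hu0]
  have hηB : MemLp η (ENNReal.ofReal r) (μ.restrict B) := hη.restrict B
  have hh'B : MemLp h' (ENNReal.ofReal s) (μ.restrict B) := (hh.ae_eq hh').restrict B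
  have habs : |∫ x in B, η x * h' x ∂μ| ≤ Lnorm (μ.restrict B) r η * Lnorm (μ.restrict B) s h' :=
    abs_pairing_le hsr hηB hh'B
  have hh'B_le : Lnorm (μ.restrict B) s h' ≤ Lh := by
    have h1 : ∫ x in B, |h' x| ^ s ∂μ ≤ Lh ^ s := by
      rw [← hnorm_s]
      exact setIntegral_le_integral hint_hs
        (Eventually.of_forall fun x => Real.rpow_nonneg (abs_nonneg _) _)
    have h2 : Lnorm (μ.restrict B) s h' = (∫ x in B, |h' x| ^ s ∂μ) ^ (1/s) := rfl
    rw [h2]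
    calc (∫ x in B, |h' x| ^ s ∂μ) ^ (1/s) ≤ (Lh ^ s) ^ (1/s) :=
          Real.rpow_le_rpow (integral_nonneg fun x => Real.rpow_nonneg (abs_nonneg _) _)
            h1 (by positivity)
      _ = Lh := by
          rw [← Real.rpow_mul (lnorm_nonneg h), mul_one_div_cancel hs0.ne', Real.rpow_one]
  have hgoal : (μ {x | u x + h x ≠ 0}).toReal - (μ N).toReal - ∫ x, η x * h x ∂μ
      ≥ -ε * Lh → ((fun v => (μ {x | v x ≠ 0}).toReal) (fun x => u x + h x)
        - (fun v => (μ {x | v x ≠ 0}).toReal) u - ∫ x, η x * h x ∂μ ≥ -ε * Lnorm μ s h) := by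
    intro hx
    simpa using hx
  refine hgoal ?_
  rw [ge_iff_le, show (μ {x | u x + h x ≠ 0}).toReal - (μ N).toReal - ∫ x, η x * h x ∂μ
      = b - a - ∫ x, η x * h x ∂μ by linarith [hqd]]
  by_cases hcase : μ B < δ'
  · -- small B : use absolute continuity
    have hsmall : Lnorm (μ.restrict B) r η ≤ ε / 2 := by
      have h1 := hδ' B hcase
      have h2 : Lnorm (μ.restrict B) r η = (eLpNorm η (ENNReal.ofReal r) (μ.restrict B)).toReal :=
        lnorm_eq_eLpNorm_toReal hr0 hηB
      have h3 : eLpNorm η (ENNReal.ofReal r) (μ.restrict B)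
          = (∫⁻ x in B, (‖η x‖₊ : ℝ≥0∞) ^ r ∂μ) ^ (1 / r) := by
        rw [eLpNorm_eq_lintegral_rpow_enorm_toReal (by simpa using hr0) ENNReal.ofReal_ne_top,
          ENNReal.toReal_ofReal hr0.le]
        simp only [enorm_eq_nnnorm]
      have h4 : eLpNorm η (ENNReal.ofReal r) (μ.restrict B) ≤ ENNReal.ofReal (ε / 2) := by
        rw [h3]
        calc (∫⁻ x in B, (‖η x‖₊ : ℝ≥0∞) ^ r ∂μ) ^ (1 / r)
            ≤ (ENNReal.ofReal ((ε / 2) ^ r)) ^ (1 / r) :=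
              ENNReal.rpow_le_rpow h1.le (by positivity)
          _ = ENNReal.ofReal (ε / 2) := by
              rw [ENNReal.ofReal_rpow_of_nonneg (by positivity) (by positivity),
                ← Real.rpow_mul (by positivity), mul_one_div_cancel hr0.ne', Real.rpow_one]
      rw [h2]
      exact ENNReal.toReal_le_of_le_ofReal (by positivity) h4
    have hPa : |∫ x, η x * h x ∂μ| ≤ ε / 2 * Lh := by
      rw [hpair]
      exact habs.trans (mul_le_mul hsmall hh'B_le (lnorm_nonneg _) (by positivity))
    have haa : a ≤ ε / 2 * Lh := by
      have h5 : Lh ≤ δa := hle.trans (min_le_left _ _)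
      have hLh1 : Lh ^ (s - 1) ≤ ε / 2 * c ^ s :=
        calc Lh ^ (s - 1) ≤ δa ^ (s - 1) :=
              Real.rpow_le_rpow (lnorm_nonneg h) h5 (by linarith)
          _ = ε / 2 * c ^ s := by
              rw [hδa, ← Real.rpow_mul (by positivity),
                one_div_mul_cancel (by intro hcon; linarith : s - (1:ℝ) ≠ 0), Real.rpow_one]
      have h6 : Lh ^ s = Lh ^ (s - 1) * Lh := by
        rw [← Real.rpow_add_one hpos.ne' (s - 1)]
        ring_nf
      have h7 : c ^ s * a ≤ ε / 2 * c ^ s * Lh := by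
        rw [h6] at ha
        exact ha.trans (mul_le_mul_of_nonneg_right hLh1 hpos.le)
      have h8 : 0 < c ^ s := hcs
      nlinarith
    have := abs_le.1 hPa
    have hb0' : (0:ℝ) ≤ b := hb0
    linarith [this.1, this.2]
  · -- B has measure ≥ δ'
    push_neg at hcase
    have hbd : d0 < b := by
      have h1 : ENNReal.ofReal d0 < μ B := lt_of_lt_of_le hd0lt hcase
      exact (ENNReal.ofReal_lt_iff_lt_toReal hd0.le (measure_ne_top μ B)).1 h1
    have hP2 : |∫ x, η x * h x ∂μ| ≤ d0 / 2 := by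
      have h1 : |∫ x, η x * h x ∂μ| ≤ M * Lh := abs_pairing_le hsr hη hh
      have h2 : Lh ≤ δc := hle.trans ((min_le_right _ _).trans (min_le_right _ _))
      have h3 : M * Lh ≤ M * δc := mul_le_mul_of_nonneg_left h2 hM
      have h4 : M * δc ≤ d0 / 2 := by
        have hM1 : (0:ℝ) < M + 1 := by linarith
        have key : M * (d0 / (2 * (M + 1))) = d0 * M / (2 * (M + 1)) := by ring
        rw [hδc, key, div_le_div_iff₀ (by positivity) (by norm_num : (0:ℝ) < 2)]
        nlinarith
      linarith
    have ha2 : a ≤ d0 / 2 := by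
      have h2 : Lh ≤ δb := hle.trans ((min_le_right _ _).trans (min_le_left _ _))
      have h3 : Lh ^ s ≤ d0 * c ^ s / 2 :=
        calc Lh ^ s ≤ δb ^ s := Real.rpow_le_rpow (lnorm_nonneg h) h2 hs0.le
          _ = d0 * c ^ s / 2 := by
            rw [hδb, ← Real.rpow_mul (by positivity), one_div_mul_cancel hs0.ne', Real.rpow_one]
      have h4 : c ^ s * a ≤ c ^ s * (d0 / 2) := by
        refine ha.trans (h3.trans (le_of_eq ?_))
        ring
      exact le_of_mul_le_mul_left h4 hcs
    have h9 := abs_le.1 hP2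
    have hεL : 0 < ε * Lh := mul_pos hε hpos
    linarith [h9.1, h9.2]

end FSub
section Vanish
variable {X : Type*} [MeasurableSpace X] {μ : Measure X} [IsFiniteMeasure μ] {s r : ℝ}

lemma fsub_vanish (hsr : s.HolderConjugate r) {u η : X → ℝ}
    (hu : MemLp u (ENNReal.ofReal s) μ) (hη : MemLp η (ENNReal.ofReal r) μ)
    (hF : InFSub μ s (fun v => (μ {x | v x ≠ 0}).toReal) u η) :
    ∀ᵐ x ∂μ, u x ≠ 0 → η x = 0 := by
  have hs0 : 0 < s := hsr.pos
  set u' := hu.1.mk u with hu'def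
  have huu' : u =ᵐ[μ] u' := hu.1.ae_eq_mk
  have hu'meas : Measurable u' := hu.1.stronglyMeasurable_mk.measurable
  have hηint : Integrable η μ :=
    hη.integrable (ENNReal.one_le_ofReal.2 hsr.symm.lt.le)
  set T : ℕ → Set X := fun n => {x | ((n:ℝ) + 1)⁻¹ ≤ |u' x|} with hT
  have hTmeas : ∀ n, MeasurableSet (T n) := fun n =>
    measurableSet_le measurable_const hu'meas.abs
  have claim : ∀ n : ℕ, ∀ S : Set X, MeasurableSet S → S ⊆ T n →
      ∫ x in S, η x ∂μ = 0 := by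
    intro n S hS hsub
    by_cases hμS : μ S = 0
    · rw [Measure.restrict_eq_zero.2 hμS, integral_zero_measure]
    set m := (μ S).toReal ^ (1 / s) with hm_def
    have hμSpos : 0 < (μ S).toReal :=
      ENNReal.toReal_pos hμS (measure_ne_top μ S)
    have hm : 0 < m := Real.rpow_pos_of_pos hμSpos _
    set I := ∫ x in S, η x ∂μ with hI
    suffices hsuff : ∀ ε > (0:ℝ), |I| ≤ ε * m by
      have h0 : |I| ≤ 0 := by
        by_contra hcon
        push_neg at hcon
        have := hsuff (|I| / (2 * m)) (by positivity)
        rw [div_mul_eq_mul_div, mul_comm] at this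
        have h2 : m * |I| / (2 * m) = |I| / 2 := by
          field_simp
        rw [h2] at this
        linarith
      exact abs_eq_zero.1 (le_antisymm h0 (abs_nonneg _))
    intro ε hε
    obtain ⟨δ, hδpos, hδ⟩ := hF ε hε
    set t0 : ℝ := min (((n:ℝ) + 2)⁻¹) (δ / m) with ht0
    have ht0pos : 0 < t0 := lt_min (by positivity) (by positivity)
    have ht0lt : t0 < ((n:ℝ) + 1)⁻¹ :=
      lt_of_le_of_lt (min_le_left _ _)
        (by apply inv_strictAnti₀ (by positivity) (by linarith))
    have ht0m : t0 * m ≤ δ := by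
      have h1 : t0 ≤ δ / m := min_le_right _ _
      rw [← le_div_iff₀ hm]
      exact h1
    have key : ∀ t : ℝ, t ≠ 0 → |t| < ((n:ℝ) + 1)⁻¹ → |t| * m ≤ δ →
        t * I ≤ ε * (|t| * m) := by
      intro t ht htlt htm
      set h : X → ℝ := S.indicator fun _ => t with hh_def
      have hmem : MemLp h (ENNReal.ofReal s) μ :=
        memLp_indicator_const _ hS t (Or.inr (measure_ne_top μ S))
      have hLnorm : Lnorm μ s h = |t| * m := lnorm_indicator_const hs0 hS t
      have habs : 0 < |t| := abs_pos.2 ht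
      have hspec := hδ h hmem (by rw [hLnorm]; positivity) (by rw [hLnorm]; exact htm)
      have hqeq : μ {x | u x + h x ≠ 0} = μ {x | u x ≠ 0} := by
        have e1 : ({x | u x + h x ≠ 0} : Set X) =ᵐ[μ] ({x | u' x + h x ≠ 0} : Set X) := by
          refine Filter.eventuallyEq_set.2 ?_
          filter_upwards [huu'] with x hx
          rw [hx]
        have e2 : ({x | u' x + h x ≠ 0} : Set X) = ({x | u' x ≠ 0} : Set X) := by
          ext x
          by_cases hxS : x ∈ S
          · have hx1 : h x = t := Set.indicator_of_mem hxS _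
            have hx2 : ((n:ℝ) + 1)⁻¹ ≤ |u' x| := hsub hxS
            have hx3 : u' x ≠ 0 := by
              intro hcon
              rw [hcon, abs_zero] at hx2
              have : (0:ℝ) < ((n:ℝ) + 1)⁻¹ := by positivity
              linarith
            have hx4 : u' x + t ≠ 0 := by
              intro hcon
              have : |u' x| = |t| := by
                rw [show u' x = -t by linarith, abs_neg]
              rw [this] at hx2
              linarith
            simp [hx1, hx3, hx4]
          · have hx1 : h x = 0 := Set.indicator_of_notMem hxS _
            simp [hx1]
        have e3 : ({x | u' x ≠ 0} : Set X) =ᵐ[μ] ({x | u x ≠ 0} : Set X) := by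
          refine Filter.eventuallyEq_set.2 ?_
          filter_upwards [huu'] with x hx
          rw [hx]
        rw [measure_congr e1, e2, measure_congr e3]
      have hpair : ∫ x, η x * h x ∂μ = t * I := by
        have e1 : (fun x => η x * h x) = S.indicator fun x => η x * t := by
          ext x
          by_cases hxS : x ∈ S <;> simp [hh_def, hxS]
        rw [e1, integral_indicator hS, integral_mul_const, hI, mul_comm]
      beta_reduce at hspec
      rw [hqeq, hpair, hLnorm] at hspec
      have : 0 - t * I ≥ -ε * (|t| * m) := by
        convert hspec using 2
        ring
      linarith
    have k1 := key t0 ht0pos.ne' (by rwa [abs_of_pos ht0pos]) (by rwa [abs_of_pos ht0pos])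
    have k2 := key (-t0) (by simpa using ht0pos.ne') (by rwa [abs_neg, abs_of_pos ht0pos])
      (by rwa [abs_neg, abs_of_pos ht0pos])
    rw [abs_of_pos ht0pos] at k1
    rw [abs_neg, abs_of_pos ht0pos] at k2
    have hIle : I ≤ ε * m := by
      have := k1
      rw [← mul_le_mul_iff_right₀ ht0pos]
      calc t0 * I ≤ ε * (t0 * m) := this
        _ = t0 * (ε * m) := by ring
    have hIge : -I ≤ ε * m := by
      have h3 : -t0 * I = t0 * (-I) := by ring
      rw [h3] at k2
      rw [← mul_le_mul_iff_right₀ ht0pos]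
      calc t0 * -I ≤ ε * (t0 * m) := k2
        _ = t0 * (ε * m) := by ring
    exact abs_le.2 ⟨by linarith, hIle⟩
  have hae : ∀ n : ℕ, ∀ᵐ x ∂μ, x ∈ T n → η x = 0 := by
    intro n
    have hz : η =ᵐ[μ.restrict (T n)] 0 := by
      refine (hηint.restrict).ae_eq_zero_of_forall_setIntegral_eq_zero ?_
      intro S hS _
      rw [Measure.restrict_restrict hS]
      exact claim n (S ∩ T n) (hS.inter (hTmeas n)) Set.inter_subset_right
    exact (ae_restrict_iff' (hTmeas n)).1 hz
  filter_upwards [ae_all_iff.2 hae, huu'] with x hx1 hx2 hux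
  have hpos : 0 < |u' x| := abs_pos.2 (by rw [← hx2]; exact hux)
  obtain ⟨n, hn⟩ := exists_nat_gt (|u' x|)⁻¹
  refine hx1 n ?_
  show ((n:ℝ) + 1)⁻¹ ≤ |u' x|
  have h1 : |u' x|⁻¹ ≤ (n:ℝ) + 1 := by linarith
  calc ((n:ℝ) + 1)⁻¹ ≤ (|u' x|⁻¹)⁻¹ := by
        apply inv_anti₀ (by positivity) h1
    _ = |u' x| := inv_inv _

end Vanish
section BS
variable {X : Type*} [MeasurableSpace X] {μ : Measure X} [IsFiniteMeasure μ] {s r : ℝ}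

lemma exists_pairing_bound (hsr : s.HolderConjugate r) (ηs : ℕ → X → ℝ)
    (hmem : ∀ k, MemLp (ηs k) (ENNReal.ofReal r) μ)
    (hconv : ∀ h : X → ℝ, MemLp h (ENNReal.ofReal s) μ →
      ∃ L : ℝ, Tendsto (fun k => ∫ x, ηs k x * h x ∂μ) atTop (𝓝 L)) :
    ∃ C : ℝ, 0 ≤ C ∧ ∀ k, ∀ h : X → ℝ, MemLp h (ENNReal.ofReal s) μ →
      |∫ x, ηs k x * h x ∂μ| ≤ C * Lnorm μ s h := by
  haveI : Fact (1 ≤ ENNReal.ofReal s) := ⟨ENNReal.one_le_ofReal.2 hsr.lt.le⟩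
  set p := ENNReal.ofReal s with hp
  have hbound : ∀ (w : X → ℝ), MemLp w (ENNReal.ofReal r) μ → ∀ f : Lp ℝ p μ,
      |∫ x, w x * f x ∂μ| ≤ Lnorm μ r w * ‖f‖ := by
    intro w hw f
    have hf : MemLp (f : X → ℝ) p μ := Lp.memLp f
    have h1 := abs_pairing_le hsr hw hf
    rwa [Lp.norm_def, ← lnorm_eq_eLpNorm_toReal hsr.pos hf]
  let T : ℕ → Lp ℝ p μ →L[ℝ] ℝ := fun k =>
    LinearMap.mkContinuous
      { toFun := fun f => ∫ x, ηs k x * f x ∂μ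
        map_add' := fun f g => by
          have h1 : (fun x => ηs k x * ((f + g : Lp ℝ p μ) : X → ℝ) x) =ᵐ[μ]
              fun x => ηs k x * f x + ηs k x * g x := by
            filter_upwards [Lp.coeFn_add f g] with x hx
            rw [hx]
            simp [mul_add]
          rw [integral_congr_ae h1,
            integral_add (pairing_integrable hsr (hmem k) (Lp.memLp f))
              (pairing_integrable hsr (hmem k) (Lp.memLp g))]
        map_smul' := fun a f => by
          have h1 : (fun x => ηs k x * ((a • f : Lp ℝ p μ) : X → ℝ) x) =ᵐ[μ]
              fun x => a * (ηs k x * f x) := by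
            filter_upwards [Lp.coeFn_smul a f] with x hx
            rw [hx]
            simp only [Pi.smul_apply, smul_eq_mul]
            ring
          simp only [RingHom.id_apply, smul_eq_mul]
          rw [integral_congr_ae h1, integral_const_mul] }
      (Lnorm μ r (ηs k)) (fun f => by
        simpa [Real.norm_eq_abs] using hbound _ (hmem k) f)
  have hpt : ∀ f : Lp ℝ p μ, ∃ C, ∀ k, ‖T k f‖ ≤ C := by
    intro f
    obtain ⟨L, hL⟩ := hconv f (Lp.memLp f)
    obtain ⟨C, hC⟩ := hL.norm.bddAbove_range
    exact ⟨C, fun k => hC (Set.mem_range_self k)⟩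
  obtain ⟨C', hC'⟩ := banach_steinhaus hpt
  refine ⟨max C' 0, le_max_right _ _, fun k h hh => ?_⟩
  set f := hh.toLp h with hf_def
  have hfe : (f : X → ℝ) =ᵐ[μ] h := hh.coeFn_toLp
  have h1 : ∫ x, ηs k x * h x ∂μ = T k f := by
    show _ = ∫ x, ηs k x * (f : X → ℝ) x ∂μ
    refine integral_congr_ae ?_
    filter_upwards [hfe] with x hx
    rw [hx]
  have h2 : ‖f‖ = Lnorm μ s h := by
    rw [Lp.norm_def, lnorm_eq_eLpNorm_toReal hsr.pos hh]
    congr 1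
    exact eLpNorm_congr_ae hfe
  rw [h1, ← h2]
  calc |T k f| ≤ ‖T k‖ * ‖f‖ := (T k).le_opNorm f
    _ ≤ max C' 0 * ‖f‖ :=
      mul_le_mul_of_nonneg_right ((hC' k).trans (le_max_left _ _)) (norm_nonneg f)

end BS
/-- `η` belongs to the limiting (Mordukhovich) subdifferential of `q` at `ubar`:
there are `u_k → ubar` strongly in `L^s` with `q(u_k) → q(ubar)` and Fréchet subgradients
`η_k ∈ ∂̂q(u_k)` converging weakly to `η` in `L^r`. -/
def InLimSub {X : Type*} [MeasurableSpace X] (μ : Measure X) (s r : ℝ)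
    (q : (X → ℝ) → ℝ) (ubar η : X → ℝ) : Prop :=
  ∃ (u : ℕ → X → ℝ) (ηs : ℕ → X → ℝ),
    (∀ k, MemLp (u k) (ENNReal.ofReal s) μ) ∧
    Tendsto (fun k => Lnorm μ s (fun x => u k x - ubar x)) atTop (𝓝 0) ∧
    Tendsto (fun k => q (u k)) atTop (𝓝 (q ubar)) ∧
    (∀ k, MemLp (ηs k) (ENNReal.ofReal r) μ) ∧
    (∀ k, InFSub μ s q (u k) (ηs k)) ∧
    ∀ h : X → ℝ, MemLp h (ENNReal.ofReal s) μ →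
      Tendsto (fun k => ∫ x, ηs k x * h x ∂μ) atTop (𝓝 (∫ x, η x * h x ∂μ))

section Main
variable {X : Type*} [MeasurableSpace X] {μ : Measure X} [IsFiniteMeasure μ] {s r : ℝ}

/-- The reverse inclusion: any `η ∈ Lʳ` vanishing a.e. on the support of `ubar` is a
limiting subgradient, witnessed by truncations of `ubar`. -/
lemma mem_limsub_of_vanish (hsr : s.HolderConjugate r) {ubar η : X → ℝ}
    (hubar : MemLp ubar (ENNReal.ofReal s) μ) (hη : MemLp η (ENNReal.ofReal r) μ)
    (hz : ∀ᵐ x ∂μ, ubar x ≠ 0 → η x = 0) :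
    InLimSub μ s r (fun v => (μ {x | v x ≠ 0}).toReal) ubar η := by
  have hs0 : 0 < s := hsr.pos
  set u' := hubar.1.mk ubar with hu'def
  have huu' : ubar =ᵐ[μ] u' := hubar.1.ae_eq_mk
  have hu'meas : Measurable u' := hubar.1.stronglyMeasurable_mk.measurable
  have hu'mem : MemLp u' (ENNReal.ofReal s) μ := hubar.ae_eq huu'
  set uk : ℕ → X → ℝ := fun k x => if ((k:ℝ) + 1)⁻¹ ≤ |u' x| then u' x else 0 with huk
  have hmk : ∀ k, Measurable (uk k) := fun k =>
    Measurable.ite (measurableSet_le measurable_const hu'meas.abs) hu'meas measurable_const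
  have huk_abs : ∀ k x, |uk k x| ≤ |u' x| := by
    intro k x
    by_cases hx : ((k:ℝ) + 1)⁻¹ ≤ |u' x| <;> simp [huk, hx]
  have hmemk : ∀ k, MemLp (uk k) (ENNReal.ofReal s) μ := fun k =>
    hu'mem.of_le (hmk k).aestronglyMeasurable
      (Eventually.of_forall fun x => by simpa [Real.norm_eq_abs] using huk_abs k x)
  have hbint : Integrable (fun x => |u' x| ^ s) μ := by
    have := hu'mem.integrable_norm_rpow (by simpa using hs0) ENNReal.ofReal_ne_top
    simpa [Real.norm_eq_abs, ENNReal.toReal_ofReal hs0.le] using this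
  refine ⟨uk, fun _ => η, hmemk, ?_, ?_, fun _ => hη, ?_, ?_⟩
  · -- strong L^s convergence
    have h2 : Tendsto (fun k => ∫ x, |uk k x - u' x| ^ s ∂μ) atTop (𝓝 (∫ x, (0:ℝ) ∂μ)) := by
      refine tendsto_integral_of_dominated_convergence (fun x => |u' x| ^ s)
        (fun k => ((((hmk k).sub hu'meas).abs.pow_const s).aestronglyMeasurable)) hbint
        (fun k => Eventually.of_forall fun x => ?_) (Eventually.of_forall fun x => ?_)
      · rw [Real.norm_eq_abs, abs_of_nonneg (Real.rpow_nonneg (abs_nonneg _) _)]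
        refine Real.rpow_le_rpow (abs_nonneg _) ?_ hs0.le
        by_cases hx : ((k:ℝ) + 1)⁻¹ ≤ |u' x| <;> simp [huk, hx]
      · by_cases hx : u' x = 0
        · have : ∀ k, |uk k x - u' x| ^ s = 0 := by
            intro k
            have : uk k x = 0 := by
              simp only [huk, hx, abs_zero]
              rw [if_neg]
              simp only [not_le]
              positivity
            rw [this, hx]
            simp [Real.zero_rpow hs0.ne']
          simp only [this]
          exact tendsto_const_nhds
        · obtain ⟨K, hK⟩ := exists_nat_gt (|u' x|)⁻¹
          have hxpos : 0 < |u' x| := abs_pos.2 hx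
          have hev : (fun _ : ℕ => (0:ℝ)) =ᶠ[atTop] fun k => |uk k x - u' x| ^ s := by
            refine Filter.eventually_atTop.2 ⟨K, fun k hk => ?_⟩
            have hcond : ((k:ℝ) + 1)⁻¹ ≤ |u' x| := by
              have h1 : |u' x|⁻¹ ≤ (k:ℝ) + 1 := by
                have : (K:ℝ) ≤ k := Nat.cast_le.2 hk
                linarith
              calc ((k:ℝ) + 1)⁻¹ ≤ (|u' x|⁻¹)⁻¹ := inv_anti₀ (by positivity) h1
                _ = |u' x| := inv_inv _
            exact (by simp [huk, hcond, Real.zero_rpow hs0.ne'] :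
              |uk k x - u' x| ^ s = 0).symm
          exact Tendsto.congr' hev tendsto_const_nhds
    rw [integral_zero] at h2
    have h3 : Tendsto (fun k => (∫ x, |uk k x - u' x| ^ s ∂μ) ^ (1/s)) atTop (𝓝 0) := by
      have hc := (Real.continuousAt_rpow_const 0 (1/s) (Or.inr (by positivity))).tendsto
      have := hc.comp h2
      simpa [Function.comp_def, one_div, Real.zero_rpow (inv_ne_zero hs0.ne')] using this
    refine h3.congr fun k => ?_
    exact (lnorm_congr ((huu'.mono fun x hx => by simp only [hx]) : (fun x => uk k x - ubar x)
      =ᵐ[μ] fun x => uk k x - u' x)).symm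
  · -- convergence of q values
    have hset : ∀ k, {x | uk k x ≠ 0} = {x | ((k:ℝ) + 1)⁻¹ ≤ |u' x|} := by
      intro k
      ext x
      by_cases hx : ((k:ℝ) + 1)⁻¹ ≤ |u' x|
      · simp only [Set.mem_setOf_eq, huk, hx, if_true, iff_true]
        intro hcon
        rw [hcon, abs_zero] at hx
        have : (0:ℝ) < ((k:ℝ) + 1)⁻¹ := by positivity
        linarith
      · simp [huk, hx]
    have hmono : Monotone fun k : ℕ => {x | ((k:ℝ) + 1)⁻¹ ≤ |u' x|} := by
      intro k l hkl x hx
      simp only [Set.mem_setOf_eq] at hx ⊢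
      have : ((l:ℝ) + 1)⁻¹ ≤ ((k:ℝ) + 1)⁻¹ := by
        apply inv_anti₀ (by positivity)
        have : (k:ℝ) ≤ l := Nat.cast_le.2 hkl
        linarith
      linarith
    have hunion : (⋃ k : ℕ, {x | ((k:ℝ) + 1)⁻¹ ≤ |u' x|}) = {x | u' x ≠ 0} := by
      ext x
      simp only [Set.mem_iUnion, Set.mem_setOf_eq]
      constructor
      · rintro ⟨k, hk⟩ hcon
        rw [hcon, abs_zero] at hk
        have hp : (0:ℝ) < ((k:ℝ) + 1)⁻¹ := inv_pos.2 (by positivity)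
        linarith
      · intro hx
        obtain ⟨K, hK⟩ := exists_nat_gt (|u' x|)⁻¹
        have hxpos : 0 < |u' x| := abs_pos.2 hx
        refine ⟨K, ?_⟩
        have h1 : |u' x|⁻¹ ≤ (K:ℝ) + 1 := by linarith
        calc ((K:ℝ) + 1)⁻¹ ≤ (|u' x|⁻¹)⁻¹ := inv_anti₀ (by positivity) h1
          _ = |u' x| := inv_inv _
    have h1 : Tendsto (fun k : ℕ => μ {x | ((k:ℝ) + 1)⁻¹ ≤ |u' x|}) atTop
        (𝓝 (μ {x | u' x ≠ 0})) := by
      have h0 := tendsto_measure_iUnion_atTop (μ := μ) hmono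
      rw [← hunion]
      exact h0.congr fun k => rfl
    have h2 : Tendsto (fun k : ℕ => (μ {x | ((k:ℝ) + 1)⁻¹ ≤ |u' x|}).toReal) atTop
        (𝓝 ((μ {x | u' x ≠ 0}).toReal)) :=
      (ENNReal.tendsto_toReal (measure_ne_top μ _)).comp h1
    have h3 : μ {x | u' x ≠ 0} = μ {x | ubar x ≠ 0} := by
      refine measure_congr (Filter.eventuallyEq_set.2 ?_)
      filter_upwards [huu'] with x hx
      rw [hx]
    rw [h3] at h2
    refine h2.congr fun k => ?_
    show _ = (μ {x | uk k x ≠ 0}).toReal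
    rw [hset k]
  · -- Fréchet subgradient at each truncation
    intro k
    refine inFSub_of_lower_bound hsr (c := ((k:ℝ) + 1)⁻¹) (by positivity) (hmk k)
      (fun x hx => ?_) hη ?_
    · have hcond : ((k:ℝ) + 1)⁻¹ ≤ |u' x| := by
        by_contra hcon
        exact hx (by simp [huk, hcon])
      have : uk k x = u' x := by simp [huk, hcond]
      rw [this]
      exact hcond
    · filter_upwards [hz, huu'] with x hx1 hx2 hx3
      refine hx1 ?_
      rw [hx2]
      intro hcon
      refine hx3 ?_
      simp [huk, hcon, abs_zero]
  · -- weak convergence (constant sequence)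
    exact fun h _ => tendsto_const_nhds

end Main
section Forward
variable {X : Type*} [MeasurableSpace X] {μ : Measure X} [IsFiniteMeasure μ] {s r : ℝ}

lemma limsub_vanish (hsr : s.HolderConjugate r) {ubar η : X → ℝ}
    (hubar : MemLp ubar (ENNReal.ofReal s) μ) (hη : MemLp η (ENNReal.ofReal r) μ)
    (hlim : InLimSub μ s r (fun v => (μ {x | v x ≠ 0}).toReal) ubar η) :
    ∀ᵐ x ∂μ, ubar x ≠ 0 → η x = 0 := by
  obtain ⟨u, ηs, hmemu, hstrong, hq, hmemη, hF, hweak⟩ := hlim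
  have hs0 : 0 < s := hsr.pos
  have hvan : ∀ k, ∀ᵐ x ∂μ, u k x ≠ 0 → ηs k x = 0 := fun k =>
    fsub_vanish hsr (hmemu k) (hmemη k) (hF k)
  obtain ⟨C, hC0, hC⟩ := exists_pairing_bound hsr ηs hmemη fun h hh => ⟨_, hweak h hh⟩
  set u' := hubar.1.mk ubar with hu'def
  have huu' : ubar =ᵐ[μ] u' := hubar.1.ae_eq_mk
  have hu'meas : Measurable u' := hubar.1.stronglyMeasurable_mk.measurable
  have hu'mem : MemLp u' (ENNReal.ofReal s) μ := hubar.ae_eq huu'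
  set vk : ℕ → X → ℝ := fun k => (hmemu k).1.mk (u k) with hvk
  have hvv : ∀ k, u k =ᵐ[μ] vk k := fun k => (hmemu k).1.ae_eq_mk
  have hvmeas : ∀ k, Measurable (vk k) := fun k =>
    (hmemu k).1.stronglyMeasurable_mk.measurable
  have hηint : Integrable η μ :=
    hη.integrable (ENNReal.one_le_ofReal.2 hsr.symm.lt.le)
  have hηsint : ∀ k, Integrable (ηs k) μ := fun k =>
    (hmemη k).integrable (ENNReal.one_le_ofReal.2 hsr.symm.lt.le)
  have hvksub : ∀ k, MemLp (fun x => vk k x - u' x) (ENNReal.ofReal s) μ := fun k =>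
    ((hmemu k).ae_eq (hvv k)).sub hu'mem
  have hci : ∀ k, Integrable (fun x => |vk k x - u' x| ^ s) μ := by
    intro k
    have := (hvksub k).integrable_norm_rpow (by simpa using hs0) ENNReal.ofReal_ne_top
    simpa [Real.norm_eq_abs, ENNReal.toReal_ofReal hs0.le] using this
  -- the strong convergence of the raw s-th power integrals
  have hE : Tendsto (fun k => ∫ x, |vk k x - u' x| ^ s ∂μ) atTop (𝓝 0) := by
    have h1 : ∀ k, ∫ x, |vk k x - u' x| ^ s ∂μ
        = (Lnorm μ s fun x => u k x - ubar x) ^ s := by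
      intro k
      rw [lnorm_rpow hs0]
      refine integral_congr_ae ?_
      filter_upwards [hvv k, huu'] with x e1 e2
      rw [e1, e2]
    have h2 : Tendsto (fun k => (Lnorm μ s fun x => u k x - ubar x) ^ s) atTop (𝓝 0) := by
      have hc := (Real.continuousAt_rpow_const 0 s (Or.inr hs0.le)).tendsto
      have := hc.comp hstrong
      simpa [Function.comp_def, Real.zero_rpow hs0.ne'] using this
    exact h2.congr fun k => (h1 k).symm
  set T : ℕ → Set X := fun n => {x | ((n:ℝ) + 1)⁻¹ ≤ |u' x|} with hT
  have hTmeas : ∀ n, MeasurableSet (T n) := fun n =>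
    measurableSet_le measurable_const hu'meas.abs
  have claim : ∀ n : ℕ, ∀ S : Set X, MeasurableSet S → S ⊆ T n →
      ∫ x in S, η x ∂μ = 0 := by
    intro n S hS hsub
    have hden : (0:ℝ) < ((n:ℝ) + 1)⁻¹ := inv_pos.2 (by positivity)
    set g : X → ℝ := S.indicator fun _ => (1:ℝ) with hg
    have hgmem : MemLp g (ENNReal.ofReal s) μ :=
      memLp_indicator_const _ hS 1 (Or.inr (measure_ne_top μ S))
    have hw := hweak g hgmem
    have hIg : ∫ x, η x * g x ∂μ = ∫ x in S, η x ∂μ := by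
      have e1 : (fun x => η x * g x) = S.indicator fun x => η x := by
        ext x
        by_cases hx : x ∈ S <;> simp [hg, hx]
      rw [e1, integral_indicator hS]
    have hbound : ∀ k, |∫ x, ηs k x * g x ∂μ|
        ≤ C * (((n:ℝ) + 1) ^ s * ∫ x, |vk k x - u' x| ^ s ∂μ) ^ (1 / s) := by
      intro k
      set Z := {x | vk k x = 0} with hZ
      have hZmeas : MeasurableSet Z := hvmeas k (measurableSet_singleton 0)
      have e2 : ∫ x, ηs k x * g x ∂μ = ∫ x in S, ηs k x ∂μ := by
        have e1 : (fun x => ηs k x * g x) = S.indicator fun x => ηs k x := by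
          ext x
          by_cases hx : x ∈ S <;> simp [hg, hx]
        rw [e1, integral_indicator hS]
      have e3 := integral_inter_add_diff (f := ηs k) (s := S) (μ := μ)
        hZmeas (hηsint k).integrableOn
      have e4 : ∫ x in S \ Z, ηs k x ∂μ = 0 := by
        have hzz : ∀ᵐ x ∂μ.restrict (S \ Z), ηs k x = 0 := by
          rw [ae_restrict_iff' (hS.diff hZmeas)]
          filter_upwards [hvan k, hvv k] with x e5 e6 hx
          refine e5 ?_
          rw [e6]
          exact hx.2
        rw [integral_congr_ae hzz]
        simp
      have e5 : ∫ x in S ∩ Z, ηs k x ∂μ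
          = ∫ x, ηs k x * ((S ∩ Z).indicator fun _ => (1:ℝ)) x ∂μ := by
        have e1 : (fun x => ηs k x * ((S ∩ Z).indicator fun _ => (1:ℝ)) x)
            = (S ∩ Z).indicator fun x => ηs k x := by
          ext x
          by_cases hx : x ∈ S ∩ Z <;> simp [hx]
        rw [e1, integral_indicator (hS.inter hZmeas)]
      have hmemSZ : MemLp ((S ∩ Z).indicator fun _ => (1:ℝ)) (ENNReal.ofReal s) μ :=
        memLp_indicator_const _ (hS.inter hZmeas) 1 (Or.inr (measure_ne_top μ _))
      have h6 := hC k _ hmemSZ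
      rw [← e5] at h6
      have h7 : Lnorm μ s ((S ∩ Z).indicator fun _ => (1:ℝ))
          = (μ (S ∩ Z)).toReal ^ (1 / s) := by
        simpa using lnorm_indicator_const hs0 (hS.inter hZmeas) 1
      rw [h7] at h6
      have h8 : (μ (S ∩ Z)).toReal ≤ ((n:ℝ) + 1) ^ s * ∫ x, |vk k x - u' x| ^ s ∂μ := by
        have h9 : (((n:ℝ) + 1)⁻¹) ^ s * (μ (S ∩ Z)).toReal
            ≤ ∫ x in S ∩ Z, |vk k x - u' x| ^ s ∂μ := by
          rw [show (((n:ℝ) + 1)⁻¹) ^ s * (μ (S ∩ Z)).toReal = μ.real (S ∩ Z) • (((n:ℝ) + 1)⁻¹) ^ s by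
            rw [smul_eq_mul, mul_comm, measureReal_def]]
          refine setIntegral_ge_of_const_le (hS.inter hZmeas) (measure_ne_top μ _)
            (fun x hx => ?_) (hci k).integrableOn
          have hx1 : vk k x = 0 := hx.2
          have hx2 : ((n:ℝ) + 1)⁻¹ ≤ |u' x| := hsub hx.1
          have : |vk k x - u' x| = |u' x| := by rw [hx1, zero_sub, abs_neg]
          rw [this]
          exact Real.rpow_le_rpow hden.le hx2 hs0.le
        have h10 : ∫ x in S ∩ Z, |vk k x - u' x| ^ s ∂μ ≤ ∫ x, |vk k x - u' x| ^ s ∂μ :=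
          setIntegral_le_integral (hci k)
            (Eventually.of_forall fun x => Real.rpow_nonneg (abs_nonneg _) _)
        have h11 : (((n:ℝ) + 1)⁻¹) ^ s = (((n:ℝ) + 1) ^ s)⁻¹ :=
          Real.inv_rpow (by positivity) s
        have h12 : (0:ℝ) < ((n:ℝ) + 1) ^ s := Real.rpow_pos_of_pos (by positivity) s
        rw [h11] at h9
        have h13 := h9.trans h10
        rw [inv_mul_le_iff₀ h12] at h13
        exact h13
      calc |∫ x, ηs k x * g x ∂μ| = |∫ x in S ∩ Z, ηs k x ∂μ| := by
            rw [e2, ← e3, e4, add_zero]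
        _ ≤ C * (μ (S ∩ Z)).toReal ^ (1 / s) := h6
        _ ≤ C * (((n:ℝ) + 1) ^ s * ∫ x, |vk k x - u' x| ^ s ∂μ) ^ (1 / s) := by
            refine mul_le_mul_of_nonneg_left ?_ hC0
            exact Real.rpow_le_rpow ENNReal.toReal_nonneg h8 (by positivity)
    have hlim0 : Tendsto (fun k => ∫ x, ηs k x * g x ∂μ) atTop (𝓝 0) := by
      refine squeeze_zero_norm (fun k => by
        simpa [Real.norm_eq_abs] using hbound k) ?_
      have t1 : Tendsto (fun k => ((n:ℝ) + 1) ^ s * ∫ x, |vk k x - u' x| ^ s ∂μ)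
          atTop (𝓝 0) := by
        have := hE.const_mul (((n:ℝ) + 1) ^ s)
        simpa using this
      have t2 : Tendsto (fun k => (((n:ℝ) + 1) ^ s * ∫ x, |vk k x - u' x| ^ s ∂μ) ^ (1 / s))
          atTop (𝓝 0) := by
        have hc := (Real.continuousAt_rpow_const 0 (1 / s) (Or.inr (by positivity))).tendsto
        have := hc.comp t1
        simpa [Function.comp_def, one_div, Real.zero_rpow (inv_ne_zero hs0.ne')] using this
      have := t2.const_mul C
      simpa using this
    have := tendsto_nhds_unique hw hlim0
    rw [← hIg]
    exact this
  have hae : ∀ n : ℕ, ∀ᵐ x ∂μ, x ∈ T n → η x = 0 := by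
    intro n
    have hz : η =ᵐ[μ.restrict (T n)] 0 := by
      refine (hηint.restrict).ae_eq_zero_of_forall_setIntegral_eq_zero ?_
      intro S hS _
      rw [Measure.restrict_restrict hS]
      exact claim n (S ∩ T n) (hS.inter (hTmeas n)) Set.inter_subset_right
    exact (ae_restrict_iff' (hTmeas n)).1 hz
  filter_upwards [ae_all_iff.2 hae, huu'] with x hx1 hx2 hux
  have hpos : 0 < |u' x| := abs_pos.2 (by rw [← hx2]; exact hux)
  obtain ⟨n, hn⟩ := exists_nat_gt (|u' x|)⁻¹
  refine hx1 n ?_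
  show ((n:ℝ) + 1)⁻¹ ≤ |u' x|
  have h1 : |u' x|⁻¹ ≤ (n:ℝ) + 1 := by linarith
  calc ((n:ℝ) + 1)⁻¹ ≤ (|u' x|⁻¹)⁻¹ := inv_anti₀ (by positivity) h1
    _ = |u' x| := inv_inv _

end Forward

/-- For `s ∈ (1,∞)`, the limiting subdifferential of `q_{s,0}(u) = λ({u ≠ 0})` at any
`ubar ∈ L^s(Ω)` equals `{η ∈ L^r : η = 0 a.e. on {ubar ≠ 0}}`. -/
theorem limsub_qs0_characterization (d : ℕ) (Ω : Set (Fin d → ℝ)) (hΩ : MeasurableSet Ω)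
    (h0 : 0 < volume Ω) (hfin : volume Ω < ⊤) (s r : ℝ) (hs : 1 < s)
    (hr : 1 / s + 1 / r = 1)
    (ubar : (Fin d → ℝ) → ℝ) (hubar : MemLp ubar (ENNReal.ofReal s) (volume.restrict Ω)) :
    ∀ η : (Fin d → ℝ) → ℝ,
      (MemLp η (ENNReal.ofReal r) (volume.restrict Ω) ∧
        InLimSub (volume.restrict Ω) s r
          (fun u => ((volume.restrict Ω) {x | u x ≠ 0}).toReal) ubar η) ↔
      (MemLp η (ENNReal.ofReal r) (volume.restrict Ω) ∧
        ∀ᵐ x ∂(volume.restrict Ω), ubar x ≠ 0 → η x = 0) := by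
  intro η
  haveI : IsFiniteMeasure (volume.restrict Ω) :=
    ⟨by rwa [Measure.restrict_apply_univ]⟩
  have hsr : Real.HolderConjugate s r := Real.holderConjugate_iff.2 ⟨hs, by simpa [one_div] using hr⟩
  constructor
  · rintro ⟨hmem, hlim⟩
    exact ⟨hmem, limsub_vanish hsr hubar hmem hlim⟩
  · rintro ⟨hmem, hz⟩
    exact ⟨hmem, mem_limsub_of_vanish hsr hubar hmem hz⟩
end

section
/- Let Ω ⊂ ℝ^d be measurable with finite positive measure, s ∈ [1,∞) with conjugate exponent r, p ∈ (0,1), and q_{s,p}(u) = ∫_Ω |u|^p dx on L^s(Ω). For any ū ∈ L^s(Ω), every element η of the Fréchet subdifferential of q_{s,p} at ū satisfies η = p·|ū|^{p−2}·ū almost everywhere on {ū ≠ 0}. -/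
open MeasureTheory Real Filter Topology Set
open scoped ENNReal

lemma rpow_lip {p c x y : ℝ} (hp : p ∈ Set.Ioo (0:ℝ) 1) (hc : 0 < c) (hx : c ≤ x) (hy : c ≤ y) :
    |x ^ (p-1) - y ^ (p-1)| ≤ (1-p) * c^(p-2) * |x - y| := by
  have hconv : Convex ℝ (Ici c) := convex_Ici c
  have hderiv : ∀ z ∈ Ici c, HasDerivWithinAt (fun w : ℝ => w ^ (p-1)) ((p-1) * z ^ (p-2)) (Ici c) z := by
    intro z hz
    have hz0 : z ≠ 0 := by have : (0:ℝ) < z := lt_of_lt_of_le hc hz; linarith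
    have := (Real.hasDerivAt_rpow_const (p := p-1) (Or.inl hz0)).hasDerivWithinAt (s := Ici c)
    rw [show p - 2 = p - 1 - 1 by ring]
    exact this
  have hbound : ∀ z ∈ Ici c, ‖(p-1) * z ^ (p-2)‖ ≤ (1-p) * c^(p-2) := by
    intro z hz
    have hz0 : (0:ℝ) < z := lt_of_lt_of_le hc hz
    rw [Real.norm_eq_abs, abs_mul, abs_of_nonneg (Real.rpow_nonneg hz0.le _),
      abs_of_neg (by linarith [hp.2] : p - 1 < 0)]
    have : z ^ (p-2) ≤ c ^ (p-2) := Real.rpow_le_rpow_of_nonpos hc hz (by linarith [hp.2])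
    nlinarith [Real.rpow_nonneg hz0.le (p-2), hp.2]
  have := hconv.norm_image_sub_le_of_norm_hasDerivWithin_le hderiv hbound hy hx
  simpa [Real.norm_eq_abs] using this

lemma taylor_pos {p ε0 a t : ℝ} (hp : p ∈ Set.Ioo (0:ℝ) 1) (hε : 0 < ε0)
    (ha : ε0 ≤ a) (ht : |t| ≤ ε0/2) :
    |(a+t)^p - a^p - t * (p * a^(p-1))| ≤ (p*(1-p)*(ε0/2)^(p-2)) * t^2 := by
  set c := ε0/2 with hc
  have hcpos : 0 < c := by positivity
  set f : ℝ → ℝ := fun y => (a+y)^p - y * (p * a^(p-1)) with hf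
  set S : Set ℝ := Icc (-|t|) (|t|) with hS
  have hca : c ≤ a := by
    have : c ≤ ε0 := by rw [hc]; linarith
    linarith
  have hmem : ∀ y ∈ S, c ≤ a + y := by
    intro y hy
    have h1 : -|t| ≤ y := hy.1
    have : -(ε0/2) ≤ y := by linarith [neg_le_neg ht]
    simp only [hc] at *
    linarith
  have hderiv : ∀ y ∈ S, HasDerivWithinAt f (p * (a+y)^(p-1) - p * a^(p-1)) S y := by
    intro y hy
    have hne : a + y ≠ 0 := by have := hmem y hy; linarith
    have h1 : HasDerivAt (fun y : ℝ => a + y) 1 y := (hasDerivAt_id y).const_add a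
    have h2 : HasDerivAt (fun y : ℝ => (a+y)^p) (1 * p * (a+y)^(p-1)) y :=
      h1.rpow_const (Or.inl hne)
    have h3 : HasDerivAt (fun y : ℝ => y * (p * a^(p-1))) (p * a^(p-1)) y :=
      hasDerivAt_mul_const _
    have := (h2.sub h3).hasDerivWithinAt (s := S)
    rw [show p * (a+y)^(p-1) - p * a^(p-1) = 1 * p * (a + y) ^ (p - 1) - p * a ^ (p - 1) by ring]
    exact this
  have hbound : ∀ y ∈ S, ‖p * (a+y)^(p-1) - p * a^(p-1)‖ ≤ (p*(1-p)*c^(p-2)) * |t| := by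
    intro y hy
    rw [Real.norm_eq_abs, ← mul_sub, abs_mul, abs_of_pos hp.1]
    have hlip := rpow_lip hp hcpos (hmem y hy) hca
    have : |a + y - a| = |y| := by ring_nf
    rw [this] at hlip
    have hyt : |y| ≤ |t| := abs_le.2 ⟨hy.1, hy.2⟩
    calc p * |(a+y)^(p-1) - a^(p-1)| ≤ p * ((1-p) * c^(p-2) * |y|) := by
          apply mul_le_mul_of_nonneg_left hlip hp.1.le
      _ ≤ p*(1-p)*c^(p-2) * |t| := by
          have hK : 0 ≤ p*(1-p)*c^(p-2) :=
            mul_nonneg (mul_nonneg hp.1.le (by linarith [hp.2])) (Real.rpow_nonneg hcpos.le _)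
          nlinarith [mul_le_mul_of_nonneg_left hyt hK]
  have h0S : (0:ℝ) ∈ S := ⟨neg_nonpos.2 (abs_nonneg t), abs_nonneg t⟩
  have htS : t ∈ S := ⟨neg_abs_le t, le_abs_self t⟩
  have := (convex_Icc _ _).norm_image_sub_le_of_norm_hasDerivWithin_le hderiv hbound h0S htS
  have hf0 : f 0 = a^p := by simp [hf]
  have hft : f t = (a+t)^p - t * (p * a^(p-1)) := rfl
  rw [hft, hf0, Real.norm_eq_abs, Real.norm_eq_abs, sub_zero] at this
  calc |(a+t)^p - a^p - t * (p * a^(p-1))| = |(a+t)^p - t*(p*a^(p-1)) - a^p| := by ring_nf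
    _ ≤ p*(1-p)*c^(p-2)*|t| * |t| := this
    _ = (p*(1-p)*c^(p-2)) * t^2 := by rw [mul_assoc, abs_mul_abs_self]; ring

lemma taylor_gen {p ε0 a t : ℝ} (hp : p ∈ Set.Ioo (0:ℝ) 1) (hε : 0 < ε0)
    (ha : ε0 ≤ |a|) (ht : |t| ≤ ε0/2) :
    |(|a+t|)^p - (|a|)^p - t * (p * (|a|)^(p-2) * a)| ≤ (p*(1-p)*(ε0/2)^(p-2)) * t^2 := by
  have ha0 : a ≠ 0 := by
    intro h; rw [h, abs_zero] at ha; linarith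
  have htl : -(ε0/2) ≤ t := neg_le_of_abs_le ht
  have htu : t ≤ ε0/2 := le_of_abs_le ht
  rcases lt_or_gt_of_ne ha0 with hneg | hpos
  · -- a < 0
    have ha' : ε0 ≤ -a := by rwa [abs_of_neg hneg] at ha
    have ht' : |(-t)| ≤ ε0/2 := by rwa [abs_neg]
    have key := taylor_pos hp hε ha' ht'
    have hne : (-a : ℝ) ≠ 0 := by simpa using ha0
    have e4 : (-a:ℝ)^(p-1) = (-a)^(p-2) * (-a) := by
      rw [show p-1 = (p-2)+1 by ring, Real.rpow_add_one hne]
    rw [e4] at key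
    have habt : a + t < 0 := by linarith
    have e1 : |a + t| = -a + -t := by rw [abs_of_neg habt]; ring
    have e2 : |a| = -a := abs_of_neg hneg
    rw [e1, e2]
    have e5 : -t * (p * ((-a)^(p-2) * (-a))) = t * (p * (-a)^(p-2) * a) := by ring
    rw [e5] at key
    calc |(-a + -t)^p - (-a)^p - t * (p * (-a)^(p-2) * a)|
        ≤ (p*(1-p)*(ε0/2)^(p-2)) * (-t)^2 := key
      _ = (p*(1-p)*(ε0/2)^(p-2)) * t^2 := by rw [neg_sq]
  · -- a > 0
    have ha' : ε0 ≤ a := by rwa [abs_of_pos hpos] at ha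
    have key := taylor_pos hp hε ha' ht
    have e4 : a^(p-1) = a^(p-2) * a := by
      rw [show p-1 = (p-2)+1 by ring, Real.rpow_add_one ha0]
    rw [e4] at key
    have habt : 0 < a + t := by linarith
    rw [abs_of_pos habt, abs_of_pos hpos]
    have e5 : t * (p * (a^(p-2) * a)) = t * (p * a^(p-2) * a) := by ring
    rw [e5] at key
    exact key

lemma integrable_abs_rpow_s15 {X : Type*} [MeasurableSpace X] (μ : Measure X) [IsFiniteMeasure μ]
    {s p : ℝ} (hs : 1 ≤ s) (hp : p ∈ Set.Ioo (0:ℝ) 1) {f : X → ℝ}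
    (hf : MemLp f (ENNReal.ofReal s) μ) : Integrable (fun x => |f x| ^ p) μ := by
  have h1 : MemLp f (ENNReal.ofReal p) μ :=
    hf.mono_exponent (ENNReal.ofReal_le_ofReal (by linarith [hp.2]))
  have h2 := h1.integrable_norm_rpow (ne_of_gt (ENNReal.ofReal_pos.2 hp.1)) ENNReal.ofReal_ne_top
  simpa [ENNReal.toReal_ofReal hp.1.le, Real.norm_eq_abs] using h2

lemma key_integral {X : Type*} [MeasurableSpace X] (μ : Measure X) [IsFiniteMeasure μ]
    (s p : ℝ) (hs : 1 ≤ s) (hp : p ∈ Set.Ioo (0:ℝ) 1)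
    (u η : X → ℝ) (hu : Measurable u)
    (hus : MemLp u (ENNReal.ofReal s) μ)
    (hηi : Integrable η μ)
    (hsub : InFSub μ s (fun v => ∫ x, |v x| ^ p ∂μ) u η)
    (ε0 : ℝ) (hε0 : 0 < ε0) (B : Set X) (hB : MeasurableSet B)
    (hBsub : ∀ x ∈ B, ε0 < |u x|) :
    ∫ x in B, η x ∂μ = ∫ x in B, (p * |u x|^(p-2) * u x) ∂μ := by
  have hspos : 0 < s := lt_of_lt_of_le one_pos hs
  have hs0 : s ≠ 0 := ne_of_gt hspos
  set g : X → ℝ := fun x => p * |u x|^(p-2) * u x with hgdef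
  have hg_meas : Measurable g := (measurable_const.mul (hu.abs.pow measurable_const)).mul hu
  set m : ℝ := (μ B).toReal with hmdef
  have hm_ne : μ B ≠ ⊤ := measure_ne_top μ B
  rcases eq_or_lt_of_le (ENNReal.toReal_nonneg : (0:ℝ) ≤ m) with hm0 | hmpos
  · -- measure zero case
    have : μ B = 0 := by
      rcases (ENNReal.toReal_eq_zero_iff _).1 hm0.symm with h | h
      · exact h
      · exact absurd h hm_ne
    rw [Measure.restrict_eq_zero.2 this]
    simp
  · -- positive measure
    -- integrability of g on B
    have hubound : ∀ x ∈ B, ‖g x‖ ≤ p * ε0^(p-1) := by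
      intro x hx
      have hux : ε0 < |u x| := hBsub x hx
      have hne : |u x| ≠ 0 := (hε0.trans hux).ne'
      have e : ‖g x‖ = p * (|u x|^(p-2) * |u x|) := by
        rw [Real.norm_eq_abs]
        simp only [hgdef]
        rw [abs_mul, abs_mul, abs_of_pos hp.1, abs_of_nonneg (Real.rpow_nonneg (abs_nonneg _) _)]
        exact mul_assoc _ _ _
      rw [e, ← Real.rpow_add_one hne, show p - 2 + 1 = p - 1 by ring]
      have : |u x| ^ (p-1) ≤ ε0 ^ (p-1) :=
        Real.rpow_le_rpow_of_nonpos hε0 hux.le (by linarith [hp.2])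
      nlinarith [hp.1]
    have hgB : IntegrableOn g B μ := by
      refine Integrable.mono' (integrable_const (p * ε0^(p-1)))
        (hg_meas.aestronglyMeasurable) ?_
      rw [ae_restrict_iff' hB]
      exact ae_of_all _ hubound
    have hηB : IntegrableOn η B μ := hηi.integrableOn
    set L : ℝ := p*(1-p)*(ε0/2)^(p-2) with hLdef
    have hL0 : 0 ≤ L :=
      mul_nonneg (mul_nonneg hp.1.le (by linarith [hp.2])) (Real.rpow_nonneg (by linarith) _)
    set Ms : ℝ := m ^ (1/s) with hMsdef
    have hMs : 0 < Ms := Real.rpow_pos_of_pos hmpos _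
    have hup : Integrable (fun x => |u x| ^ p) μ := integrable_abs_rpow_s15 μ hs hp hus
    set G : ℝ := ∫ x in B, g x ∂μ with hGdef
    set E : ℝ := ∫ x in B, η x ∂μ with hEdef
    have main : ∀ ε : ℝ, 0 < ε → |E - G| ≤ ε * (Ms + L * m) := by
      intro ε hε
      obtain ⟨δ, hδpos, hδ⟩ := hsub ε hε
      set t : ℝ := min (δ / Ms) (min (ε0/2) ε) with htdef
      have htpos : 0 < t := lt_min (div_pos hδpos hMs) (lt_min (by positivity) hε)
      have ht1 : t ≤ δ / Ms := min_le_left _ _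
      have ht2 : t ≤ ε0/2 := le_trans (min_le_right _ _) (min_le_left _ _)
      have ht3 : t ≤ ε := le_trans (min_le_right _ _) (min_le_right _ _)
      have step : ∀ τ : ℝ, |τ| = t → -(ε * t * Ms) - L * t^2 * m ≤ τ * (G - E) := by
        intro τ hτ
        set h : X → ℝ := B.indicator (fun _ => τ) with hhdef
        have hmem : MemLp h (ENNReal.ofReal s) μ := (memLp_const τ).indicator hB
        have habs : (fun x => |h x| ^ s) = B.indicator (fun _ => |τ|^s) := by
          funext x
          by_cases hx : x ∈ B <;>
            simp [hhdef, indicator_of_mem, indicator_of_notMem, hx, Real.zero_rpow hs0]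
        have hLn : Lnorm μ s h = t * Ms := by
          rw [Lnorm, habs, integral_indicator hB, setIntegral_const, smul_eq_mul, measureReal_def,
            Real.mul_rpow ENNReal.toReal_nonneg (Real.rpow_nonneg (abs_nonneg _) _),
            ← Real.rpow_mul (abs_nonneg τ), mul_one_div_cancel hs0, Real.rpow_one, hτ]
          rw [hMsdef, hmdef, mul_comm]
        have hpos : 0 < Lnorm μ s h := by rw [hLn]; positivity
        have hle : Lnorm μ s h ≤ δ := by
          rw [hLn]
          calc t * Ms ≤ (δ/Ms) * Ms := mul_le_mul_of_nonneg_right ht1 hMs.le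
            _ = δ := div_mul_cancel₀ _ (ne_of_gt hMs)
        have hiq : (∫ x, |u x + h x|^p ∂μ) - (∫ x, |u x|^p ∂μ) - ∫ x, η x * h x ∂μ
            ≥ -ε * (t * Ms) := by
          have := hδ h hmem hpos hle
          rw [hLn] at this
          exact this
        have e1 : (∫ x, η x * h x ∂μ) = τ * E := by
          have : (fun x => η x * h x) = B.indicator (fun x => τ * η x) := by
            funext x
            by_cases hx : x ∈ B <;>
              simp [hhdef, indicator_of_mem, indicator_of_notMem, hx, mul_comm]
          rw [this, integral_indicator hB, integral_const_mul, hEdef]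
        have hup2 : Integrable (fun x => |u x + h x| ^ p) μ :=
          integrable_abs_rpow_s15 μ hs hp (hus.add hmem)
        have e2 : (∫ x, |u x + h x| ^ p ∂μ) - (∫ x, |u x| ^ p ∂μ)
            = ∫ x in B, ((|u x + τ|)^p - (|u x|)^p) ∂μ := by
          rw [← integral_sub hup2 hup]
          have : (fun x => |u x + h x|^p - |u x|^p)
              = B.indicator (fun x => |u x + τ|^p - |u x|^p) := by
            funext x
            by_cases hx : x ∈ B <;>
              simp [hhdef, indicator_of_mem, indicator_of_notMem, hx]
          rw [this, integral_indicator hB]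
        set φ : X → ℝ := fun x => |u x + τ|^p - |u x|^p - τ * g x with hφdef
        have htay : ∀ x ∈ B, |φ x| ≤ L * t^2 := by
          intro x hx
          have h1 := taylor_gen hp hε0 (le_of_lt (hBsub x hx)) (by rw [hτ]; exact ht2)
          rw [show τ^2 = t^2 by rw [← hτ, sq_abs]] at h1
          exact h1
        have hφmeas : Measurable φ :=
          (((hu.add_const τ).abs.pow measurable_const).sub
            (hu.abs.pow measurable_const)).sub (measurable_const.mul hg_meas)
        have hφint : IntegrableOn φ B μ := by
          refine Integrable.mono' (integrable_const (L * t^2))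
            (hφmeas.aestronglyMeasurable) ?_
          rw [ae_restrict_iff' hB]
          exact ae_of_all _ (fun x hx => by rw [Real.norm_eq_abs]; exact htay x hx)
        have hgB' : IntegrableOn (fun x => τ * g x) B μ := hgB.const_mul τ
        have e4 : ∫ x in B, ((|u x + τ|)^p - (|u x|)^p) ∂μ
            = (∫ x in B, φ x ∂μ) + τ * G := by
          have e : (fun x => (|u x + τ|)^p - (|u x|)^p) = (fun x => φ x + τ * g x) := by
            funext x; simp only [hφdef]; ring
          rw [e, integral_add hφint hgB', integral_const_mul, hGdef]
        have e5 : |∫ x in B, φ x ∂μ| ≤ L * t^2 * m := by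
          calc |∫ x in B, φ x ∂μ| ≤ ∫ x in B, |φ x| ∂μ := by
                simpa [Real.norm_eq_abs] using
                  norm_integral_le_integral_norm (μ := μ.restrict B) φ
            _ ≤ ∫ x in B, (L * t^2) ∂μ :=
                setIntegral_mono_on hφint.abs (integrable_const _) hB htay
            _ = m * (L * t^2) := by rw [setIntegral_const, smul_eq_mul, measureReal_def, hmdef]
            _ = L * t^2 * m := by ring
        rw [e1, e2, e4] at hiq
        rw [mul_sub]
        have h7 : (∫ x in B, φ x ∂μ) ≤ L * t^2 * m := le_trans (le_abs_self _) e5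
        linarith [hiq, h7]
      have h1 := step t (abs_of_pos htpos)
      have h2 := step (-t) (by rw [abs_neg]; exact abs_of_pos htpos)
      have hA : -(ε*Ms) - L*t*m ≤ G - E := by
        have h' : t * (-(ε*Ms) - L*t*m) ≤ t * (G-E) := by
          rw [show t * (-(ε*Ms) - L*t*m) = -(ε*t*Ms) - L*t^2*m by ring]
          exact h1
        exact le_of_mul_le_mul_left h' htpos
      have hA2 : -(ε*Ms) - L*t*m ≤ E - G := by
        have h' : t * (-(ε*Ms) - L*t*m) ≤ t * (E-G) := by
          rw [show t * (-(ε*Ms) - L*t*m) = -(ε*t*Ms) - L*t^2*m by ring,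
            show t * (E - G) = (-t) * (G - E) by ring]
          exact h2
        exact le_of_mul_le_mul_left h' htpos
      have hLtm : L*t*m ≤ L*ε*m :=
        mul_le_mul_of_nonneg_right (mul_le_mul_of_nonneg_left ht3 hL0) hmpos.le
      rw [abs_le]
      constructor <;> nlinarith [hA, hA2, hLtm, hMs.le, hε]
    have hK0 : 0 ≤ Ms + L * m := by positivity
    have habs0 : |E - G| ≤ 0 := by
      apply le_of_forall_pos_le_add
      intro ε' hε'
      have hden : 0 < Ms + L * m + 1 := by linarith
      calc |E - G| ≤ (ε'/(Ms + L*m + 1)) * (Ms + L * m) := main _ (by positivity)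
        _ ≤ 0 + ε' := by
            rw [div_mul_eq_mul_div, div_le_iff₀ hden]
            nlinarith
    have : E - G = 0 := abs_nonpos_iff.1 habs0
    have hEG : E = G := by linarith
    exact hEG

/-- Every element of the Fréchet subdifferential of `q_{s,p}(u) = ∫ |u|^p` at `ubar`
equals `p·|ubar|^{p-2}·ubar` almost everywhere on `{ubar ≠ 0}`. -/
theorem fsub_qsp_formula (d : ℕ) (Ω : Set (Fin d → ℝ)) (hΩ : MeasurableSet Ω)
    (h0 : 0 < volume Ω) (hfin : volume Ω < ⊤) (s p : ℝ) (hs : 1 ≤ s)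
    (hp : p ∈ Set.Ioo (0:ℝ) 1) (r : ℝ≥0∞)
    (hr : (ENNReal.ofReal s)⁻¹ + r⁻¹ = 1)
    (ubar η : (Fin d → ℝ) → ℝ)
    (hubar : MemLp ubar (ENNReal.ofReal s) (volume.restrict Ω))
    (hη : MemLp η r (volume.restrict Ω))
    (hsub : InFSub (volume.restrict Ω) s
      (fun u => ∫ x, |u x| ^ p ∂(volume.restrict Ω)) ubar η) :
    ∀ᵐ x ∂(volume.restrict Ω), ubar x ≠ 0 → η x = p * |ubar x| ^ (p - 2) * ubar x := by
  set μ := volume.restrict Ω with hμ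
  haveI : IsFiniteMeasure μ := by
    constructor
    rw [hμ, Measure.restrict_apply_univ]
    exact hfin
  have hameas := hubar.aestronglyMeasurable
  set u : (Fin d → ℝ) → ℝ := hameas.mk ubar with hudef
  have hu : Measurable u := hameas.stronglyMeasurable_mk.measurable
  have huae : ubar =ᵐ[μ] u := hameas.ae_eq_mk
  have hus : MemLp u (ENNReal.ofReal s) μ := hubar.ae_eq huae
  have hr1 : 1 ≤ r := by
    rw [← ENNReal.inv_le_one]
    calc r⁻¹ ≤ (ENNReal.ofReal s)⁻¹ + r⁻¹ := le_add_self
      _ = 1 := hr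
  have hηi : Integrable η μ := hη.integrable hr1
  have hsub' : InFSub μ s (fun v => ∫ x, |v x| ^ p ∂μ) u η := by
    intro ε hε
    obtain ⟨δ, hδpos, hδ⟩ := hsub ε hε
    refine ⟨δ, hδpos, fun h hh h1 h2 => ?_⟩
    have key := hδ h hh h1 h2
    have e1 : (∫ x, |u x + h x| ^ p ∂μ) = ∫ x, |ubar x + h x| ^ p ∂μ :=
      integral_congr_ae (huae.symm.mono fun x hx => by simp only [hx])
    have e2 : (∫ x, |u x| ^ p ∂μ) = ∫ x, |ubar x| ^ p ∂μ :=
      integral_congr_ae (huae.symm.mono fun x hx => by simp only [hx])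
    simp only [] at key ⊢
    rw [e1, e2]
    exact key
  set g : (Fin d → ℝ) → ℝ := fun x => p * |u x|^(p-2) * u x with hgdef
  have hg_meas : Measurable g := (measurable_const.mul (hu.abs.pow measurable_const)).mul hu
  have hgbd : ∀ c : ℝ, 0 < c → IntegrableOn g {x | c < |u x|} μ := by
    intro c hc
    have hmeas : MeasurableSet {x | c < |u x|} := measurableSet_lt measurable_const hu.abs
    refine Integrable.mono' (integrable_const (p * c^(p-1))) hg_meas.aestronglyMeasurable ?_
    rw [ae_restrict_iff' hmeas]
    refine ae_of_all _ fun x hx => ?_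
    have hux : c < |u x| := hx
    have hne : |u x| ≠ 0 := (hc.trans hux).ne'
    have e : ‖g x‖ = p * (|u x|^(p-2) * |u x|) := by
      rw [Real.norm_eq_abs]
      simp only [hgdef]
      rw [abs_mul, abs_mul, abs_of_pos hp.1, abs_of_nonneg (Real.rpow_nonneg (abs_nonneg _) _)]
      exact mul_assoc _ _ _
    rw [e, ← Real.rpow_add_one hne, show p - 2 + 1 = p - 1 by ring]
    have : |u x| ^ (p-1) ≤ c ^ (p-1) :=
      Real.rpow_le_rpow_of_nonpos hc hux.le (by linarith [hp.2])
    nlinarith [hp.1]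
  have claim : ∀ n : ℕ, ∀ᵐ x ∂μ, x ∈ {x | 1/((n:ℝ)+1) < |u x|} → η x = g x := by
    intro n
    set c : ℝ := 1/((n:ℝ)+1) with hcdef
    have hc : 0 < c := by positivity
    set A := {x | c < |u x|} with hA
    have hAm : MeasurableSet A := measurableSet_lt measurable_const hu.abs
    have hgint : IntegrableOn g A μ := hgbd c hc
    have hzero : ∀ B : Set (Fin d → ℝ), MeasurableSet B → B ⊆ A →
        ∫ x in B, (η x - g x) ∂μ = 0 := by
      intro B hB hBA
      have hEq := key_integral μ s p hs hp u η hu hus hηi hsub' c hc B hB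
        (fun x hx => hBA hx)
      rw [integral_sub (hηi.integrableOn) (hgint.mono_set hBA)]
      rw [hEq]
      simp [hgdef]
    have hae : (fun x => η x - g x) =ᵐ[μ.restrict A] 0 := by
      apply Integrable.ae_eq_zero_of_forall_setIntegral_eq_zero
      · exact (hηi.integrableOn.sub hgint)
      · intro t ht _
        rw [Measure.restrict_restrict ht]
        exact hzero (t ∩ A) (ht.inter hAm) inter_subset_right
    have h2 := (ae_restrict_iff' hAm).1 hae
    filter_upwards [h2] with x hx hxA
    have h3 : η x - g x = 0 := hx hxA
    linarith [h3]
  have hall : ∀ᵐ x ∂μ, ∀ n : ℕ, x ∈ {x | 1/((n:ℝ)+1) < |u x|} → η x = g x :=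
    ae_all_iff.2 claim
  filter_upwards [hall, huae] with x hx hux hubx
  have hune : u x ≠ 0 := by rw [← hux]; exact hubx
  obtain ⟨n, hn⟩ := exists_nat_one_div_lt (abs_pos.2 hune)
  have hgx : η x = g x := hx n hn
  rw [hux]
  exact hgx
end
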